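/- arXiv:1407.3939 — 7 statements merged into one kernel-verified Lean document; each statement's English description precedes it below -/
import Mathlib

section
/- Under assumption (H3a), for every x ∈ [0,1)^d: |𝓑∞(x) − (𝓜₁ + 𝓜₂)²| ≤ 2|𝓡₃ (𝓜₁ + 𝓜₂)| + 𝓡₃². -/
open MeasureTheory ProbabilityTheory

lemma int_Ico_one {a b : ℝ} (h : a ≤ b) : ∫ _u in Set.Ico a b, (1:ℝ) = b - a := by
  simp [Real.volume_Ico, ENNReal.toReal_ofReal (sub_nonneg.2 h), h]

lemma int_Ico_pow {a b x : ℝ} (n : ℕ) (h : a ≤ b) :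
    ∫ u in Set.Ico a b, (u - x) ^ n = ((b - x) ^ (n+1) - (a - x) ^ (n+1)) / (n+1) := by
  rw [setIntegral_congr_set Ico_ae_eq_Ioc, ← intervalIntegral.integral_of_le h]
  rw [intervalIntegral.integral_comp_sub_right (fun u => u ^ n) x, integral_pow]

lemma int_Ico_abs_cube {a b x : ℝ} (h1 : a ≤ x) (h2 : x ≤ b) :
    ∫ u in Set.Ico a b, |u - x| ^ 3 = ((x - a) ^ 4 + (b - x) ^ 4) / 4 := by
  rw [setIntegral_congr_set Ico_ae_eq_Ioc, ← intervalIntegral.integral_of_le (h1.trans h2)]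
  rw [intervalIntegral.integral_comp_sub_right (fun u => |u| ^ 3) x]
  have hI : ∀ c d : ℝ, IntervalIntegrable (fun u : ℝ => |u| ^ 3) volume c d :=
    fun c d => (continuous_abs.pow 3).intervalIntegrable c d
  rw [← intervalIntegral.integral_add_adjacent_intervals (hI (a-x) 0) (hI 0 (b-x))]
  have e1 : ∫ u in (a-x)..(0:ℝ), |u| ^ 3 = (x - a) ^ 4 / 4 := by
    have : ∫ u in (a-x)..(0:ℝ), |u| ^ 3 = ∫ u in (a-x)..(0:ℝ), (-u) ^ 3 := by
      apply intervalIntegral.integral_congr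
      intro u hu
      rw [Set.uIcc_of_le (by linarith)] at hu
      have : u ≤ 0 := hu.2
      simp [abs_of_nonpos this]
    rw [this]
    have := intervalIntegral.integral_comp_neg (a := a - x) (b := 0) (fun u : ℝ => u ^ 3)
    simp only [neg_zero] at this
    rw [this, integral_pow]
    ring
  have e2 : ∫ u in (0:ℝ)..(b-x), |u| ^ 3 = (b - x) ^ 4 / 4 := by
    have : ∫ u in (0:ℝ)..(b-x), |u| ^ 3 = ∫ u in (0:ℝ)..(b-x), u ^ 3 := by
      apply intervalIntegral.integral_congr
      intro u hu
      rw [Set.uIcc_of_le (by linarith)] at hu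
      simp [abs_of_nonneg hu.1]
    rw [this, integral_pow]
    ring
  rw [e1, e2]; ring


lemma box_integral_prod {d : ℕ} (a b : Fin d → ℝ) (f : Fin d → ℝ → ℝ) :
    ∫ t in Set.univ.pi (fun i => Set.Ico (a i) (b i)), ∏ i, f i (t i)
      = ∏ i, ∫ u in Set.Ico (a i) (b i), f i u := by
  rw [← integral_indicator (MeasurableSet.univ_pi fun i => measurableSet_Ico)]
  have key : ∀ t : Fin d → ℝ,
      (Set.univ.pi fun i => Set.Ico (a i) (b i)).indicator (fun t => ∏ i, f i (t i)) t
        = ∏ i, (Set.Ico (a i) (b i)).indicator (f i) (t i) := by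
    intro t
    by_cases ht : t ∈ Set.univ.pi fun i => Set.Ico (a i) (b i)
    · rw [Set.indicator_of_mem ht]
      exact Finset.prod_congr rfl fun i _ =>
        (Set.indicator_of_mem (ht i (Set.mem_univ i)) (f i)).symm
    · rw [Set.indicator_of_notMem ht]
      obtain ⟨i, hi⟩ := not_forall.mp fun hc => ht fun i _ => hc i
      exact (Finset.prod_eq_zero (Finset.mem_univ i)
        (Set.indicator_of_notMem hi (f i))).symm
  simp_rw [key]
  rw [MeasureTheory.integral_fintype_prod_volume_eq_prod
    (f := fun i => (Set.Ico (a i) (b i)).indicator (f i))]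
  exact Finset.prod_congr rfl fun i _ =>
    integral_indicator measurableSet_Ico

lemma box_int_single {d : ℕ} (a b : Fin d → ℝ) (hab : ∀ i, a i ≤ b i)
    (i : Fin d) (g : ℝ → ℝ) :
    ∫ t in Set.univ.pi (fun i => Set.Ico (a i) (b i)), g (t i)
      = (∫ u in Set.Ico (a i) (b i), g u) * ∏ j ∈ Finset.univ.erase i, (b j - a j) := by
  have h1 : ∫ t in Set.univ.pi (fun i => Set.Ico (a i) (b i)), g (t i)
      = ∫ t in Set.univ.pi (fun i => Set.Ico (a i) (b i)),
          ∏ j, (fun (u : ℝ) => if j = i then g u else 1) (t j) := by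
    refine setIntegral_congr_fun (MeasurableSet.univ_pi fun i => measurableSet_Ico)
      (fun t _ => ?_)
    rw [Finset.prod_ite_eq' Finset.univ i (fun j => g (t j))]
    simp
  rw [h1, box_integral_prod a b (fun j u => if j = i then g u else 1)]
  rw [← Finset.mul_prod_erase Finset.univ _ (Finset.mem_univ i)]
  simp only [if_pos rfl]
  congr 1
  refine Finset.prod_congr rfl fun j hj => ?_
  simp only [if_neg (Finset.ne_of_mem_erase hj)]
  exact int_Ico_one (hab j)

lemma box_int_pair {d : ℕ} (a b : Fin d → ℝ) (hab : ∀ i, a i ≤ b i)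
    {i k : Fin d} (hik : i ≠ k) (g1 g2 : ℝ → ℝ) :
    ∫ t in Set.univ.pi (fun i => Set.Ico (a i) (b i)), g1 (t i) * g2 (t k)
      = (∫ u in Set.Ico (a i) (b i), g1 u) * (∫ u in Set.Ico (a k) (b k), g2 u)
        * ∏ j ∈ (Finset.univ.erase i).erase k, (b j - a j) := by
  have h1 : ∫ t in Set.univ.pi (fun i => Set.Ico (a i) (b i)), g1 (t i) * g2 (t k)
      = ∫ t in Set.univ.pi (fun i => Set.Ico (a i) (b i)),
          ∏ j, (fun (u : ℝ) => (if j = i then g1 u else 1) * (if j = k then g2 u else 1)) (t j) := by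
    refine setIntegral_congr_fun (MeasurableSet.univ_pi fun i => measurableSet_Ico)
      (fun t _ => ?_)
    rw [Finset.prod_mul_distrib, Finset.prod_ite_eq' Finset.univ i (fun j => g1 (t j)),
      Finset.prod_ite_eq' Finset.univ k (fun j => g2 (t j))]
    simp
  rw [h1, box_integral_prod a b
    (fun j u => (if j = i then g1 u else 1) * (if j = k then g2 u else 1))]
  rw [← Finset.mul_prod_erase Finset.univ _ (Finset.mem_univ i),
    ← Finset.mul_prod_erase (Finset.univ.erase i) _
      (Finset.mem_erase.2 ⟨(Ne.symm hik), Finset.mem_univ k⟩), ← mul_assoc]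
  simp only [if_pos rfl, if_neg hik, if_neg (Ne.symm hik), mul_one, one_mul]
  congr 1
  refine Finset.prod_congr rfl fun j hj => ?_
  have hj1 := Finset.ne_of_mem_erase hj
  have hj2 := Finset.ne_of_mem_erase (Finset.mem_of_mem_erase hj)
  simp only [if_neg hj2, if_neg hj1, one_mul]
  exact int_Ico_one (hab j)

lemma int_Ico_sub {a b x : ℝ} (h : a ≤ b) :
    ∫ u in Set.Ico a b, (u - x) = ((b - x) ^ 2 - (a - x) ^ 2) / 2 := by
  have := int_Ico_pow (a := a) (b := b) (x := x) 1 h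
  norm_num at this
  simpa using this

lemma vol_box {d : ℕ} (a b : Fin d → ℝ) (hab : ∀ i, a i ≤ b i) :
    (volume (Set.univ.pi fun i => Set.Ico (a i) (b i))).toReal = ∏ i, (b i - a i) := by
  rw [volume_pi_pi]
  rw [ENNReal.toReal_prod]
  exact Finset.prod_congr rfl fun i _ => by
    rw [Real.volume_Ico, ENNReal.toReal_ofReal (sub_nonneg.2 (hab i))]

lemma box_avg_bound {d : ℕ} (a b x : Fin d → ℝ) (hab : ∀ i, a i ≤ x i ∧ x i < b i)
    (c C : ℝ) (hC : 0 ≤ C) (g : Fin d → ℝ) (h : Fin d → Fin d → ℝ)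
    (u : (Fin d → ℝ) → ℝ)
    (hu : IntegrableOn u (Set.univ.pi fun i => Set.Ico (a i) (b i)) volume)
    (hbd : ∀ᵐ t ∂(volume.restrict (Set.univ.pi fun i => Set.Ico (a i) (b i))),
      |u t - c - (∑ i, g i * (t i - x i))
        - (1/2) * ∑ i, ∑ j, h i j * (t i - x i) * (t j - x j)| ≤ C * ∑ i, |t i - x i| ^ 3) :
    |(∫ t in Set.univ.pi fun i => Set.Ico (a i) (b i), u t) / (∏ i, (b i - a i)) - c
      - (1/2) * ∑ i, g i * ((b i - x i) - (x i - a i))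
      - (1/6) * ∑ i, h i i * ((x i - a i)^2 + (b i - x i)^2 - (x i - a i) * (b i - x i))
      - (1/8) * ∑ i, ∑ j ∈ Finset.univ \ {i},
          h i j * ((b i - x i) - (x i - a i)) * ((b j - x j) - (x j - a j))|
      ≤ (C/4) * ∑ i, ((x i - a i)^3 + (b i - x i)^3) := by
  set box := Set.univ.pi fun i => Set.Ico (a i) (b i) with hbox
  have hab' : ∀ i, a i ≤ b i := fun i => (hab i).1.trans (hab i).2.le
  have hvolpos : 0 < ∏ i, (b i - a i) :=
    Finset.prod_pos fun i _ => sub_pos.2 ((hab i).1.trans_lt (hab i).2)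
  set vol := ∏ i, (b i - a i) with hvol
  -- integrability of continuous functions on box
  have intOn : ∀ f : (Fin d → ℝ) → ℝ, Continuous f → IntegrableOn f box volume := by
    intro f hf
    have hcomp : IsCompact (Set.univ.pi fun i => Set.Icc (a i) (b i)) :=
      isCompact_univ_pi fun i => isCompact_Icc
    exact (hf.continuousOn.integrableOn_compact hcomp).mono_set
      (Set.pi_mono fun i _ => Set.Ico_subset_Icc_self)
  -- single-coordinate moments
  have prodsplit : ∀ i : Fin d, vol = (b i - a i) * ∏ j ∈ Finset.univ.erase i, (b j - a j) :=
    fun i => (Finset.mul_prod_erase Finset.univ _ (Finset.mem_univ i)).symm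
  have hint1 : ∀ i, ∫ t in box, (t i - x i) = vol * (((b i - x i) - (x i - a i))/2) := by
    intro i
    have := box_int_single a b hab' i (fun u => u - x i)
    rw [this, int_Ico_sub (hab' i), prodsplit i]
    ring
  have hint2 : ∀ i, ∫ t in box, (t i - x i)^2
      = vol * (((x i - a i)^2 + (b i - x i)^2 - (x i - a i) * (b i - x i))/3) := by
    intro i
    have := box_int_single a b hab' i (fun u => (u - x i)^2)
    rw [this, int_Ico_pow 2 (hab' i), prodsplit i]
    ring
  have hintij : ∀ i j, i ≠ j → ∫ t in box, (t i - x i) * (t j - x j)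
      = vol * (((b i - x i) - (x i - a i))/2) * (((b j - x j) - (x j - a j))/2) := by
    intro i j hij
    have := box_int_pair a b hab' hij (fun u => u - x i) (fun u => u - x j)
    rw [this, int_Ico_sub (hab' i), int_Ico_sub (hab' j)]
    have e1 : vol = (b i - a i) * ((b j - a j) * ∏ l ∈ (Finset.univ.erase i).erase j, (b l - a l)) := by
      rw [prodsplit i]
      congr 1
      exact (Finset.mul_prod_erase (Finset.univ.erase i) _
        (Finset.mem_erase.2 ⟨Ne.symm hij, Finset.mem_univ j⟩)).symm
    rw [e1]
    ring
  have hint3 : ∀ i, ∫ t in box, |t i - x i|^3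
      ≤ vol * (((x i - a i)^3 + (b i - x i)^3)/4) := by
    intro i
    have := box_int_single a b hab' i (fun u => |u - x i|^3)
    rw [this, int_Ico_abs_cube (hab i).1 (hab i).2.le]
    have hprodnn : (0:ℝ) ≤ ∏ j ∈ Finset.univ.erase i, (b j - a j) :=
      Finset.prod_nonneg fun j _ => sub_nonneg.2 (hab' j)
    have key : ((x i - a i)^4 + (b i - x i)^4)/4
        ≤ (b i - a i) * (((x i - a i)^3 + (b i - x i)^3)/4) := by
      have h1 : 0 ≤ x i - a i := sub_nonneg.2 (hab i).1
      have h2 : 0 ≤ b i - x i := sub_nonneg.2 (hab i).2.le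
      nlinarith [mul_nonneg (mul_nonneg h1 h1) (mul_nonneg h1 h2),
        mul_nonneg (mul_nonneg h2 h2) (mul_nonneg h1 h2)]
    calc ((x i - a i)^4 + (b i - x i)^4)/4 * ∏ j ∈ Finset.univ.erase i, (b j - a j)
        ≤ ((b i - a i) * (((x i - a i)^3 + (b i - x i)^3)/4)) * ∏ j ∈ Finset.univ.erase i, (b j - a j) :=
          mul_le_mul_of_nonneg_right key hprodnn
      _ = ((b i - a i) * ∏ j ∈ Finset.univ.erase i, (b j - a j)) * (((x i - a i)^3 + (b i - x i)^3)/4) := by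
          ring
      _ = vol * (((x i - a i)^3 + (b i - x i)^3)/4) := by rw [← prodsplit i]
  -- the quadratic Taylor polynomial
  set P : (Fin d → ℝ) → ℝ := fun t => c + (∑ i, g i * (t i - x i))
      + (1/2) * ∑ i, ∑ j, h i j * (t i - x i) * (t j - x j) with hPdef
  have hPcont : Continuous P := by
    apply Continuous.add
    apply Continuous.add continuous_const
    · exact continuous_finset_sum _ fun i _ =>
        continuous_const.mul ((continuous_apply i).sub continuous_const)
    · exact continuous_const.mul (continuous_finset_sum _ fun i _ =>
        continuous_finset_sum _ fun j _ =>
          (continuous_const.mul ((continuous_apply i).sub continuous_const)).mul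
            ((continuous_apply j).sub continuous_const))
  have hPint : IntegrableOn P box volume := intOn P hPcont
  have hrint : IntegrableOn (fun t => u t - P t) box volume := hu.sub hPint
  have hconst : ∫ _t in box, (c:ℝ) = vol * c := by
    rw [setIntegral_const, measureReal_def, vol_box a b hab', smul_eq_mul]
  have hintsum1 : ∫ t in box, (∑ i, g i * (t i - x i))
      = vol * ((1/2) * ∑ i, g i * ((b i - x i) - (x i - a i))) := by
    rw [integral_finset_sum _ (f := fun i (t : Fin d → ℝ) => g i * (t i - x i)) (fun i _ => (intOn _
      (continuous_const.mul ((continuous_apply i).sub continuous_const))).mono_set le_rfl)]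
    calc ∑ i, ∫ t in box, g i * (t i - x i)
        = ∑ i, g i * ∫ t in box, (t i - x i) :=
          Finset.sum_congr rfl fun i _ => integral_const_mul _ _
      _ = vol * ((1/2) * ∑ i, g i * ((b i - x i) - (x i - a i))) := by
          simp only [Finset.mul_sum]
          exact Finset.sum_congr rfl fun i _ => by rw [hint1 i]; ring
  have hintsum2 : ∫ t in box, (∑ i, ∑ j, h i j * (t i - x i) * (t j - x j))
      = vol * ((1/3) * ∑ i, h i i * ((x i - a i)^2 + (b i - x i)^2 - (x i - a i) * (b i - x i))
          + (1/4) * ∑ i, ∑ j ∈ Finset.univ \ {i},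
              h i j * ((b i - x i) - (x i - a i)) * ((b j - x j) - (x j - a j))) := by
    have hci : ∀ i j : Fin d, Continuous fun t : Fin d → ℝ => h i j * (t i - x i) * (t j - x j) :=
      fun i j => (continuous_const.mul ((continuous_apply i).sub continuous_const)).mul
        ((continuous_apply j).sub continuous_const)
    rw [integral_finset_sum _ (fun i _ => (intOn _
      (continuous_finset_sum _ fun j _ => hci i j)).mono_set le_rfl)]
    have step : ∀ i : Fin d, ∫ t in box, (∑ j, h i j * (t i - x i) * (t j - x j))
        = vol * ((1/3) * (h i i * ((x i - a i)^2 + (b i - x i)^2 - (x i - a i) * (b i - x i)))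
            + (1/4) * ∑ j ∈ Finset.univ \ {i},
                h i j * ((b i - x i) - (x i - a i)) * ((b j - x j) - (x j - a j))) := by
      intro i
      rw [integral_finset_sum _ (fun j _ => (intOn _ (hci i j)).mono_set le_rfl)]
      rw [Finset.sum_eq_sum_sdiff_singleton_add (Finset.mem_univ i)]
      have hdiag : ∫ t in box, h i i * (t i - x i) * (t i - x i)
          = vol * ((1/3) * (h i i * ((x i - a i)^2 + (b i - x i)^2 - (x i - a i) * (b i - x i)))) := by
        have : ∀ t : Fin d → ℝ, h i i * (t i - x i) * (t i - x i) = h i i * (t i - x i)^2 :=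
          fun t => by ring
        simp_rw [this]
        rw [integral_const_mul, hint2 i]
        ring
      have hoff : ∑ j ∈ Finset.univ \ {i}, ∫ t in box, h i j * (t i - x i) * (t j - x j)
          = vol * ((1/4) * ∑ j ∈ Finset.univ \ {i},
              h i j * ((b i - x i) - (x i - a i)) * ((b j - x j) - (x j - a j))) := by
        simp only [Finset.mul_sum]
        refine Finset.sum_congr rfl fun j hj => ?_
        have hij : i ≠ j := fun e => by
          simp [← e] at hj
        have : ∀ t : Fin d → ℝ, h i j * (t i - x i) * (t j - x j)
            = h i j * ((t i - x i) * (t j - x j)) := fun t => by ring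
        simp_rw [this]
        rw [integral_const_mul, hintij i j hij]
        ring
      rw [hdiag, hoff]
      ring
    calc ∑ i, ∫ t in box, (∑ j, h i j * (t i - x i) * (t j - x j))
        = ∑ i, vol * ((1/3) * (h i i * ((x i - a i)^2 + (b i - x i)^2 - (x i - a i) * (b i - x i)))
            + (1/4) * ∑ j ∈ Finset.univ \ {i},
                h i j * ((b i - x i) - (x i - a i)) * ((b j - x j) - (x j - a j))) :=
          Finset.sum_congr rfl fun i _ => step i
      _ = vol * ((1/3) * ∑ i, h i i * ((x i - a i)^2 + (b i - x i)^2 - (x i - a i) * (b i - x i))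
          + (1/4) * ∑ i, ∑ j ∈ Finset.univ \ {i},
              h i j * ((b i - x i) - (x i - a i)) * ((b j - x j) - (x j - a j))) := by
          simp only [Finset.mul_sum, mul_add, Finset.sum_add_distrib]
  have hJ : ∫ t in box, P t = vol * (c
      + (1/2) * ∑ i, g i * ((b i - x i) - (x i - a i))
      + (1/6) * ∑ i, h i i * ((x i - a i)^2 + (b i - x i)^2 - (x i - a i) * (b i - x i))
      + (1/8) * ∑ i, ∑ j ∈ Finset.univ \ {i},
          h i j * ((b i - x i) - (x i - a i)) * ((b j - x j) - (x j - a j))) := by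
    have i1 : IntegrableOn (fun t : Fin d → ℝ => c + ∑ i, g i * (t i - x i)) box volume :=
      (intOn _ (continuous_const.add (continuous_finset_sum _ fun i _ =>
        continuous_const.mul ((continuous_apply i).sub continuous_const))))
    have i2 : IntegrableOn (fun t : Fin d → ℝ =>
        (1/2 : ℝ) * ∑ i, ∑ j, h i j * (t i - x i) * (t j - x j)) box volume :=
      intOn _ (continuous_const.mul (continuous_finset_sum _ fun i _ =>
        continuous_finset_sum _ fun j _ =>
          (continuous_const.mul ((continuous_apply i).sub continuous_const)).mul
            ((continuous_apply j).sub continuous_const)))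
    have i3 : IntegrableOn (fun t : Fin d → ℝ => (c:ℝ)) box volume := intOn _ continuous_const
    have i4 : IntegrableOn (fun t : Fin d → ℝ => ∑ i, g i * (t i - x i)) box volume :=
      intOn _ (continuous_finset_sum _ fun i _ =>
        continuous_const.mul ((continuous_apply i).sub continuous_const))
    rw [hPdef]
    rw [integral_add i1 i2, integral_add i3 i4, integral_const_mul]
    rw [hconst, hintsum1, hintsum2]
    ring
  have hsplit : ∫ t in box, u t = (∫ t in box, P t) + ∫ t in box, (u t - P t) := by
    rw [← integral_add hPint hrint]
    simp
  have habs_int : IntegrableOn (fun t : Fin d → ℝ => C * ∑ i, |t i - x i| ^ 3) box volume :=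
    intOn _ (continuous_const.mul (continuous_finset_sum _ fun i _ =>
      (((continuous_apply i).sub continuous_const).abs.pow 3)))
  have hrbound : |∫ t in box, (u t - P t)|
      ≤ vol * ((C/4) * ∑ i, ((x i - a i)^3 + (b i - x i)^3)) := by
    have h1 : |∫ t in box, (u t - P t)| ≤ ∫ t in box, C * ∑ i, |t i - x i| ^ 3 := by
      rw [← Real.norm_eq_abs]
      refine norm_integral_le_of_norm_le habs_int ?_
      filter_upwards [hbd] with t ht
      rw [Real.norm_eq_abs]
      have : u t - P t = u t - c - (∑ i, g i * (t i - x i))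
          - (1/2) * ∑ i, ∑ j, h i j * (t i - x i) * (t j - x j) := by
        rw [hPdef]; ring
      rw [this]
      exact ht
    have h2 : ∫ t in box, C * ∑ i, |t i - x i| ^ 3
        ≤ vol * ((C/4) * ∑ i, ((x i - a i)^3 + (b i - x i)^3)) := by
      rw [integral_const_mul]
      rw [integral_finset_sum _ (f := fun i (t : Fin d → ℝ) => |t i - x i| ^ 3) (fun i _ => (intOn (fun t => |t i - x i| ^ 3)
        (((continuous_apply i).sub continuous_const).abs.pow 3)).mono_set le_rfl)]
      have h3 : ∑ i, ∫ t in box, |t i - x i| ^ 3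
          ≤ ∑ i, vol * (((x i - a i)^3 + (b i - x i)^3)/4) :=
        Finset.sum_le_sum fun i _ => hint3 i
      calc C * ∑ i, ∫ t in box, |t i - x i| ^ 3
          ≤ C * ∑ i, vol * (((x i - a i)^3 + (b i - x i)^3)/4) :=
            mul_le_mul_of_nonneg_left h3 hC
        _ = vol * ((C/4) * ∑ i, ((x i - a i)^3 + (b i - x i)^3)) := by
            simp only [Finset.mul_sum]
            exact Finset.sum_congr rfl fun i _ => by ring
    exact h1.trans h2
  have hfin : (∫ t in box, u t) / vol - c
      - (1/2) * ∑ i, g i * ((b i - x i) - (x i - a i))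
      - (1/6) * ∑ i, h i i * ((x i - a i)^2 + (b i - x i)^2 - (x i - a i) * (b i - x i))
      - (1/8) * ∑ i, ∑ j ∈ Finset.univ \ {i},
          h i j * ((b i - x i) - (x i - a i)) * ((b j - x j) - (x j - a j))
      = (∫ t in box, (u t - P t)) / vol := by
    rw [hsplit, hJ]
    field_simp
    ring
  rw [hfin, abs_div, abs_of_pos hvolpos, div_le_iff₀ hvolpos]
  calc |∫ t in box, (u t - P t)|
      ≤ vol * ((C/4) * ∑ i, ((x i - a i)^3 + (b i - x i)^3)) := hrbound
    _ = (C/4) * (∑ i, ((x i - a i)^3 + (b i - x i)^3)) * vol := by ring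

set_option maxHeartbeats 1000000 in
/-- **Tight approximation of the infinite-forest bias under (H3a) (Proposition 4, third part).**
Random rectangle setup: `A i, B i` are random variables with `0 ≤ A i ≤ x i < B i ≤ 1` a.s.;
`s̃(x)` is the average of `s` over the random rectangle `∏ i [A i, B i)`;
`𝓑∞(x) = (s x − E[s̃(x)])²`.  Under (H3a) (with gradient `grad`, Hessian `hess`, constant
`C₃`), with `𝓜₁`, `𝓜₂`, `𝓡₃` as in the paper:
`|𝓑∞(x) − (𝓜₁ + 𝓜₂)²| ≤ 2|𝓡₃(𝓜₁ + 𝓜₂)| + 𝓡₃²`. -/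
theorem rectangle_bias_bounds_H3a
    {Ω : Type*} [MeasureSpace Ω] [IsProbabilityMeasure (ℙ : Measure Ω)]
    (d : ℕ) (hd : 1 ≤ d)
    (x : Fin d → ℝ) (hx : ∀ i, x i ∈ Set.Ico (0 : ℝ) 1)
    (A B : Fin d → Ω → ℝ)
    (hmeasA : ∀ i, Measurable (A i)) (hmeasB : ∀ i, Measurable (B i))
    (hAB : ∀ᵐ ω : Ω, ∀ i, 0 ≤ A i ω ∧ A i ω ≤ x i ∧ x i < B i ω ∧ B i ω ≤ 1)
    (s : (Fin d → ℝ) → ℝ) (grad : (Fin d → ℝ) → Fin d → ℝ)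
    (hess : (Fin d → ℝ) → Fin d → Fin d → ℝ) (C₃ : ℝ) (hC₃ : 0 < C₃)
    (hdiff : ∀ y ∈ Set.univ.pi fun _ : Fin d => Set.Ico (0 : ℝ) 1,
        HasFDerivWithinAt s
          (∑ i : Fin d, grad y i • (ContinuousLinearMap.proj i : (Fin d → ℝ) →L[ℝ] ℝ))
          (Set.univ.pi fun _ : Fin d => Set.Ico (0 : ℝ) 1) y)
    (hdiff2 : ∀ j : Fin d, ∀ y ∈ Set.univ.pi fun _ : Fin d => Set.Ico (0 : ℝ) 1,
        HasFDerivWithinAt (fun z => grad z j)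
          (∑ i : Fin d, hess y j i • (ContinuousLinearMap.proj i : (Fin d → ℝ) →L[ℝ] ℝ))
          (Set.univ.pi fun _ : Fin d => Set.Ico (0 : ℝ) 1) y)
    (hH3a : ∀ t ∈ Set.univ.pi fun _ : Fin d => Set.Ico (0 : ℝ) 1,
        ∀ y ∈ Set.univ.pi fun _ : Fin d => Set.Ico (0 : ℝ) 1,
        |s t - s y - (∑ i : Fin d, grad y i * (t i - y i))
            - (1 / 2) * ∑ i : Fin d, ∑ j : Fin d, hess y i j * (t i - y i) * (t j - y j)|
          ≤ C₃ * ∑ i : Fin d, |t i - y i| ^ 3)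
    (stilde : Ω → ℝ)
    (hstilde : ∀ ω : Ω, stilde ω =
        (∫ t in Set.univ.pi fun i => Set.Ico (A i ω) (B i ω), s t)
          / ∏ i : Fin d, (B i ω - A i ω))
    (M₁ M₂ R₃ Binf : ℝ)
    (hM₁ : M₁ = (1 / 2) * ∑ i : Fin d,
        grad x i * ((∫ ω : Ω, (B i ω - x i)) - ∫ ω : Ω, (x i - A i ω)))
    (hM₂ : M₂ = (1 / 6) * (∑ i : Fin d, hess x i i *
            ((∫ ω : Ω, (x i - A i ω) ^ 2) + (∫ ω : Ω, (B i ω - x i) ^ 2)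
              - ∫ ω : Ω, (x i - A i ω) * (B i ω - x i)))
        + (1 / 8) * ∑ i : Fin d, ∑ j ∈ Finset.univ \ {i},
            hess x i j *
              ∫ ω : Ω, ((B i ω - x i) - (x i - A i ω)) * ((B j ω - x j) - (x j - A j ω)))
    (hR₃ : R₃ = (C₃ / 4) * ∑ i : Fin d,
        ((∫ ω : Ω, (x i - A i ω) ^ 3) + ∫ ω : Ω, (B i ω - x i) ^ 3))
    (hBinf : Binf = (s x - ∫ ω : Ω, stilde ω) ^ 2) :
    |Binf - (M₁ + M₂) ^ 2| ≤ 2 * |R₃ * (M₁ + M₂)| + R₃ ^ 2 := by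
  classical
  set Q : Set (Fin d → ℝ) := Set.univ.pi fun _ : Fin d => Set.Ico (0 : ℝ) 1 with hQdef
  have hQmeas : MeasurableSet Q := MeasurableSet.univ_pi fun _ => measurableSet_Ico
  have hxQ : x ∈ Q := fun i _ => hx i
  -- a measurable modification of s on Q
  have hscont : ContinuousOn s Q := fun y hy => (hdiff y hy).continuousWithinAt
  have hsaem : AEMeasurable s (volume.restrict Q) := hscont.aemeasurable hQmeas
  set s' : (Fin d → ℝ) → ℝ := hsaem.mk s with hs'def
  have hs'meas : Measurable s' := hsaem.measurable_mk
  have hss' : s =ᵐ[volume.restrict Q] s' := hsaem.ae_eq_mk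
  -- uniform bound for s on Q
  set K : ℝ := |s x| + (∑ i, |grad x i|) + (1/2) * (∑ i, ∑ j, |hess x i j|) + C₃ * d with hKdef
  have hd1 : ∀ t ∈ Q, ∀ i, |t i - x i| ≤ 1 := by
    intro t ht i
    have h1 := ht i (Set.mem_univ i)
    have h2 := hx i
    simp only [Set.mem_Ico] at h1 h2
    rw [abs_le]
    constructor <;> linarith [h1.1, h1.2, h2.1, h2.2]
  have hsK : ∀ t ∈ Q, |s t| ≤ K := by
    intro t ht
    have h3 := hH3a t ht x hxQ
    have hL : |∑ i, grad x i * (t i - x i)| ≤ ∑ i, |grad x i| := by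
      refine (Finset.abs_sum_le_sum_abs _ _).trans (Finset.sum_le_sum fun i _ => ?_)
      rw [abs_mul]
      calc |grad x i| * |t i - x i| ≤ |grad x i| * 1 :=
            mul_le_mul_of_nonneg_left (hd1 t ht i) (abs_nonneg _)
        _ = |grad x i| := mul_one _
    have hH : |(1/2 : ℝ) * ∑ i, ∑ j, hess x i j * (t i - x i) * (t j - x j)|
        ≤ (1/2) * ∑ i, ∑ j, |hess x i j| := by
      rw [abs_mul, abs_of_pos (by norm_num : (0:ℝ) < 1/2)]
      refine mul_le_mul_of_nonneg_left ?_ (by norm_num)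
      refine (Finset.abs_sum_le_sum_abs _ _).trans (Finset.sum_le_sum fun i _ => ?_)
      refine (Finset.abs_sum_le_sum_abs _ _).trans (Finset.sum_le_sum fun j _ => ?_)
      rw [abs_mul, abs_mul]
      calc |hess x i j| * |t i - x i| * |t j - x j| ≤ |hess x i j| * 1 * 1 := by
            have := hd1 t ht i
            have := hd1 t ht j
            gcongr <;> positivity
        _ = |hess x i j| := by ring
    have hcube : ∑ i, |t i - x i| ^ 3 ≤ (d : ℝ) := by
      calc ∑ i, |t i - x i| ^ 3 ≤ ∑ _i : Fin d, (1:ℝ) :=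
            Finset.sum_le_sum fun i _ =>
              pow_le_one₀ (abs_nonneg _) (hd1 t ht i)
        _ = d := by simp
    have hre : s t = (s t - s x - (∑ i, grad x i * (t i - x i))
        - (1/2) * ∑ i, ∑ j, hess x i j * (t i - x i) * (t j - x j)) + s x
        + (∑ i, grad x i * (t i - x i))
        + ((1/2) * ∑ i, ∑ j, hess x i j * (t i - x i) * (t j - x j)) := by ring
    rw [hre]
    have tri : ∀ a b c e : ℝ, |a + b + c + e| ≤ |a| + |b| + |c| + |e| := by
      intro a b c e
      calc |a + b + c + e| ≤ |a + b + c| + |e| := abs_add_le _ _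
        _ ≤ |a + b| + |c| + |e| := by linarith [abs_add_le (a+b) c]
        _ ≤ |a| + |b| + |c| + |e| := by linarith [abs_add_le a b]
    refine (tri _ _ _ _).trans ?_
    have hrem : |s t - s x - (∑ i, grad x i * (t i - x i))
        - (1/2) * ∑ i, ∑ j, hess x i j * (t i - x i) * (t j - x j)| ≤ C₃ * d :=
      h3.trans (mul_le_mul_of_nonneg_left hcube hC₃.le)
    rw [hKdef]
    linarith
  have hs'K : ∀ᵐ t ∂(volume.restrict Q), |s' t| ≤ K := by
    filter_upwards [hss', ae_restrict_mem hQmeas] with t h1 h2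
    rw [← h1]; exact hsK t h2
  have hH3a' : ∀ᵐ t ∂(volume.restrict Q),
      |s' t - s x - (∑ i : Fin d, grad x i * (t i - x i))
        - (1 / 2) * ∑ i : Fin d, ∑ j : Fin d, hess x i j * (t i - x i) * (t j - x j)|
      ≤ C₃ * ∑ i : Fin d, |t i - x i| ^ 3 := by
    filter_upwards [hss', ae_restrict_mem hQmeas] with t h1 h2
    rw [← h1]; exact hH3a t h2 x hxQ
  -- measurable version of the rectangle average
  have hsetmeas : MeasurableSet {p : Ω × (Fin d → ℝ) | ∀ i, A i p.1 ≤ p.2 i ∧ p.2 i < B i p.1} := by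
    have hrw : {p : Ω × (Fin d → ℝ) | ∀ i, A i p.1 ≤ p.2 i ∧ p.2 i < B i p.1}
        = ⋂ i, ({p : Ω × (Fin d → ℝ) | A i p.1 ≤ p.2 i} ∩ {p | p.2 i < B i p.1}) := by
      ext p
      simp only [Set.mem_setOf_eq, Set.mem_iInter, Set.mem_inter_iff]
    rw [hrw]
    refine MeasurableSet.iInter fun i => ?_
    have m1 : Measurable fun p : Ω × (Fin d → ℝ) => A i p.1 := (hmeasA i).comp measurable_fst
    have m2 : Measurable fun p : Ω × (Fin d → ℝ) => p.2 i := by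
      exact (measurable_pi_apply i).comp measurable_snd
    have m3 : Measurable fun p : Ω × (Fin d → ℝ) => B i p.1 := (hmeasB i).comp measurable_fst
    exact (measurableSet_le m1 m2).inter (measurableSet_lt m2 m3)
  set G : Ω × (Fin d → ℝ) → ℝ := fun p =>
    Set.indicator {p : Ω × (Fin d → ℝ) | ∀ i, A i p.1 ≤ p.2 i ∧ p.2 i < B i p.1}
      (fun p => s' p.2) p with hGdef
  have hGmeas : Measurable G := (hs'meas.comp measurable_snd).indicator hsetmeas
  set Fn : Ω → ℝ := fun ω => ∫ t, G (ω, t) with hFndef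
  have hFnmeas : Measurable Fn :=
    (hGmeas.stronglyMeasurable.integral_prod_right' (ν := volume)).measurable
  have hFn_eq : ∀ ω, Fn ω = ∫ t in Set.univ.pi fun i => Set.Ico (A i ω) (B i ω), s' t := by
    intro ω
    rw [hFndef, ← integral_indicator (MeasurableSet.univ_pi fun i => measurableSet_Ico)]
    refine integral_congr_ae (Filter.Eventually.of_forall fun t => ?_)
    by_cases ht : ∀ i, A i ω ≤ t i ∧ t i < B i ω
    · rw [hGdef]
      simp only
      rw [Set.indicator_of_mem
          (show (ω, t) ∈ {p : Ω × (Fin d → ℝ) | ∀ i, A i p.1 ≤ p.2 i ∧ p.2 i < B i p.1} from ht),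
        Set.indicator_of_mem
          (show t ∈ Set.univ.pi fun i => Set.Ico (A i ω) (B i ω) from fun i _ => ht i)]
    · rw [hGdef]
      simp only
      rw [Set.indicator_of_notMem
          (show (ω, t) ∉ {p : Ω × (Fin d → ℝ) | ∀ i, A i p.1 ≤ p.2 i ∧ p.2 i < B i p.1} from ht),
        Set.indicator_of_notMem]
      intro hmem
      exact ht fun i => hmem i (Set.mem_univ i)
  set F : Ω → ℝ := fun ω => Fn ω / ∏ i, (B i ω - A i ω) with hFdef
  have hFmeas : Measurable F :=
    hFnmeas.div (Finset.measurable_prod _ fun i _ => (hmeasB i).sub (hmeasA i))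
  -- stilde agrees a.e. with F
  have hstF : stilde =ᵐ[(ℙ : Measure Ω)] F := by
    filter_upwards [hAB] with ω hω
    have hsub : (Set.univ.pi fun i => Set.Ico (A i ω) (B i ω)) ⊆ Q :=
      Set.pi_mono fun i _ => Set.Ico_subset_Ico (hω i).1 (hω i).2.2.2
    have hac : volume.restrict (Set.univ.pi fun i => Set.Ico (A i ω) (B i ω))
        ≪ volume.restrict Q :=
      Measure.absolutelyContinuous_of_le (Measure.restrict_mono hsub le_rfl)
    have heqint : ∫ t in Set.univ.pi fun i => Set.Ico (A i ω) (B i ω), s t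
        = ∫ t in Set.univ.pi fun i => Set.Ico (A i ω) (B i ω), s' t :=
      integral_congr_ae (hss'.filter_mono hac.ae_le)
    rw [hstilde ω, hFdef]
    simp only
    rw [hFn_eq ω, heqint]
  -- the polynomial parts
  set P1 : Ω → ℝ := fun ω => ∑ i, grad x i * ((B i ω - x i) - (x i - A i ω)) with hP1def
  set P2 : Ω → ℝ := fun ω => ∑ i, hess x i i *
      ((x i - A i ω)^2 + (B i ω - x i)^2 - (x i - A i ω) * (B i ω - x i)) with hP2def
  set P3 : Ω → ℝ := fun ω => ∑ i, ∑ j ∈ Finset.univ \ {i}, hess x i j *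
      ((B i ω - x i) - (x i - A i ω)) * ((B j ω - x j) - (x j - A j ω)) with hP3def
  set Rb : Ω → ℝ := fun ω => ∑ i, ((x i - A i ω)^3 + (B i ω - x i)^3) with hRbdef
  -- key pointwise bound
  have hkey : ∀ᵐ ω ∂(ℙ : Measure Ω),
      |F ω - s x - ((1/2) * P1 ω + (1/6) * P2 ω + (1/8) * P3 ω)| ≤ (C₃/4) * Rb ω := by
    filter_upwards [hAB] with ω hω
    have hsub : (Set.univ.pi fun i => Set.Ico (A i ω) (B i ω)) ⊆ Q :=
      Set.pi_mono fun i _ => Set.Ico_subset_Ico (hω i).1 (hω i).2.2.2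
    have hac : volume.restrict (Set.univ.pi fun i => Set.Ico (A i ω) (B i ω))
        ≪ volume.restrict Q :=
      Measure.absolutelyContinuous_of_le (Measure.restrict_mono hsub le_rfl)
    have hu : IntegrableOn s' (Set.univ.pi fun i => Set.Ico (A i ω) (B i ω)) volume := by
      have hlt : volume (Set.univ.pi fun i => Set.Ico (A i ω) (B i ω)) < ⊤ := by
        rw [volume_pi_pi]
        exact ENNReal.prod_lt_top fun i _ => by
          rw [Real.volume_Ico]; exact ENNReal.ofReal_lt_top
      refine Integrable.mono' (g := fun _ => K) ((integrableOn_const_iff (C := K)).2 (Or.inr hlt))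
        hs'meas.aestronglyMeasurable ?_
      filter_upwards [hs'K.filter_mono hac.ae_le] with t ht
      simpa [Real.norm_eq_abs] using ht
    have hbd := hH3a'.filter_mono hac.ae_le
    have hmain := box_avg_bound (fun i => A i ω) (fun i => B i ω) x
      (fun i => ⟨(hω i).2.1, (hω i).2.2.1⟩) (s x) C₃ hC₃.le (grad x) (hess x) s' hu hbd
    have e1 : F ω - s x - ((1/2) * P1 ω + (1/6) * P2 ω + (1/8) * P3 ω)
        = (∫ t in Set.univ.pi fun i => Set.Ico (A i ω) (B i ω), s' t)
            / (∏ i, (B i ω - A i ω)) - s x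
          - (1/2) * P1 ω - (1/6) * P2 ω - (1/8) * P3 ω := by
      rw [hFdef]
      simp only
      rw [hFn_eq ω]
      ring
    rw [e1, hP1def, hP2def, hP3def, hRbdef]
    exact hmain
  -- boundedness of the random variables
  have hbnd : ∀ᵐ ω ∂(ℙ : Measure Ω), ∀ i, 0 ≤ x i - A i ω ∧ x i - A i ω ≤ 1
      ∧ 0 ≤ B i ω - x i ∧ B i ω - x i ≤ 1 := by
    filter_upwards [hAB] with ω hω i
    have h2 := hx i
    simp only [Set.mem_Ico] at h2
    obtain ⟨ha0, hax, hxb, hb1⟩ := hω i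
    exact ⟨by linarith, by linarith, by linarith, by linarith⟩
  have intbdd : ∀ (f : Ω → ℝ) (c : ℝ), Measurable f → (∀ᵐ ω ∂(ℙ : Measure Ω), |f ω| ≤ c)
      → Integrable f (ℙ : Measure Ω) := by
    intro f c hf hb
    refine Integrable.mono' (integrable_const c) hf.aestronglyMeasurable ?_
    filter_upwards [hb] with ω h
    simpa [Real.norm_eq_abs] using h
  have mA : ∀ i, Measurable fun ω => x i - A i ω := fun i => measurable_const.sub (hmeasA i)
  have mB : ∀ i, Measurable fun ω => B i ω - x i := fun i => (hmeasB i).sub measurable_const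
  have iA : ∀ i, Integrable (fun ω => x i - A i ω) (ℙ : Measure Ω) := fun i =>
    intbdd _ 1 (mA i) (by
      filter_upwards [hbnd] with ω h
      obtain ⟨h1, h2, h3, h4⟩ := h i
      rw [abs_le]; constructor <;> linarith)
  have iB : ∀ i, Integrable (fun ω => B i ω - x i) (ℙ : Measure Ω) := fun i =>
    intbdd _ 1 (mB i) (by
      filter_upwards [hbnd] with ω h
      obtain ⟨h1, h2, h3, h4⟩ := h i
      rw [abs_le]; constructor <;> linarith)
  have iA2 : ∀ i, Integrable (fun ω => (x i - A i ω)^2) (ℙ : Measure Ω) := fun i =>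
    intbdd _ 1 ((mA i).pow_const 2) (by
      filter_upwards [hbnd] with ω h
      obtain ⟨h1, h2, h3, h4⟩ := h i
      rw [abs_le]; constructor <;> nlinarith)
  have iB2 : ∀ i, Integrable (fun ω => (B i ω - x i)^2) (ℙ : Measure Ω) := fun i =>
    intbdd _ 1 ((mB i).pow_const 2) (by
      filter_upwards [hbnd] with ω h
      obtain ⟨h1, h2, h3, h4⟩ := h i
      rw [abs_le]; constructor <;> nlinarith)
  have iAB : ∀ i, Integrable (fun ω => (x i - A i ω) * (B i ω - x i)) (ℙ : Measure Ω) := fun i =>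
    intbdd _ 1 ((mA i).mul (mB i)) (by
      filter_upwards [hbnd] with ω h
      obtain ⟨h1, h2, h3, h4⟩ := h i
      rw [abs_le]; constructor <;> nlinarith)
  have iA3 : ∀ i, Integrable (fun ω => (x i - A i ω)^3) (ℙ : Measure Ω) := fun i =>
    intbdd _ 1 ((mA i).pow_const 3) (by
      filter_upwards [hbnd] with ω h
      obtain ⟨h1, h2, h3, h4⟩ := h i
      rw [abs_le]
      refine ⟨?_, pow_le_one₀ h1 h2⟩
      have := pow_nonneg h1 3
      linarith)
  have iB3 : ∀ i, Integrable (fun ω => (B i ω - x i)^3) (ℙ : Measure Ω) := fun i =>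
    intbdd _ 1 ((mB i).pow_const 3) (by
      filter_upwards [hbnd] with ω h
      obtain ⟨h1, h2, h3, h4⟩ := h i
      rw [abs_le]
      refine ⟨?_, pow_le_one₀ h3 h4⟩
      have := pow_nonneg h3 3
      linarith)
  have iδδ : ∀ i j, Integrable (fun ω =>
      ((B i ω - x i) - (x i - A i ω)) * ((B j ω - x j) - (x j - A j ω))) (ℙ : Measure Ω) := by
    intro i j
    refine intbdd _ 4 (((mB i).sub (mA i)).mul ((mB j).sub (mA j))) ?_
    filter_upwards [hbnd] with ω h
    obtain ⟨h1, h2, h3, h4⟩ := h i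
    obtain ⟨g1, g2, g3, g4⟩ := h j
    rw [abs_le]; constructor <;> nlinarith
  -- integrals of the polynomial parts
  have iP1 : Integrable P1 (ℙ : Measure Ω) := by
    rw [hP1def]
    exact integrable_finset_sum _ fun i _ => ((iB i).sub (iA i)).const_mul _
  have iP2 : Integrable P2 (ℙ : Measure Ω) := by
    rw [hP2def]
    exact integrable_finset_sum _ fun i _ => (((iA2 i).add (iB2 i)).sub (iAB i)).const_mul _
  have iP3 : Integrable P3 (ℙ : Measure Ω) := by
    rw [hP3def]
    exact integrable_finset_sum _ fun i _ =>
      integrable_finset_sum _ fun j _ => by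
        have := (iδδ i j).const_mul (hess x i j)
        simpa [mul_assoc] using this
  have iRb : Integrable Rb (ℙ : Measure Ω) := by
    rw [hRbdef]
    exact integrable_finset_sum _ fun i _ => (iA3 i).add (iB3 i)
  have hintP1 : ∫ ω, P1 ω = ∑ i, grad x i * ((∫ ω : Ω, (B i ω - x i)) - ∫ ω : Ω, (x i - A i ω)) := by
    rw [hP1def, integral_finset_sum (f := fun i (ω : Ω) => grad x i * ((B i ω - x i) - (x i - A i ω)))
      _ (fun i _ => by exact ((iB i).sub (iA i)).const_mul _)]
    exact Finset.sum_congr rfl fun i _ => by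
      rw [integral_const_mul,
        integral_sub (f := fun ω : Ω => B i ω - x i) (g := fun ω : Ω => x i - A i ω)
          (iB i) (iA i)]
  have hintP2 : ∫ ω, P2 ω = ∑ i, hess x i i *
      ((∫ ω : Ω, (x i - A i ω)^2) + (∫ ω : Ω, (B i ω - x i)^2)
        - ∫ ω : Ω, (x i - A i ω) * (B i ω - x i)) := by
    rw [hP2def, integral_finset_sum (f := fun i (ω : Ω) => hess x i i *
        ((x i - A i ω)^2 + (B i ω - x i)^2 - (x i - A i ω) * (B i ω - x i)))
      _ (fun i _ => by exact (((iA2 i).add (iB2 i)).sub (iAB i)).const_mul _)]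
    exact Finset.sum_congr rfl fun i _ => by
      rw [integral_const_mul,
        integral_sub (f := fun ω : Ω => (x i - A i ω)^2 + (B i ω - x i)^2)
          (g := fun ω : Ω => (x i - A i ω) * (B i ω - x i))
          (by exact (iA2 i).add (iB2 i)) (iAB i),
        integral_add (iA2 i) (iB2 i)]
  have hintP3 : ∫ ω, P3 ω = ∑ i, ∑ j ∈ Finset.univ \ {i}, hess x i j *
      ∫ ω : Ω, ((B i ω - x i) - (x i - A i ω)) * ((B j ω - x j) - (x j - A j ω)) := by
    rw [hP3def, integral_finset_sum (f := fun i (ω : Ω) => ∑ j ∈ Finset.univ \ {i}, hess x i j *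
        ((B i ω - x i) - (x i - A i ω)) * ((B j ω - x j) - (x j - A j ω)))
      _ (fun i _ => integrable_finset_sum _ fun j _ => by
        have := (iδδ i j).const_mul (hess x i j)
        simpa [mul_assoc] using this)]
    refine Finset.sum_congr rfl fun i _ => ?_
    rw [integral_finset_sum (f := fun j (ω : Ω) => hess x i j *
        ((B i ω - x i) - (x i - A i ω)) * ((B j ω - x j) - (x j - A j ω)))
      _ (fun j _ => by
        have := (iδδ i j).const_mul (hess x i j)
        simpa [mul_assoc] using this)]
    refine Finset.sum_congr rfl fun j _ => ?_
    simp_rw [mul_assoc]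
    rw [integral_const_mul]
  have hintRb : ∫ ω, Rb ω = ∑ i, ((∫ ω : Ω, (x i - A i ω)^3) + ∫ ω : Ω, (B i ω - x i)^3) := by
    rw [hRbdef, integral_finset_sum (f := fun i (ω : Ω) => (x i - A i ω)^3 + (B i ω - x i)^3)
      _ (fun i _ => (iA3 i).add (iB3 i))]
    exact Finset.sum_congr rfl fun i _ => integral_add (iA3 i) (iB3 i)
  set Pf : Ω → ℝ := fun ω => (1/2) * P1 ω + (1/6) * P2 ω + (1/8) * P3 ω with hPfdef
  have iPf : Integrable Pf (ℙ : Measure Ω) := by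
    rw [hPfdef]
    exact ((iP1.const_mul _).add (iP2.const_mul _)).add (iP3.const_mul _)
  have hintPf : ∫ ω, Pf ω = M₁ + M₂ := by
    rw [hPfdef]
    rw [integral_add (f := fun ω => (1/2) * P1 ω + (1/6) * P2 ω) (g := fun ω => (1/8) * P3 ω)
        (by exact (iP1.const_mul _).add (iP2.const_mul _)) (by exact iP3.const_mul _),
      integral_add (f := fun ω => (1/2) * P1 ω) (g := fun ω => (1/6) * P2 ω)
        (by exact iP1.const_mul _) (by exact iP2.const_mul _),
      integral_const_mul, integral_const_mul, integral_const_mul, hintP1, hintP2, hintP3, hM₁, hM₂]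
    ring
  have mP1 : Measurable P1 := by
    rw [hP1def]
    exact Finset.measurable_sum _ fun i _ => (((mB i).sub (mA i)).const_mul _)
  have mP2 : Measurable P2 := by
    rw [hP2def]
    exact Finset.measurable_sum _ fun i _ =>
      (((((mA i).pow_const 2).add ((mB i).pow_const 2)).sub ((mA i).mul (mB i))).const_mul _)
  have mP3 : Measurable P3 := by
    rw [hP3def]
    exact Finset.measurable_sum _ fun i _ => Finset.measurable_sum _ fun j _ =>
      ((((mB i).sub (mA i)).const_mul _).mul ((mB j).sub (mA j)))
  set ρ : Ω → ℝ := fun ω => F ω - s x - Pf ω with hρdef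
  have hρmeas : Measurable ρ := by
    rw [hρdef, hPfdef]
    exact (hFmeas.sub measurable_const).sub
      (((mP1.const_mul _).add (mP2.const_mul _)).add (mP3.const_mul _))
  have hρbd : ∀ᵐ ω ∂(ℙ : Measure Ω), |ρ ω| ≤ (C₃/4) * Rb ω := by
    filter_upwards [hkey] with ω h
    exact h
  have hRb_le : ∀ᵐ ω ∂(ℙ : Measure Ω), Rb ω ≤ 2 * d := by
    filter_upwards [hbnd] with ω h
    rw [hRbdef]
    calc ∑ i, ((x i - A i ω)^3 + (B i ω - x i)^3) ≤ ∑ _i : Fin d, (2:ℝ) := by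
          refine Finset.sum_le_sum fun i _ => ?_
          obtain ⟨h1, h2, h3, h4⟩ := h i
          have e1 : (x i - A i ω)^3 ≤ 1 := pow_le_one₀ h1 h2
          have e2 : (B i ω - x i)^3 ≤ 1 := pow_le_one₀ h3 h4
          linarith
      _ = 2 * d := by simp [mul_comm]
  have iρ : Integrable ρ (ℙ : Measure Ω) := by
    refine intbdd _ ((C₃/4) * (2 * d)) hρmeas ?_
    filter_upwards [hρbd, hRb_le] with ω h1 h2
    exact h1.trans (mul_le_mul_of_nonneg_left h2 (by positivity))
  have hρint_bound : |∫ ω, ρ ω| ≤ R₃ := by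
    have g_int : Integrable (fun ω => (C₃/4) * Rb ω) (ℙ : Measure Ω) := iRb.const_mul _
    have h1 : ‖∫ ω, ρ ω‖ ≤ ∫ ω, (C₃/4) * Rb ω :=
      norm_integral_le_of_norm_le g_int (by
        filter_upwards [hρbd] with ω h
        simpa [Real.norm_eq_abs] using h)
    rw [Real.norm_eq_abs, integral_const_mul, hintRb] at h1
    rw [hR₃]
    exact h1
  have hFval : ∫ ω, F ω = s x + (M₁ + M₂) + ∫ ω, ρ ω := by
    have hFeq : F = fun ω => s x + Pf ω + ρ ω := funext fun ω => by
      simp only [hρdef]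
      ring
    rw [hFeq, integral_add (f := fun ω => s x + Pf ω) (g := ρ)
        (by exact (integrable_const (s x)).add iPf) iρ,
      integral_add (f := fun _ => s x) (g := Pf) (integrable_const (s x)) iPf,
      integral_const, hintPf]
    simp
  have hstilde_val : ∫ ω, stilde ω = s x + (M₁ + M₂) + ∫ ω, ρ ω := by
    rw [integral_congr_ae hstF]
    exact hFval
  have hR₃0 : 0 ≤ R₃ := by
    rw [hR₃]
    refine mul_nonneg (by positivity) (Finset.sum_nonneg fun i _ => add_nonneg ?_ ?_)
    · exact integral_nonneg_of_ae (by
        filter_upwards [hbnd] with ω h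
        exact pow_nonneg (h i).1 3)
    · exact integral_nonneg_of_ae (by
        filter_upwards [hbnd] with ω h
        exact pow_nonneg (h i).2.2.1 3)
  -- final algebra
  set er : ℝ := ∫ ω, ρ ω with herdef
  have he : |er| ≤ R₃ := hρint_bound
  rw [hBinf, hstilde_val]
  have hexp : (s x - (s x + (M₁ + M₂) + er))^2 - (M₁ + M₂)^2
      = 2 * ((M₁ + M₂) * er) + er^2 := by ring
  rw [hexp]
  have habsRM : |R₃ * (M₁ + M₂)| = R₃ * |M₁ + M₂| := by
    rw [abs_mul, abs_of_nonneg hR₃0]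
  rw [habsRM]
  have h5 := abs_nonneg (M₁ + M₂)
  have h7 : (M₁ + M₂) * er ≤ |M₁ + M₂| * |er| :=
    (le_abs_self _).trans (le_of_eq (abs_mul _ _))
  have h8 : -(|M₁ + M₂| * |er|) ≤ (M₁ + M₂) * er := by
    have := neg_abs_le ((M₁ + M₂) * er)
    rw [abs_mul] at this
    exact this
  have h9 : |M₁ + M₂| * |er| ≤ |M₁ + M₂| * R₃ := mul_le_mul_of_nonneg_left he h5
  have h10 : er^2 ≤ R₃^2 := by nlinarith [sq_abs er, abs_nonneg er]
  have h11 : 0 ≤ er^2 := sq_nonneg er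
  rw [abs_le]
  constructor <;> nlinarith
end

section
/- Let k ≥ 2 and s : [0,1) → ℝ be integrable. For every x ∈ [1/k, 1 − 1/k], the expected infinite forest of the toy model satisfies E_T[s̃_U(x)] = ∫₀¹ s(t) h(t − x) dt, where h(u) = k(1 − ku) if 0 ≤ u ≤ 1/k, h(u) = k(1 + ku) if −1/k ≤ u ≤ 0, and h(u) = 0 if |u| ≥ 1/k. -/
open MeasureTheory

/-- Left endpoint of the cell containing `x` in the toy-model partition
`{[0,(1−T)/k), [(1−T)/k,(2−T)/k), …, [(k−T)/k,1)}` of `[0,1)`: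
the grid cell of `x` is `[(j−T)/k, (j+1−T)/k)` with `j = ⌊kx+T⌋`, clipped to `[0,1]`. -/
noncomputable def toyA (k : ℕ) (T x : ℝ) : ℝ :=
  max 0 (((⌊(k : ℝ) * x + T⌋ : ℝ) - T) / k)

/-- Right endpoint of the cell containing `x` in the toy-model partition. -/
noncomputable def toyB (k : ℕ) (T x : ℝ) : ℝ :=
  min 1 (((⌊(k : ℝ) * x + T⌋ : ℝ) + 1 - T) / k)

/-- The "hat kernel" `h` of the toy model. -/
noncomputable def toyKernel (k : ℕ) (u : ℝ) : ℝ :=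
  if 0 ≤ u ∧ u ≤ (k : ℝ)⁻¹ then (k : ℝ) * (1 - k * u)
  else if -(k : ℝ)⁻¹ ≤ u ∧ u ≤ 0 then (k : ℝ) * (1 + k * u)
  else 0

lemma floor_add_char {β T : ℝ} (hβ0 : 0 ≤ β) (hβ1 : β < 1) (hT0 : 0 ≤ T) (hT1 : T < 1) :
    ⌊β + T⌋ = if β + T < 1 then 0 else 1 := by
  split_ifs with h
  · exact Int.floor_eq_iff.mpr (by push_cast; constructor <;> linarith)
  · push_neg at h
    exact Int.floor_eq_iff.mpr (by push_cast; constructor <;> linarith)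

lemma floor_int_aux {a b : ℝ} (hab : a ≤ b) :
    ∫ T in Set.Ico (0:ℝ) 1, (if ⌊a + T⌋ = ⌊b + T⌋ then (1:ℝ) else 0)
      = max 0 (1 - (b - a)) := by
  have hmf1 : Measurable fun T : ℝ => ⌊a + T⌋ :=
    Int.measurable_floor.comp (measurable_const.add measurable_id)
  have hmf2 : Measurable fun T : ℝ => ⌊b + T⌋ :=
    Int.measurable_floor.comp (measurable_const.add measurable_id)
  have hmS : MeasurableSet {T : ℝ | ⌊a + T⌋ = ⌊b + T⌋} :=
    measurableSet_eq_fun hmf1 hmf2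
  have hrw : ∀ T : ℝ, (if ⌊a + T⌋ = ⌊b + T⌋ then (1:ℝ) else 0)
      = Set.indicator {T : ℝ | ⌊a + T⌋ = ⌊b + T⌋} (fun _ => (1:ℝ)) T := by
    intro T; simp [Set.indicator_apply]
  simp only [hrw]
  rw [integral_indicator_const (1:ℝ) hmS, measureReal_restrict_apply hmS, measureReal_def, smul_eq_mul, mul_one]
  by_cases h1 : 1 ≤ b - a
  · have hempty : {T : ℝ | ⌊a + T⌋ = ⌊b + T⌋} ∩ Set.Ico (0:ℝ) 1 = ∅ := by
      ext T
      simp only [Set.mem_inter_iff, Set.mem_setOf_eq, Set.mem_Ico, Set.mem_empty_iff_false,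
        iff_false, not_and]
      intro hfl
      exfalso
      have h2 : a + T + 1 ≤ b + T := by linarith
      have h3 : ⌊a + T + 1⌋ ≤ ⌊b + T⌋ := Int.floor_le_floor h2
      rw [Int.floor_add_one] at h3
      omega
    rw [hempty]
    simp [max_eq_left (by linarith : 1 - (b - a) ≤ 0)]
  · push_neg at h1
    set m : ℤ := ⌊a⌋ with hm
    set α : ℝ := a - m with hα
    set c : ℝ := b - m with hc
    have hα0 : 0 ≤ α := sub_nonneg.mpr (Int.floor_le a)
    have hα1 : α < 1 := by have := Int.lt_floor_add_one a; simp [hα]; linarith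
    have hcα : α ≤ c := by simp [hα, hc]; linarith
    have hc2 : c < α + 1 := by simp [hα, hc]; linarith
    have hcond : ∀ T : ℝ, (⌊a + T⌋ = ⌊b + T⌋) ↔ (⌊α + T⌋ = ⌊c + T⌋) := by
      intro T
      have e1 : a + T = α + T + (m : ℝ) := by simp [hα]; ring
      have e2 : b + T = c + T + (m : ℝ) := by simp [hc]; ring
      rw [e1, e2, Int.floor_add_intCast, Int.floor_add_intCast]
      omega
    by_cases hc1 : c < 1
    · have hc0 : 0 ≤ c := le_trans hα0 hcα
      have key : ∀ T : ℝ, 0 ≤ T → T < 1 →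
          ((⌊α + T⌋ = ⌊c + T⌋) ↔ (T < 1 - c ∨ 1 - α ≤ T)) := by
        intro T hT0 hT1
        rw [floor_add_char hα0 hα1 hT0 hT1, floor_add_char hc0 hc1 hT0 hT1]
        constructor
        · intro h
          by_contra hcon
          push_neg at hcon
          obtain ⟨hc', hα'⟩ := hcon
          rw [if_pos (by linarith), if_neg (by linarith)] at h
          norm_num at h
        · rintro (h | h)
          · rw [if_pos (by linarith), if_pos (by linarith)]
          · rw [if_neg (by push_neg; linarith), if_neg (by push_neg; linarith)]
      have hSet : {T : ℝ | ⌊a + T⌋ = ⌊b + T⌋} ∩ Set.Ico (0:ℝ) 1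
          = Set.Ico (0:ℝ) (1 - c) ∪ Set.Ico (1 - α) 1 := by
        ext T
        simp only [Set.mem_inter_iff, Set.mem_setOf_eq, Set.mem_Ico, Set.mem_union]
        constructor
        · rintro ⟨hfl, hT0, hT1⟩
          rcases (key T hT0 hT1).mp ((hcond T).mp hfl) with h | h
          · exact Or.inl ⟨hT0, h⟩
          · exact Or.inr ⟨h, hT1⟩
        · rintro (⟨hT0, hT1⟩ | ⟨hT0, hT1⟩)
          · have hT1' : T < 1 := by linarith
            exact ⟨(hcond T).mpr ((key T hT0 hT1').mpr (Or.inl hT1)), hT0, hT1'⟩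
          · have hT0' : 0 ≤ T := by linarith
            exact ⟨(hcond T).mpr ((key T hT0' hT1).mpr (Or.inr hT0)), hT0', hT1⟩
      rw [hSet, measure_union _ measurableSet_Ico]
      · rw [Real.volume_Ico, Real.volume_Ico,
          ← ENNReal.ofReal_add (by linarith) (by linarith),
          ENNReal.toReal_ofReal (by linarith), max_eq_right (by linarith)]
        simp only [hα, hc]; ring
      · rw [Set.disjoint_left]
        intro T hT1 hT2
        simp only [Set.mem_Ico] at hT1 hT2
        linarith [hT1.2, hT2.1]
    · push_neg at hc1
      set γ : ℝ := c - 1 with hγ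
      have hγ0 : 0 ≤ γ := by simp [hγ]; linarith
      have hγα : γ < α := by simp [hγ]; linarith
      have hγ1 : γ < 1 := lt_trans hγα hα1
      have key : ∀ T : ℝ, 0 ≤ T → T < 1 →
          ((⌊α + T⌋ = ⌊c + T⌋) ↔ (1 - α ≤ T ∧ T < 1 - γ)) := by
        intro T hT0 hT1
        have e3 : c + T = γ + T + 1 := by simp [hγ]; ring
        rw [e3, Int.floor_add_one, floor_add_char hα0 hα1 hT0 hT1,
          floor_add_char hγ0 hγ1 hT0 hT1]
        constructor
        · intro h
          split_ifs at h with hA hG hG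
          · omega
          · omega
          · constructor <;> linarith [not_lt.mp hA]
          · omega
        · rintro ⟨h1, h2⟩
          rw [if_neg (by push_neg; linarith), if_pos (by linarith)]
          norm_num
      have hSet : {T : ℝ | ⌊a + T⌋ = ⌊b + T⌋} ∩ Set.Ico (0:ℝ) 1
          = Set.Ico (1 - α) (1 - γ) := by
        ext T
        simp only [Set.mem_inter_iff, Set.mem_setOf_eq, Set.mem_Ico]
        constructor
        · rintro ⟨hfl, hT0, hT1⟩
          exact (key T hT0 hT1).mp ((hcond T).mp hfl)
        · rintro ⟨hT0, hT1⟩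
          have hT0' : 0 ≤ T := by linarith
          have hT1' : T < 1 := by linarith
          exact ⟨(hcond T).mpr ((key T hT0' hT1').mpr ⟨hT0, hT1⟩), hT0', hT1'⟩
      rw [hSet, Real.volume_Ico, ENNReal.toReal_ofReal (by linarith),
        max_eq_right (by linarith)]
      simp only [hγ, hα, hc]; ring

lemma floor_integral (a b : ℝ) :
    ∫ T in Set.Ico (0:ℝ) 1, (if ⌊a + T⌋ = ⌊b + T⌋ then (1:ℝ) else 0)
      = max 0 (1 - |b - a|) := by
  rcases le_total a b with h | h
  · rw [floor_int_aux h, abs_of_nonneg (by linarith)]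
  · have hsymm : ∀ T : ℝ, (if ⌊a + T⌋ = ⌊b + T⌋ then (1:ℝ) else 0)
        = (if ⌊b + T⌋ = ⌊a + T⌋ then (1:ℝ) else 0) := by
      intro T; simp [eq_comm]
    simp only [hsymm]
    rw [floor_int_aux h, abs_of_nonpos (by linarith), neg_sub]

lemma kernel_eq (k : ℕ) (hk : 1 ≤ k) (u : ℝ) :
    (k : ℝ) * max 0 (1 - |(k : ℝ) * u|) = toyKernel k u := by
  have hk0 : (0:ℝ) < k := by exact_mod_cast (by omega : 0 < k)
  have hkinv : (k : ℝ) * (k : ℝ)⁻¹ = 1 := mul_inv_cancel₀ (ne_of_gt hk0)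
  unfold toyKernel
  by_cases h1 : 0 ≤ u ∧ u ≤ (k : ℝ)⁻¹
  · rw [if_pos h1, abs_of_nonneg (by nlinarith [h1.1]), max_eq_right]
    nlinarith [h1.2]
  · rw [if_neg h1]
    by_cases h2 : -(k : ℝ)⁻¹ ≤ u ∧ u ≤ 0
    · rw [if_pos h2, abs_of_nonpos (by nlinarith [h2.2]), max_eq_right (by nlinarith [h2.1])]
      ring
    · rw [if_neg h2]
      push_neg at h1 h2
      rcases le_or_gt 0 u with hu | hu
      · have : (k:ℝ)⁻¹ < u := h1 hu
        rw [abs_of_nonneg (by nlinarith), max_eq_left (by nlinarith), mul_zero]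
      · have : u < -(k:ℝ)⁻¹ := by
          by_contra hcon; push_neg at hcon; exact absurd (h2 hcon) (not_lt.mpr hu.le)
        rw [abs_of_nonpos (by nlinarith), max_eq_left (by nlinarith), mul_zero]

/-- **The expected infinite forest of the toy model is a kernel smoother.**
For `k ≥ 2`, `s` integrable on `[0,1)` and `x ∈ [1/k, 1−1/k]`,
`E_T[s̃_U(x)] = ∫₀¹ s(t) h(t−x) dt`, where `T` is uniform on `[0,1)` and
`s̃_U(x)` is the average of `s` over the toy-model cell containing `x`. -/
theorem toy_model_kernel
    (k : ℕ) (hk : 2 ≤ k) (s : ℝ → ℝ)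
    (hs : IntegrableOn s (Set.Ico (0 : ℝ) 1))
    (x : ℝ) (hx : x ∈ Set.Icc ((k : ℝ)⁻¹) (1 - (k : ℝ)⁻¹)) :
    (∫ T in Set.Ico (0 : ℝ) 1,
        (∫ t in Set.Ico (toyA k T x) (toyB k T x), s t) / (toyB k T x - toyA k T x))
      = ∫ t in Set.Ico (0 : ℝ) 1, s t * toyKernel k (t - x) := by
  have hk0 : (0:ℝ) < k := by exact_mod_cast (by omega : 0 < k)
  have hkinv : (k : ℝ) * (k : ℝ)⁻¹ = 1 := mul_inv_cancel₀ (ne_of_gt hk0)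
  obtain ⟨hxl, hxr⟩ := hx
  have hx1 : 1 ≤ (k:ℝ) * x := by
    have := mul_le_mul_of_nonneg_left hxl hk0.le
    rw [hkinv] at this; exact this
  have hx2 : (k:ℝ) * x ≤ (k:ℝ) - 1 := by
    have := mul_le_mul_of_nonneg_left hxr hk0.le
    rw [mul_sub, mul_one, hkinv] at this; exact this
  set I : Set ℝ := Set.Ico (0:ℝ) 1 with hI
  set f : ℝ → ℝ → ℝ := fun T t =>
    (k:ℝ) * (s t * (if ⌊(k:ℝ) * t + T⌋ = ⌊(k:ℝ) * x + T⌋ then (1:ℝ) else 0)) with hf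
  -- Step A
  have stepA : ∀ T ∈ I, (∫ t in Set.Ico (toyA k T x) (toyB k T x), s t)
      / (toyB k T x - toyA k T x) = ∫ t in I, f T t := by
    intro T hT
    obtain ⟨hT0, hT1⟩ : 0 ≤ T ∧ T < 1 := hT
    set j : ℤ := ⌊(k:ℝ) * x + T⌋ with hj
    have hjle : (j:ℝ) ≤ (k:ℝ) * x + T := Int.floor_le _
    have hjge : 1 ≤ (j:ℝ) := by
      have : (1:ℤ) ≤ j := Int.le_floor.mpr (by push_cast; linarith)
      exact_mod_cast this
    have hA : toyA k T x = ((j:ℝ) - T) / k := by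
      unfold toyA
      rw [max_eq_right (div_nonneg (by linarith) hk0.le)]
    have hB : toyB k T x = ((j:ℝ) + 1 - T) / k := by
      unfold toyB
      rw [min_eq_right ((div_le_one hk0).mpr (by linarith))]
    have hBA : toyB k T x - toyA k T x = (k:ℝ)⁻¹ := by
      rw [hA, hB]
      field_simp
      ring
    have hmem : ∀ t : ℝ, t ∈ Set.Ico (((j:ℝ) - T) / k) (((j:ℝ) + 1 - T) / k)
        ↔ ⌊(k:ℝ) * t + T⌋ = j := by
      intro t
      rw [Set.mem_Ico, Int.floor_eq_iff]
      constructor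
      · rintro ⟨h1, h2⟩
        rw [div_le_iff₀ hk0] at h1
        rw [lt_div_iff₀ hk0] at h2
        constructor
        · push_cast; nlinarith
        · push_cast; nlinarith
      · rintro ⟨h1, h2⟩
        push_cast at h1 h2
        constructor
        · rw [div_le_iff₀ hk0]; nlinarith
        · rw [lt_div_iff₀ hk0]; nlinarith
    have hsub : Set.Ico (((j:ℝ) - T) / k) (((j:ℝ) + 1 - T) / k) ⊆ I := by
      intro t ht
      obtain ⟨h1, h2⟩ := ht
      refine ⟨le_trans (div_nonneg (by linarith) hk0.le) h1, lt_of_lt_of_le h2 ?_⟩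
      exact (div_le_one hk0).mpr (by linarith)
    calc (∫ t in Set.Ico (toyA k T x) (toyB k T x), s t) / (toyB k T x - toyA k T x)
        = (∫ t in Set.Ico (((j:ℝ) - T) / k) (((j:ℝ) + 1 - T) / k), s t) / (k:ℝ)⁻¹ := by
          rw [hBA, hA, hB]
      _ = (k:ℝ) * ∫ t in Set.Ico (((j:ℝ) - T) / k) (((j:ℝ) + 1 - T) / k), s t := by
          rw [div_eq_mul_inv, inv_inv, mul_comm]
      _ = (k:ℝ) * ∫ t in I,
            (Set.Ico (((j:ℝ) - T) / k) (((j:ℝ) + 1 - T) / k)).indicator s t := by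
          rw [setIntegral_indicator measurableSet_Ico,
            Set.inter_eq_self_of_subset_right hsub]
      _ = ∫ t in I, (k:ℝ) *
            (Set.Ico (((j:ℝ) - T) / k) (((j:ℝ) + 1 - T) / k)).indicator s t :=
          (integral_const_mul _ _).symm
      _ = ∫ t in I, f T t := by
          refine integral_congr_ae (Filter.Eventually.of_forall fun t => ?_)
          show (k:ℝ) * (Set.Ico (((j:ℝ) - T) / k) (((j:ℝ) + 1 - T) / k)).indicator s t
            = (k:ℝ) * (s t * (if ⌊(k:ℝ) * t + T⌋ = ⌊(k:ℝ) * x + T⌋ then (1:ℝ) else 0))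
          rw [Set.indicator_apply]
          by_cases hmt : t ∈ Set.Ico (((j:ℝ) - T) / k) (((j:ℝ) + 1 - T) / k)
          · rw [if_pos hmt, if_pos ((hmem t).mp hmt), mul_one]
          · rw [if_neg hmt, if_neg (fun hh => hmt ((hmem t).mpr hh))]
            simp
  -- measurability / integrability on the product
  have hEmeas : MeasurableSet {p : ℝ × ℝ | ⌊(k:ℝ) * p.2 + p.1⌋ = ⌊(k:ℝ) * x + p.1⌋} := by
    apply measurableSet_eq_fun
    · exact Int.measurable_floor.comp ((measurable_const.mul measurable_snd).add measurable_fst)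
    · exact Int.measurable_floor.comp (measurable_const.add measurable_fst)
  haveI : IsFiniteMeasure (volume.restrict I) := by
    constructor
    rw [Measure.restrict_apply_univ, hI, Real.volume_Ico]
    exact ENNReal.ofReal_lt_top
  have hInt : Integrable (Function.uncurry f) ((volume.restrict I).prod (volume.restrict I)) := by
    have hbound : Integrable (fun p : ℝ × ℝ => (1:ℝ) * ((k:ℝ) * |s p.2|))
        ((volume.restrict I).prod (volume.restrict I)) :=
      (integrable_const (1:ℝ)).mul_prod (hs.norm.const_mul (k:ℝ))
    apply Integrable.mono' hbound
    · have hsm : AEStronglyMeasurable (fun p : ℝ × ℝ => s p.2)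
          ((volume.restrict I).prod (volume.restrict I)) := hs.aestronglyMeasurable.comp_snd
      have hgm : Measurable fun p : ℝ × ℝ =>
          (if ⌊(k:ℝ) * p.2 + p.1⌋ = ⌊(k:ℝ) * x + p.1⌋ then (1:ℝ) else 0) :=
        Measurable.ite hEmeas measurable_const measurable_const
      exact ((hsm.mul hgm.aestronglyMeasurable).const_mul _)
    · refine Filter.Eventually.of_forall fun p => ?_
      show ‖(k:ℝ) * (s p.2 * (if ⌊(k:ℝ) * p.2 + p.1⌋ = ⌊(k:ℝ) * x + p.1⌋ then (1:ℝ) else 0))‖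
        ≤ (1:ℝ) * ((k:ℝ) * |s p.2|)
      by_cases hp : ⌊(k:ℝ) * p.2 + p.1⌋ = ⌊(k:ℝ) * x + p.1⌋
      · rw [if_pos hp, mul_one, one_mul, Real.norm_eq_abs, abs_mul,
          abs_of_nonneg hk0.le]
      · rw [if_neg hp, mul_zero, mul_zero, one_mul, norm_zero]
        positivity
  -- Step D
  have stepD : ∀ t : ℝ, (∫ T in I, f T t) = s t * toyKernel k (t - x) := by
    intro t
    have h1 : (∫ T in I, f T t)
        = ((k:ℝ) * s t) * ∫ T in I,
            (if ⌊(k:ℝ) * t + T⌋ = ⌊(k:ℝ) * x + T⌋ then (1:ℝ) else 0) := by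
      rw [← integral_const_mul]
      refine integral_congr_ae (Filter.Eventually.of_forall fun T => ?_)
      show (k:ℝ) * (s t * (if ⌊(k:ℝ) * t + T⌋ = ⌊(k:ℝ) * x + T⌋ then (1:ℝ) else 0))
        = (k:ℝ) * s t * (if ⌊(k:ℝ) * t + T⌋ = ⌊(k:ℝ) * x + T⌋ then (1:ℝ) else 0)
      ring
    rw [h1, hI, floor_integral ((k:ℝ) * t) ((k:ℝ) * x)]
    have habs : |(k:ℝ) * x - (k:ℝ) * t| = |(k:ℝ) * (t - x)| := by
      rw [← abs_neg]; ring_nf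
    rw [habs, ← kernel_eq k (by omega) (t - x)]
    ring
  calc (∫ T in I, (∫ t in Set.Ico (toyA k T x) (toyB k T x), s t) / (toyB k T x - toyA k T x))
      = ∫ T in I, ∫ t in I, f T t := setIntegral_congr_fun measurableSet_Ico stepA
    _ = ∫ t in I, ∫ T in I, f T t := integral_integral_swap hInt
    _ = ∫ t in I, s t * toyKernel k (t - x) := by
        exact integral_congr_ae (Filter.Eventually.of_forall fun t => stepD t)
end

section
/- Let k ≥ 2, x ∈ [1/k, 1 − 1/k], and in the toy model set α = x − A_{U,x} and β = B_{U,x} − x. Then E[αβ] = 1/(6k²), E[α − β] = 0, and for every integer κ ≥ 1, E[α^κ + β^κ] = 2/((κ+1) k^κ). -/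
open MeasureTheory

lemma fract_periodic' : Function.Periodic (Int.fract : ℝ → ℝ) 1 := fun u => by
  simpa using Int.fract_int_add 1 u

/-- Key substitution lemma: integrating `g ∘ fract (c + ·)` over `[0,1)` equals `∫₀¹ g`. -/
lemma key_subst (c : ℝ) (g : ℝ → ℝ) (hg : Continuous g) :
    ∫ T in Set.Ico (0 : ℝ) 1, g (Int.fract (c + T)) = ∫ u in (0 : ℝ)..1, g u := by
  have h1 : ∫ T in Set.Ico (0 : ℝ) 1, g (Int.fract (c + T))
      = ∫ T in (0 : ℝ)..1, g (Int.fract (c + T)) := by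
    rw [MeasureTheory.integral_Ico_eq_integral_Ioo,
      intervalIntegral.integral_of_le (by norm_num : (0:ℝ) ≤ 1),
      MeasureTheory.integral_Ioc_eq_integral_Ioo]
  rw [h1]
  have h2 : (∫ T in (0 : ℝ)..1, g (Int.fract (c + T)))
      = ∫ u in c..(c + 1), g (Int.fract u) := by
    simpa using intervalIntegral.integral_comp_add_left (fun u => g (Int.fract u)) c
      (a := (0:ℝ)) (b := 1)
  rw [h2]
  have hper : Function.Periodic (fun u : ℝ => g (Int.fract u)) 1 :=
    fract_periodic'.comp g
  have h3 := hper.intervalIntegral_add_eq c 0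
  simp only [zero_add] at h3
  rw [h3]
  rw [intervalIntegral.integral_of_le (by norm_num : (0:ℝ) ≤ 1),
    MeasureTheory.integral_Ioc_eq_integral_Ioo,
    intervalIntegral.integral_of_le (by norm_num : (0:ℝ) ≤ 1),
    MeasureTheory.integral_Ioc_eq_integral_Ioo]
  refine MeasureTheory.setIntegral_congr_fun measurableSet_Ioo ?_
  intro u hu
  simp [Int.fract_eq_self.2 ⟨hu.1.le, hu.2⟩]

lemma cell_eq (k : ℕ) (hk : 2 ≤ k) (x : ℝ)
    (hx : x ∈ Set.Icc ((k : ℝ)⁻¹) (1 - (k : ℝ)⁻¹)) {T : ℝ} (hT : T ∈ Set.Ico (0 : ℝ) 1) :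
    x - toyA k T x = Int.fract ((k : ℝ) * x + T) / k ∧
      toyB k T x - x = (1 - Int.fract ((k : ℝ) * x + T)) / k := by
  have kpos : (0 : ℝ) < k := by positivity
  obtain ⟨hx1, hx2⟩ := hx
  obtain ⟨hT0, hT1⟩ := hT
  have hkx1 : (1 : ℝ) ≤ (k : ℝ) * x := by
    rw [← mul_inv_cancel₀ kpos.ne']
    exact mul_le_mul_of_nonneg_left hx1 kpos.le
  have hkx2 : (k : ℝ) * x ≤ (k : ℝ) - 1 := by
    have := mul_le_mul_of_nonneg_left hx2 kpos.le
    rw [mul_sub, mul_inv_cancel₀ kpos.ne', mul_one] at this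
    exact this
  set j : ℤ := ⌊(k : ℝ) * x + T⌋ with hj
  have hj1 : (1 : ℤ) ≤ j := Int.le_floor.2 (by push_cast; linarith)
  have hjk : j < (k : ℤ) := by
    rw [Int.floor_lt]
    push_cast
    linarith
  have hjR1 : (1 : ℝ) ≤ (j : ℝ) := by exact_mod_cast hj1
  have hjRk : (j : ℝ) + 1 ≤ (k : ℝ) := by exact_mod_cast hjk
  have hA : toyA k T x = ((j : ℝ) - T) / k := by
    rw [toyA, ← hj, max_eq_right]
    apply div_nonneg _ kpos.le
    linarith
  have hB : toyB k T x = ((j : ℝ) + 1 - T) / k := by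
    rw [toyB, ← hj, min_eq_right]
    rw [div_le_one kpos]
    linarith
  have hfr : Int.fract ((k : ℝ) * x + T) = (k : ℝ) * x + T - (j : ℝ) := by
    rw [Int.fract, hj]
  constructor
  · rw [hA, hfr]
    field_simp
    ring
  · rw [hB, hfr]
    field_simp
    ring

/-- **Moments of the cell of the toy model, away from the border.**
For `k ≥ 2`, `x ∈ [1/k, 1−1/k]`, with `α = x − A_{U,x}`, `β = B_{U,x} − x` and `T`
uniform on `[0,1)`: `E[αβ] = 1/(6k²)`, `E[α−β] = 0`, and
`E[α^κ + β^κ] = 2/((κ+1)k^κ)` for every integer `κ ≥ 1`. -/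
theorem toy_model_moments
    (k : ℕ) (hk : 2 ≤ k)
    (x : ℝ) (hx : x ∈ Set.Icc ((k : ℝ)⁻¹) (1 - (k : ℝ)⁻¹)) :
    (∫ T in Set.Ico (0 : ℝ) 1, (x - toyA k T x) * (toyB k T x - x))
        = 1 / (6 * (k : ℝ) ^ 2)
    ∧ (∫ T in Set.Ico (0 : ℝ) 1, ((x - toyA k T x) - (toyB k T x - x))) = 0
    ∧ ∀ κ : ℕ, 1 ≤ κ →
        (∫ T in Set.Ico (0 : ℝ) 1, ((x - toyA k T x) ^ κ + (toyB k T x - x) ^ κ))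
          = 2 / ((κ + 1 : ℝ) * (k : ℝ) ^ κ) := by
  have kpos : (0 : ℝ) < k := by
    have : 0 < k := by omega
    exact_mod_cast this
  refine ⟨?_, ?_, ?_⟩
  · have hcong : ∫ T in Set.Ico (0 : ℝ) 1, (x - toyA k T x) * (toyB k T x - x)
        = ∫ T in Set.Ico (0 : ℝ) 1,
            (Int.fract ((k : ℝ) * x + T) / k) * ((1 - Int.fract ((k : ℝ) * x + T)) / k) := by
      refine MeasureTheory.setIntegral_congr_fun measurableSet_Ico fun T hT => ?_
      obtain ⟨h1, h2⟩ := cell_eq k hk x hx hT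
      rw [h1, h2]
    rw [hcong, key_subst ((k : ℝ) * x) (fun u => (u / k) * ((1 - u) / k)) (by fun_prop)]
    have hint : ∀ u : ℝ, (u / k) * ((1 - u) / k) = (u - u ^ 2) / (k : ℝ) ^ 2 := by
      intro u; field_simp
    simp_rw [hint]
    rw [intervalIntegral.integral_div,
      intervalIntegral.integral_sub ((by fun_prop : Continuous fun u : ℝ => u).intervalIntegrable _ _)
        ((by fun_prop : Continuous fun u : ℝ => u ^ 2).intervalIntegrable _ _),
      integral_id, integral_pow]
    field_simp
    ring
  · have hcong : ∫ T in Set.Ico (0 : ℝ) 1, ((x - toyA k T x) - (toyB k T x - x))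
        = ∫ T in Set.Ico (0 : ℝ) 1,
            (Int.fract ((k : ℝ) * x + T) / k - (1 - Int.fract ((k : ℝ) * x + T)) / k) := by
      refine MeasureTheory.setIntegral_congr_fun measurableSet_Ico fun T hT => ?_
      obtain ⟨h1, h2⟩ := cell_eq k hk x hx hT
      rw [h1, h2]
    rw [hcong, key_subst ((k : ℝ) * x) (fun u => u / k - (1 - u) / k) (by fun_prop)]
    have hint : ∀ u : ℝ, u / k - (1 - u) / k = (2 * u - 1) / (k : ℝ) := by
      intro u; field_simp; ring
    simp_rw [hint]
    rw [intervalIntegral.integral_div,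
      intervalIntegral.integral_sub
        ((by fun_prop : Continuous fun u : ℝ => 2 * u).intervalIntegrable _ _)
        (intervalIntegrable_const),
      intervalIntegral.integral_const_mul, integral_id]
    norm_num
  · intro κ hκ
    have hcong : ∫ T in Set.Ico (0 : ℝ) 1, ((x - toyA k T x) ^ κ + (toyB k T x - x) ^ κ)
        = ∫ T in Set.Ico (0 : ℝ) 1,
            ((Int.fract ((k : ℝ) * x + T) / k) ^ κ
              + ((1 - Int.fract ((k : ℝ) * x + T)) / k) ^ κ) := by
      refine MeasureTheory.setIntegral_congr_fun measurableSet_Ico fun T hT => ?_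
      obtain ⟨h1, h2⟩ := cell_eq k hk x hx hT
      rw [h1, h2]
    rw [hcong, key_subst ((k : ℝ) * x) (fun u => (u / k) ^ κ + ((1 - u) / k) ^ κ) (by fun_prop)]
    have hsym : (∫ u in (0 : ℝ)..1, ((1 - u) / k) ^ κ) = ∫ u in (0 : ℝ)..1, (u / k) ^ κ := by
      have := intervalIntegral.integral_comp_sub_left (fun u : ℝ => (u / k) ^ κ) 1
        (a := (0:ℝ)) (b := 1)
      simpa using this
    rw [intervalIntegral.integral_add
        ((by fun_prop : Continuous fun u : ℝ => (u / k) ^ κ).intervalIntegrable _ _)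
        ((by fun_prop : Continuous fun u : ℝ => ((1 - u) / k) ^ κ).intervalIntegrable _ _),
      hsym]
    have hpow : ∀ u : ℝ, (u / k) ^ κ = u ^ κ / (k : ℝ) ^ κ := fun u => div_pow u _ κ
    simp_rw [hpow]
    rw [intervalIntegral.integral_div, integral_pow]
    have hκ1 : ((κ : ℝ) + 1) ≠ 0 := by positivity
    have hkκ : ((k : ℝ) ^ κ) ≠ 0 := by positivity
    field_simp
    ring
end

section
/- Let k ≥ 2 and assume (H2a). Then for every x ∈ [1/k, 1 − 1/k]: (i) 𝓑∞(x) ≤ C₂²/(36 k⁴), and (ii) |𝓥(x) − (s′(x))²/(12 k²)| ≤ (2‖s′‖_∞ C₂ + C₂²)/k³. -/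
open MeasureTheory

lemma icoIntegral_eq (f : ℝ → ℝ) {a b : ℝ} (h : a ≤ b) :
    ∫ t in Set.Ico a b, f t = ∫ t in a..b, f t := by
  rw [intervalIntegral.integral_of_le h, MeasureTheory.integral_Ico_eq_integral_Ioo,
    MeasureTheory.integral_Ioc_eq_integral_Ioo]

lemma integral_fract_comp (g : ℝ → ℝ) (c : ℝ) :
    ∫ T in Set.Ico (0:ℝ) 1, g (Int.fract (c + T)) = ∫ v in Set.Ico (0:ℝ) 1, g v := by
  have per : Function.Periodic (fun u => g (Int.fract u)) 1 := fun u => by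
    simp [Int.fract_add_one]
  rw [icoIntegral_eq _ zero_le_one, icoIntegral_eq _ zero_le_one]
  have h1 : ∫ T in (0:ℝ)..1, g (Int.fract (c + T)) = ∫ u in (c+0)..(c+1), g (Int.fract u) :=
    intervalIntegral.integral_comp_add_left (fun u => g (Int.fract u)) c
  rw [h1]
  have h2 := per.intervalIntegral_add_eq c 0
  simp only [zero_add] at h2
  rw [add_zero] at h1 ⊢
  rw [h2]
  rw [intervalIntegral.integral_of_le zero_le_one, intervalIntegral.integral_of_le zero_le_one,
    MeasureTheory.integral_Ioc_eq_integral_Ioo, MeasureTheory.integral_Ioc_eq_integral_Ioo]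
  exact MeasureTheory.setIntegral_congr_fun measurableSet_Ioo fun u hu =>
    congrArg g (Int.fract_eq_self.mpr ⟨hu.1.le, hu.2⟩)


/-- The partition projection `s̃_U(x)`: average of `s` over the toy-model cell of `x`. -/
noncomputable def toyProj (k : ℕ) (s : ℝ → ℝ) (T x : ℝ) : ℝ :=
  (∫ t in Set.Ico (toyA k T x) (toyB k T x), s t) / (toyB k T x - toyA k T x)

set_option maxHeartbeats 2000000 in
/-- **Bias of trees and infinite forests in the toy model under (H2a).**
Assume `s` is differentiable on `[0,1)` with derivative `ds`,
`|s t − s x − ds x (t−x)| ≤ C₂ (t−x)²` on `[0,1)` and `|ds| ≤ M` on `[0,1)`.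
Then for `k ≥ 2` and `x ∈ [1/k, 1−1/k]`, the infinite-forest bias satisfies
`𝓑∞(x) ≤ C₂²/(36k⁴)`, and the variance term of a single tree satisfies
`|𝓥(x) − (ds x)²/(12k²)| ≤ (2 M C₂ + C₂²)/k³`. -/
theorem toy_model_bias_H2a
    (k : ℕ) (hk : 2 ≤ k)
    (s ds : ℝ → ℝ) (C₂ M : ℝ) (hC₂ : 0 < C₂)
    (hdiff : ∀ y ∈ Set.Ico (0 : ℝ) 1, HasDerivWithinAt s (ds y) (Set.Ico (0 : ℝ) 1) y)
    (hH2a : ∀ t ∈ Set.Ico (0 : ℝ) 1, ∀ y ∈ Set.Ico (0 : ℝ) 1,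
        |s t - s y - ds y * (t - y)| ≤ C₂ * (t - y) ^ 2)
    (hM : ∀ y ∈ Set.Ico (0 : ℝ) 1, |ds y| ≤ M)
    (x : ℝ) (hx : x ∈ Set.Icc ((k : ℝ)⁻¹) (1 - (k : ℝ)⁻¹)) :
    (s x - ∫ T in Set.Ico (0 : ℝ) 1, toyProj k s T x) ^ 2
        ≤ C₂ ^ 2 / (36 * (k : ℝ) ^ 4)
    ∧ |(∫ T in Set.Ico (0 : ℝ) 1,
          (toyProj k s T x - ∫ T' in Set.Ico (0 : ℝ) 1, toyProj k s T' x) ^ 2)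
          - (ds x) ^ 2 / (12 * (k : ℝ) ^ 2)|
        ≤ (2 * M * C₂ + C₂ ^ 2) / (k : ℝ) ^ 3 := by
  have hk2 : (2:ℝ) ≤ (k:ℝ) := by exact_mod_cast hk
  have hkpos : (0:ℝ) < (k:ℝ) := by linarith
  have hkne : (k:ℝ) ≠ 0 := ne_of_gt hkpos
  have hkinv : (0:ℝ) < (k:ℝ)⁻¹ := by positivity
  obtain ⟨hx1, hx2⟩ := hx
  have hxIco : x ∈ Set.Ico (0:ℝ) 1 := ⟨by linarith, by linarith⟩
  have hMnn : 0 ≤ M := le_trans (abs_nonneg _) (hM x hxIco)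
  have scont : ContinuousOn s (Set.Ico (0:ℝ) 1) := fun y hy =>
    (hdiff y hy).continuousWithinAt
  set s' : ℝ → ℝ := (Set.Ico (0:ℝ) 1).indicator s with hs'def
  have hs'meas : AEStronglyMeasurable s' volume :=
    (aestronglyMeasurable_indicator_iff measurableSet_Ico).mpr
      (scont.aestronglyMeasurable measurableSet_Ico)
  have hs'eq : ∀ t ∈ Set.Ico (0:ℝ) 1, s' t = s t := fun t ht => Set.indicator_of_mem ht s
  have hs'bound : ∀ t : ℝ, |s' t| ≤ |s x| + M + C₂ := by
    intro t
    by_cases ht : t ∈ Set.Ico (0:ℝ) 1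
    · rw [hs'eq t ht]
      have h1 := hH2a t ht x hxIco
      have h2 : |ds x| ≤ M := hM x hxIco
      have h3 : |t - x| ≤ 1 := by
        rw [abs_le]
        constructor
        · linarith [ht.1, hxIco.2.le]
        · linarith [ht.2.le, hxIco.1]
      have h4' : (t-x)^2 ≤ 1 := by nlinarith [sq_abs (t-x), abs_nonneg (t-x)]
      have h4 : C₂ * (t-x)^2 ≤ C₂ := by nlinarith [h4']
      have h5 : |ds x * (t-x)| ≤ M := by
        rw [abs_mul]
        calc |ds x| * |t-x| ≤ M * 1 := by
              apply mul_le_mul h2 h3 (abs_nonneg _) hMnn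
          _ = M := mul_one M
      have e : s t = (s t - s x - ds x*(t-x)) + ds x*(t-x) + s x := by ring
      rw [e]
      calc |(s t - s x - ds x*(t-x)) + ds x*(t-x) + s x|
          ≤ |(s t - s x - ds x*(t-x)) + ds x*(t-x)| + |s x| := abs_add_le _ _
        _ ≤ |s t - s x - ds x*(t-x)| + |ds x*(t-x)| + |s x| := by
              linarith [abs_add_le (s t - s x - ds x*(t-x)) (ds x*(t-x))]
        _ ≤ |s x| + M + C₂ := by linarith
    · rw [hs'def, Set.indicator_of_notMem ht]
      simp only [abs_zero]
      positivity
  have hs'int : ∀ a b : ℝ, IntervalIntegrable s' volume a b := by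
    intro a b
    rw [intervalIntegrable_iff]
    apply Measure.integrableOn_of_bounded (M := |s x| + M + C₂)
    · exact (measure_Ioc_lt_top).ne
    · exact hs'meas
    · exact ae_of_all _ (fun t => by rw [Real.norm_eq_abs]; exact hs'bound t)
  set G : ℝ → ℝ := fun y => ∫ t in (0:ℝ)..y, s' t with hGdef
  have hGcont : Continuous G := intervalIntegral.continuous_primitive hs'int 0
  set g : ℝ → ℝ := fun v => (k:ℝ) * ∫ t in (x - v/(k:ℝ))..(x + (1-v)/(k:ℝ)), s' t with hgdef
  have hgG : ∀ v : ℝ, g v = (k:ℝ) * (G (x + (1-v)/(k:ℝ)) - G (x - v/(k:ℝ))) := by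
    intro v
    simp only [hgdef, hGdef]
    have h := intervalIntegral.integral_add_adjacent_intervals (hs'int 0 (x - v/(k:ℝ)))
      (hs'int (x - v/(k:ℝ)) (x + (1-v)/(k:ℝ)))
    rw [← h]
    ring
  have hgcont : Continuous g := by
    have e : g = fun v => (k:ℝ) * (G (x + (1-v)/(k:ℝ)) - G (x - v/(k:ℝ))) := funext hgG
    rw [e]
    fun_prop
  have hendpoints : ∀ v : ℝ, 0 ≤ v → v ≤ 1 →
      0 ≤ x - v/(k:ℝ) ∧ x + (1-v)/(k:ℝ) ≤ 1 ∧ x - v/(k:ℝ) ≤ x + (1-v)/(k:ℝ) := by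
    intro v hv0 hv1
    have e1 : v/(k:ℝ) ≤ (k:ℝ)⁻¹ := by
      rw [← one_div]
      exact (div_le_div_iff_of_pos_right hkpos).mpr hv1
    have e2 : (1-v)/(k:ℝ) ≤ (k:ℝ)⁻¹ := by
      rw [← one_div]
      exact (div_le_div_iff_of_pos_right hkpos).mpr (by linarith)
    have e3 : 0 ≤ v/(k:ℝ) := div_nonneg hv0 hkpos.le
    have e4 : 0 ≤ (1-v)/(k:ℝ) := div_nonneg (by linarith) hkpos.le
    exact ⟨by linarith, by linarith, by linarith⟩
  have hproj : ∀ T ∈ Set.Ico (0:ℝ) 1, toyProj k s T x = g (Int.fract ((k:ℝ)*x + T)) := by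
    intro T hT
    set v := Int.fract ((k:ℝ)*x + T) with hvdef
    have hv0 : 0 ≤ v := Int.fract_nonneg _
    have hv1 : v < 1 := Int.fract_lt_one _
    obtain ⟨hA0, hB1, hab⟩ := hendpoints v hv0 hv1.le
    have hfl : ((⌊(k:ℝ)*x + T⌋ : ℝ)) = (k:ℝ)*x + T - v := by
      rw [hvdef]
      exact_mod_cast (Int.self_sub_fract ((k:ℝ)*x + T)).symm
    have hA : toyA k T x = x - v/(k:ℝ) := by
      rw [toyA, hfl]
      have e : ((k:ℝ)*x + T - v - T)/(k:ℝ) = x - v/(k:ℝ) := by field_simp; ring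
      rw [e]
      exact max_eq_right hA0
    have hB : toyB k T x = x + (1-v)/(k:ℝ) := by
      rw [toyB, hfl]
      have e : ((k:ℝ)*x + T - v + 1 - T)/(k:ℝ) = x + (1-v)/(k:ℝ) := by field_simp; ring
      rw [e]
      exact min_eq_right hB1
    have hsub : Set.Ico (x - v/(k:ℝ)) (x + (1-v)/(k:ℝ)) ⊆ Set.Ico (0:ℝ) 1 :=
      fun t ht => ⟨le_trans hA0 ht.1, lt_of_lt_of_le ht.2 hB1⟩
    simp only [toyProj]
    rw [hA, hB]
    have e1 : ∫ t in Set.Ico (x - v/(k:ℝ)) (x + (1-v)/(k:ℝ)), s t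
        = ∫ t in Set.Ico (x - v/(k:ℝ)) (x + (1-v)/(k:ℝ)), s' t :=
      setIntegral_congr_fun measurableSet_Ico (fun t ht => ((hs'eq t (hsub ht))).symm)
    rw [e1, icoIntegral_eq _ hab]
    have e2 : x + (1-v)/(k:ℝ) - (x - v/(k:ℝ)) = ((k:ℝ))⁻¹ := by field_simp; ring
    rw [e2, div_eq_mul_inv, inv_inv]
    simp only [hgdef]
    ring
  set ρ : ℝ → ℝ := fun v => g v - s x - ds x/(k:ℝ) * (1/2 - v) with hρdef
  have hρcont : Continuous ρ := by
    simp only [hρdef]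
    exact (hgcont.sub continuous_const).sub
      (continuous_const.mul (continuous_const.sub continuous_id'))
  have hρbound : ∀ v ∈ Set.Icc (0:ℝ) 1, |ρ v| ≤ C₂ * ((1-v)^3 + v^3) / (3*(k:ℝ)^2) := by
    intro v hv
    obtain ⟨hA0, hB1, hab⟩ := hendpoints v hv.1 hv.2
    set A := x - v/(k:ℝ) with hAdef
    set B := x + (1-v)/(k:ℝ) with hBdef
    have hBA : B - A = (k:ℝ)⁻¹ := by rw [hAdef, hBdef]; field_simp; ring
    have hBx : B - x = (1-v)/(k:ℝ) := by rw [hBdef]; ring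
    have hAx : A - x = -(v/(k:ℝ)) := by rw [hAdef]; ring
    have haffint : IntervalIntegrable (fun t => s x + ds x * (t - x)) volume A B :=
      (continuous_const.add (continuous_const.mul
        (continuous_id'.sub continuous_const))).intervalIntegrable _ _
    have hlin : ∫ t in A..B, (t - x) = ((B-x)^2 - (A-x)^2)/2 := by
      rw [intervalIntegral.integral_comp_sub_right (fun u => u) x, integral_id]
    have haff : ∫ t in A..B, (s x + ds x * (t-x))
        = s x * (B-A) + ds x * ((B-x)^2-(A-x)^2)/2 := by
      rw [intervalIntegral.integral_add (g := fun t => ds x * (t - x)) intervalIntegrable_const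
        ((continuous_const.mul (continuous_id'.sub continuous_const)).intervalIntegrable _ _),
        intervalIntegral.integral_const, intervalIntegral.integral_const_mul, hlin]
      simp only [smul_eq_mul]
      ring
    have hIsub : ∫ t in A..B, (s' t - s x - ds x*(t-x))
        = (∫ t in A..B, s' t) - (s x*(B-A) + ds x*((B-x)^2-(A-x)^2)/2) := by
      have e : (fun t => s' t - s x - ds x*(t-x)) = fun t => s' t - (s x + ds x*(t-x)) :=
        funext fun t => by ring
      rw [e, intervalIntegral.integral_sub (hs'int A B) haffint, haff]
    have hrep : ρ v = (k:ℝ) * ∫ t in A..B, (s' t - s x - ds x*(t-x)) := by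
      rw [hIsub]
      simp only [hρdef, hgdef]
      rw [← hAdef, ← hBdef, hBx, hAx, hBA]
      field_simp
      ring
    have hptb : ∀ t ∈ Set.Ioo A B, |s' t - s x - ds x*(t-x)| ≤ C₂*(t-x)^2 := by
      intro t ht
      have htI : t ∈ Set.Ico (0:ℝ) 1 := ⟨le_trans hA0 ht.1.le, lt_of_lt_of_le ht.2 hB1⟩
      rw [hs'eq t htI]
      exact hH2a t htI x hxIco
    have hrint : IntervalIntegrable (fun t => s' t - s x - ds x*(t-x)) volume A B := by
      have e : (fun t => s' t - s x - ds x*(t-x)) = fun t => s' t - (s x + ds x*(t-x)) :=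
        funext fun t => by ring
      rw [e]
      exact (hs'int A B).sub haffint
    have habs : |∫ t in A..B, (s' t - s x - ds x*(t-x))|
        ≤ ∫ t in A..B, |s' t - s x - ds x*(t-x)| := by
      simpa only [Real.norm_eq_abs] using
        intervalIntegral.norm_integral_le_integral_norm
          (f := fun t => s' t - s x - ds x*(t-x)) hab
    have hmono : ∫ t in A..B, |s' t - s x - ds x*(t-x)| ≤ ∫ t in A..B, C₂*(t-x)^2 := by
      rw [intervalIntegral.integral_of_le hab, intervalIntegral.integral_of_le hab,
        integral_Ioc_eq_integral_Ioo, integral_Ioc_eq_integral_Ioo]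
      exact setIntegral_mono_on (hrint.abs.1.mono_set Set.Ioo_subset_Ioc_self)
        (((continuous_const.mul ((continuous_id'.sub continuous_const).pow 2)).intervalIntegrable
          A B).1.mono_set Set.Ioo_subset_Ioc_self)
        measurableSet_Ioo hptb
    have hval : ∫ t in A..B, C₂*(t-x)^2 = C₂ * (((1-v)/(k:ℝ))^3 + (v/(k:ℝ))^3)/3 := by
      rw [intervalIntegral.integral_const_mul,
        intervalIntegral.integral_comp_sub_right (fun u => u^2) x, integral_pow, hBx, hAx]
      norm_num
      ring
    calc |ρ v| = (k:ℝ) * |∫ t in A..B, (s' t - s x - ds x*(t-x))| := by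
          rw [hrep, abs_mul, abs_of_pos hkpos]
      _ ≤ (k:ℝ) * (C₂ * (((1-v)/(k:ℝ))^3 + (v/(k:ℝ))^3)/3) := by
          apply mul_le_mul_of_nonneg_left _ hkpos.le
          rw [← hval]
          exact le_trans habs hmono
      _ = C₂ * ((1-v)^3 + v^3) / (3*(k:ℝ)^2) := by field_simp
  have I1 : ∫ v in (0:ℝ)..1, (1/2 - v) = 0 := by
    rw [intervalIntegral.integral_sub intervalIntegrable_const
      intervalIntegral.intervalIntegrable_id, integral_id, intervalIntegral.integral_const]
    norm_num
  have I2 : ∫ v in (0:ℝ)..1, (1/2 - v)^2 = 1/12 := by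
    rw [intervalIntegral.integral_comp_sub_left (fun u => u^2) (1/2), integral_pow]
    norm_num
  have I3 : ∫ v in (0:ℝ)..1, ((1-v)^3 + v^3) = 1/2 := by
    rw [intervalIntegral.integral_add (f := fun v => (1-v)^3) (g := fun v => v^3)
      (((continuous_const.sub continuous_id').pow 3).intervalIntegrable _ _)
      ((continuous_pow 3).intervalIntegrable _ _),
      intervalIntegral.integral_comp_sub_left (fun u => u^3) 1, integral_pow, integral_pow]
    norm_num
  set μ := ∫ T in Set.Ico (0:ℝ) 1, toyProj k s T x with hμdef
  have hμg : μ = ∫ v in (0:ℝ)..1, g v := by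
    rw [hμdef, setIntegral_congr_fun measurableSet_Ico (fun T hT => hproj T hT),
      integral_fract_comp g ((k:ℝ)*x), icoIntegral_eq _ zero_le_one]
  set I := ∫ v in (0:ℝ)..1, ρ v with hIdef
  have hlinint : IntervalIntegrable (fun v => ds x/(k:ℝ)*(1/2 - v)) volume 0 1 :=
    (continuous_const.mul (continuous_const.sub continuous_id')).intervalIntegrable _ _
  have hμval : μ = s x + I := by
    rw [hμg]
    have e : ∀ v ∈ Set.uIcc (0:ℝ) 1, g v = (s x + ds x/(k:ℝ)*(1/2 - v)) + ρ v := fun v _ => by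
      simp only [hρdef]; ring
    rw [intervalIntegral.integral_congr e,
      intervalIntegral.integral_add (intervalIntegrable_const.add hlinint)
        (hρcont.intervalIntegrable _ _),
      intervalIntegral.integral_add intervalIntegrable_const hlinint,
      intervalIntegral.integral_const_mul, I1, intervalIntegral.integral_const]
    simp [hIdef]
  have hIbound : |I| ≤ C₂/(6*(k:ℝ)^2) := by
    have h1 : |I| ≤ ∫ v in (0:ℝ)..1, |ρ v| := by
      simpa only [Real.norm_eq_abs] using
        intervalIntegral.norm_integral_le_integral_norm (f := ρ) zero_le_one
    have h2 : ∫ v in (0:ℝ)..1, |ρ v| ≤ ∫ v in (0:ℝ)..1, C₂ * ((1-v)^3 + v^3) / (3*(k:ℝ)^2) :=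
      intervalIntegral.integral_mono_on zero_le_one (hρcont.abs.intervalIntegrable _ _)
        (by apply Continuous.intervalIntegrable; fun_prop) hρbound
    have h3 : ∫ v in (0:ℝ)..1, C₂ * ((1-v)^3 + v^3) / (3*(k:ℝ)^2) = C₂/(6*(k:ℝ)^2) := by
      have e : (fun v => C₂ * ((1-v)^3 + v^3) / (3*(k:ℝ)^2))
          = fun v => (C₂/(3*(k:ℝ)^2)) * ((1-v)^3 + v^3) := funext fun v => by ring
      rw [e, intervalIntegral.integral_const_mul, I3]
      ring
    linarith
  have part1 : (s x - μ)^2 ≤ C₂^2/(36*(k:ℝ)^4) := by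
    have e : s x - μ = -I := by rw [hμval]; ring
    have h1 : |I|^2 ≤ (C₂/(6*(k:ℝ)^2))^2 := pow_le_pow_left₀ (abs_nonneg I) hIbound 2
    rw [sq_abs] at h1
    calc (s x - μ)^2 = I^2 := by rw [e]; ring
      _ ≤ (C₂/(6*(k:ℝ)^2))^2 := h1
      _ = C₂^2/(36*(k:ℝ)^4) := by ring
  have hVg : (∫ T in Set.Ico (0:ℝ) 1, (toyProj k s T x - μ)^2)
      = ∫ v in (0:ℝ)..1, (g v - μ)^2 := by
    have e : Set.EqOn (fun T => (toyProj k s T x - μ)^2)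
        (fun T => (fun v => (g v - μ)^2) (Int.fract ((k:ℝ)*x + T))) (Set.Ico (0:ℝ) 1) := by
      intro T hT
      simp only [hproj T hT]
    rw [setIntegral_congr_fun measurableSet_Ico e,
      integral_fract_comp (fun v => (g v - μ)^2) ((k:ℝ)*x), icoIntegral_eq _ zero_le_one]
  have hq : ∫ v in (0:ℝ)..1, (ds x)^2*(1/2-v)^2/(k:ℝ)^2 = (ds x)^2/(12*(k:ℝ)^2) := by
    have e : (fun v => (ds x)^2*(1/2-v)^2/(k:ℝ)^2)
        = fun v => ((ds x)^2/(k:ℝ)^2) * (1/2-v)^2 := funext fun v => by ring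
    rw [e, intervalIntegral.integral_const_mul, I2]
    ring
  have hρb2 : ∀ v ∈ Set.Icc (0:ℝ) 1, |ρ v| ≤ C₂/(3*(k:ℝ)^2) := by
    intro v hv
    refine le_trans (hρbound v hv) ?_
    have h1 : (1-v)^3 + v^3 ≤ 1 := by nlinarith [mul_nonneg hv.1 (sub_nonneg.mpr hv.2)]
    calc C₂ * ((1-v)^3 + v^3) / (3*(k:ℝ)^2) ≤ C₂ * 1 / (3*(k:ℝ)^2) := by
          gcongr
      _ = C₂/(3*(k:ℝ)^2) := by ring
  have hpt : ∀ v ∈ Set.Icc (0:ℝ) 1,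
      |(g v - μ)^2 - (ds x)^2*(1/2-v)^2/(k:ℝ)^2|
        ≤ M*C₂/(2*(k:ℝ)^3) + C₂^2/(4*(k:ℝ)^4) := by
    intro v hv
    have hBb : |ρ v - I| ≤ C₂/(2*(k:ℝ)^2) := by
      have h1 := hρb2 v hv
      have h2 : |ρ v - I| ≤ |ρ v| + |I| := abs_sub _ _
      have h3 : C₂/(3*(k:ℝ)^2) + C₂/(6*(k:ℝ)^2) = C₂/(2*(k:ℝ)^2) := by
        field_simp
        ring
      linarith [hIbound]
    have hAb : |ds x/(k:ℝ)*(1/2 - v)| ≤ M/(2*(k:ℝ)) := by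
      rw [abs_mul, abs_div, abs_of_pos hkpos]
      have h1 : |1/2 - v| ≤ 1/2 := by
        rw [abs_le]
        constructor
        · linarith [hv.2]
        · linarith [hv.1]
      have h2 : |ds x| ≤ M := hM x hxIco
      calc |ds x|/(k:ℝ) * |1/2-v| ≤ M/(k:ℝ) * (1/2) := by
            exact mul_le_mul ((div_le_div_iff_of_pos_right hkpos).mpr h2) h1 (abs_nonneg _) (div_nonneg hMnn hkpos.le)
        _ = M/(2*(k:ℝ)) := by ring
    have key : (g v - μ)^2 - (ds x)^2*(1/2-v)^2/(k:ℝ)^2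
        = 2*(ds x/(k:ℝ)*(1/2-v))*(ρ v - I) + (ρ v - I)^2 := by
      have e : g v - μ = ds x/(k:ℝ)*(1/2-v) + (ρ v - I) := by
        rw [hμval]
        simp only [hρdef]
        ring
      rw [e]
      field_simp
      ring
    rw [key]
    calc |2*(ds x/(k:ℝ)*(1/2-v))*(ρ v - I) + (ρ v - I)^2|
        ≤ |2*(ds x/(k:ℝ)*(1/2-v))*(ρ v - I)| + |(ρ v - I)^2| := abs_add_le _ _
      _ = 2 * |ds x/(k:ℝ)*(1/2-v)| * |ρ v - I| + |ρ v - I|^2 := by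
          rw [abs_mul, abs_mul, abs_two, abs_of_nonneg (sq_nonneg (ρ v - I)), sq_abs]
      _ ≤ 2*(M/(2*(k:ℝ)))*(C₂/(2*(k:ℝ)^2)) + (C₂/(2*(k:ℝ)^2))^2 := by
          have h4 : |ρ v - I|^2 ≤ (C₂/(2*(k:ℝ)^2))^2 :=
            pow_le_pow_left₀ (abs_nonneg _) hBb 2
          have h5 : 2 * |ds x/(k:ℝ)*(1/2-v)| * |ρ v - I| ≤ 2*(M/(2*(k:ℝ)))*(C₂/(2*(k:ℝ)^2)) := by
            apply mul_le_mul (by linarith [hAb]) hBb (abs_nonneg _)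
            have : (0:ℝ) ≤ M/(2*(k:ℝ)) := div_nonneg hMnn (by positivity)
            linarith
          linarith
      _ = M*C₂/(2*(k:ℝ)^3) + C₂^2/(4*(k:ℝ)^4) := by
          field_simp
          ring
  have hcont1 : Continuous fun v => (g v - μ)^2 := (hgcont.sub continuous_const).pow 2
  have hcont2 : Continuous fun v => (ds x)^2*(1/2-v)^2/(k:ℝ)^2 :=
    (continuous_const.mul ((continuous_const.sub continuous_id').pow 2)).div_const _
  have part2core : |(∫ T in Set.Ico (0:ℝ) 1, (toyProj k s T x - μ)^2) - (ds x)^2/(12*(k:ℝ)^2)|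
      ≤ M*C₂/(2*(k:ℝ)^3) + C₂^2/(4*(k:ℝ)^4) := by
    rw [hVg, ← hq,
      ← intervalIntegral.integral_sub (hcont1.intervalIntegrable _ _)
        (hcont2.intervalIntegrable _ _)]
    have h1 : |∫ v in (0:ℝ)..1, ((g v - μ)^2 - (ds x)^2*(1/2-v)^2/(k:ℝ)^2)|
        ≤ ∫ v in (0:ℝ)..1, |(g v - μ)^2 - (ds x)^2*(1/2-v)^2/(k:ℝ)^2| := by
      exact intervalIntegral.abs_integral_le_integral_abs
          (f := fun v => (g v - μ)^2 - (ds x)^2*(1/2-v)^2/(k:ℝ)^2) zero_le_one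
    have h2 : ∫ v in (0:ℝ)..1, |(g v - μ)^2 - (ds x)^2*(1/2-v)^2/(k:ℝ)^2|
        ≤ ∫ v in (0:ℝ)..1, (M*C₂/(2*(k:ℝ)^3) + C₂^2/(4*(k:ℝ)^4)) :=
      intervalIntegral.integral_mono_on zero_le_one
        ((hcont1.sub hcont2).abs.intervalIntegrable _ _) intervalIntegrable_const hpt
    rw [intervalIntegral.integral_const, smul_eq_mul] at h2
    have h3 : ((1:ℝ) - 0) * (M*C₂/(2*(k:ℝ)^3) + C₂^2/(4*(k:ℝ)^4))
        = M*C₂/(2*(k:ℝ)^3) + C₂^2/(4*(k:ℝ)^4) := by ring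
    rw [h3] at h2
    linarith
  have hfinal : M*C₂/(2*(k:ℝ)^3) + C₂^2/(4*(k:ℝ)^4) ≤ (2*M*C₂ + C₂^2)/(k:ℝ)^3 := by
    have hk3 : (0:ℝ) < (k:ℝ)^3 := by positivity
    have e1 : M*C₂/(2*(k:ℝ)^3) ≤ 2*M*C₂/(k:ℝ)^3 := by
      rw [div_le_div_iff₀ (by positivity) hk3]
      nlinarith [mul_nonneg (mul_nonneg hMnn hC₂.le) hk3.le]
    have e2 : C₂^2/(4*(k:ℝ)^4) ≤ C₂^2/(k:ℝ)^3 := by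
      rw [div_le_div_iff₀ (by positivity) hk3]
      have h := mul_nonneg (mul_nonneg (sq_nonneg C₂) hk3.le)
        (show (0:ℝ) ≤ 4*(k:ℝ) - 1 by linarith)
      nlinarith [h]
    have e3 : 2*M*C₂/(k:ℝ)^3 + C₂^2/(k:ℝ)^3 = (2*M*C₂ + C₂^2)/(k:ℝ)^3 := by ring
    linarith
  exact ⟨part1, le_trans part2core hfinal⟩
end

section
/- Let k ≥ 2 and assume (H3a). Then for every x ∈ [1/k, 1 − 1/k]: |𝓑∞(x) − (s″(x))²/(144 k⁴)| ≤ 3C₃(‖s″‖_∞ + 3C₃/2)/(4 k⁵). -/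
open MeasureTheory

lemma integral_Ico_eq_Ioc' (f : ℝ → ℝ) (x y : ℝ) :
    ∫ t in Set.Ico x y, f t = ∫ t in Set.Ioc x y, f t :=
  (MeasureTheory.integral_Icc_eq_integral_Ico (f := f)).symm.trans
    MeasureTheory.integral_Icc_eq_integral_Ioc

lemma integral_quadratic' (A B C p q : ℝ) :
    ∫ u in p..q, (A + B*u + C*u^2) = A*(q-p) + B*(q^2-p^2)/2 + C*(q^3-p^3)/3 := by
  have h1 : IntervalIntegrable (fun _ : ℝ => A) volume p q := intervalIntegrable_const
  have h2 : IntervalIntegrable (fun u : ℝ => B*u) volume p q :=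
    (continuous_const.mul continuous_id).intervalIntegrable _ _
  have h3 : IntervalIntegrable (fun u : ℝ => C*u^2) volume p q :=
    (continuous_const.mul (continuous_pow 2)).intervalIntegrable _ _
  rw [intervalIntegral.integral_add (h1.add h2) h3, intervalIntegral.integral_add h1 h2,
    intervalIntegral.integral_const, intervalIntegral.integral_const_mul,
    intervalIntegral.integral_const_mul, integral_id, integral_pow]
  push_cast
  simp only [smul_eq_mul]
  ring

set_option maxHeartbeats 1000000 in
/-- **Tight bias estimate in the toy model under (H3a).**
Assume `s` is twice differentiable on `[0,1)` with first and second derivatives `ds`, `dds`,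
`|s t − s y − ds y (t−y) − (1/2) dds y (t−y)²| ≤ C₃ |t−y|³` on `[0,1)` and `|dds| ≤ M₂` on
`[0,1)`.  Then for `k ≥ 2` and `x ∈ [1/k, 1−1/k]`:
`|𝓑∞(x) − (dds x)²/(144 k⁴)| ≤ 3C₃(M₂ + 3C₃/2)/(4k⁵)`. -/
theorem toy_model_bias_H3a
    (k : ℕ) (hk : 2 ≤ k)
    (s ds dds : ℝ → ℝ) (C₃ M₂ : ℝ) (hC₃ : 0 < C₃)
    (hdiff : ∀ y ∈ Set.Ico (0 : ℝ) 1, HasDerivWithinAt s (ds y) (Set.Ico (0 : ℝ) 1) y)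
    (hdiff2 : ∀ y ∈ Set.Ico (0 : ℝ) 1, HasDerivWithinAt ds (dds y) (Set.Ico (0 : ℝ) 1) y)
    (hH3a : ∀ t ∈ Set.Ico (0 : ℝ) 1, ∀ y ∈ Set.Ico (0 : ℝ) 1,
        |s t - s y - ds y * (t - y) - (1 / 2) * dds y * (t - y) ^ 2| ≤ C₃ * |t - y| ^ 3)
    (hM₂ : ∀ y ∈ Set.Ico (0 : ℝ) 1, |dds y| ≤ M₂)
    (x : ℝ) (hx : x ∈ Set.Icc ((k : ℝ)⁻¹) (1 - (k : ℝ)⁻¹)) :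
    |(s x - ∫ T in Set.Ico (0 : ℝ) 1, toyProj k s T x) ^ 2
        - (dds x) ^ 2 / (144 * (k : ℝ) ^ 4)|
      ≤ 3 * C₃ * (M₂ + 3 * C₃ / 2) / (4 * (k : ℝ) ^ 5) := by
  set K : ℝ := (k : ℝ) with hKdef
  clear_value K
  have hK2 : (2:ℝ) ≤ K := by rw [hKdef]; exact_mod_cast hk
  have hK0 : (0:ℝ) < K := by linarith
  have hKne : K ≠ 0 := ne_of_gt hK0
  obtain ⟨hx1, hx2⟩ := hx
  have hKinv : 0 < K⁻¹ := by positivity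
  have hKinv1 : K⁻¹ * K = 1 := inv_mul_cancel₀ hKne
  have hx0 : 0 < x := lt_of_lt_of_le hKinv hx1
  have hxlt1 : x < 1 := lt_of_le_of_lt hx2 (by linarith)
  have hxI : x ∈ Set.Ico (0:ℝ) 1 := ⟨hx0.le, hxlt1⟩
  -- continuity and integrability of s on [0,1)
  have hcont : ContinuousOn s (Set.Ico (0:ℝ) 1) := fun y hy =>
    (hdiff y hy).continuousWithinAt
  have hsInt : IntegrableOn s (Set.Ico (0:ℝ) 1) := by
    refine Integrable.mono' (g := fun _ => |s x| + |ds x| + |dds x| + C₃)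
      (integrableOn_const measure_Ico_lt_top.ne)
      (hcont.aestronglyMeasurable measurableSet_Ico) ?_
    filter_upwards [ae_restrict_mem measurableSet_Ico] with t ht
    have h := hH3a t ht x hxI
    have habs : |t - x| ≤ 1 := by
      rw [abs_le]; exact ⟨by linarith [ht.1], by linarith [ht.2]⟩
    have hp1 : |t - x| ^ 3 ≤ 1 := by
      calc |t - x| ^ 3 ≤ 1 ^ 3 := pow_le_pow_left₀ (abs_nonneg _) habs 3
        _ = 1 := one_pow 3
    have hp2 : |t - x| ^ 2 ≤ 1 := by
      calc |t - x| ^ 2 ≤ 1 ^ 2 := pow_le_pow_left₀ (abs_nonneg _) habs 2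
        _ = 1 := one_pow 2
    have e1 : |ds x * (t - x)| ≤ |ds x| := by
      rw [abs_mul]; exact mul_le_of_le_one_right (abs_nonneg _) habs
    have e2 : |1 / 2 * dds x * (t - x) ^ 2| ≤ |dds x| := by
      rw [abs_mul, abs_mul, abs_pow]
      calc |(1:ℝ)/2| * |dds x| * |t - x| ^ 2 ≤ 1 * |dds x| * 1 := by
            apply mul_le_mul
            · apply mul_le_mul _ le_rfl (abs_nonneg _) zero_le_one
              rw [abs_of_pos]; norm_num; norm_num
            · exact hp2
            · positivity
            · positivity
        _ = |dds x| := by ring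
    have e3 : C₃ * |t - x| ^ 3 ≤ C₃ := mul_le_of_le_one_right hC₃.le hp1
    have hst : s t = (s t - s x - ds x * (t - x) - 1 / 2 * dds x * (t - x) ^ 2)
        + s x + ds x * (t - x) + 1 / 2 * dds x * (t - x) ^ 2 := by ring
    rw [Real.norm_eq_abs, hst]
    calc |(s t - s x - ds x * (t - x) - 1 / 2 * dds x * (t - x) ^ 2)
          + s x + ds x * (t - x) + 1 / 2 * dds x * (t - x) ^ 2|
        ≤ |(s t - s x - ds x * (t - x) - 1 / 2 * dds x * (t - x) ^ 2)
          + s x + ds x * (t - x)| + |1 / 2 * dds x * (t - x) ^ 2| := abs_add_le _ _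
      _ ≤ (|(s t - s x - ds x * (t - x) - 1 / 2 * dds x * (t - x) ^ 2) + s x|
          + |ds x * (t - x)|) + |1 / 2 * dds x * (t - x) ^ 2| := by gcongr; exact abs_add_le _ _
      _ ≤ ((|s t - s x - ds x * (t - x) - 1 / 2 * dds x * (t - x) ^ 2| + |s x|)
          + |ds x * (t - x)|) + |1 / 2 * dds x * (t - x) ^ 2| := by gcongr; exact abs_add_le _ _
      _ ≤ ((C₃ + |s x|) + |ds x|) + |dds x| := by
          gcongr
          exact h.trans e3
      _ = |s x| + |ds x| + |dds x| + C₃ := by ring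
  have hsIntIcc : IntegrableOn s (Set.Icc (0:ℝ) 1) :=
    (integrableOn_Icc_iff_integrableOn_Ico).2 hsInt
  -- cell endpoints
  set a : ℝ → ℝ := fun u => x - u / K with ha
  set b : ℝ → ℝ := fun u => x + (1 - u) / K with hb
  have hba : ∀ u, b u - a u = 1 / K := by intro u; simp only [ha, hb]; ring
  have hbagt : ∀ u, a u < b u := by
    intro u
    rw [← sub_pos, hba u]
    positivity
  have ha0 : ∀ u ∈ Set.Icc (0:ℝ) 1, 0 ≤ a u := by
    intro u hu
    simp only [ha]
    have h1 : u / K ≤ 1 / K := by gcongr; exact hu.2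
    rw [one_div] at h1
    linarith
  have hb1 : ∀ u ∈ Set.Icc (0:ℝ) 1, b u ≤ 1 := by
    intro u hu
    simp only [hb]
    have h1 : (1 - u) / K ≤ 1 / K := by gcongr; linarith [hu.1]
    rw [one_div] at h1
    linarith
  have hIcoSub : ∀ u ∈ Set.Icc (0:ℝ) 1, Set.Ico (a u) (b u) ⊆ Set.Ico (0:ℝ) 1 := by
    intro u hu t ht
    exact ⟨le_trans (ha0 u hu) ht.1, lt_of_lt_of_le ht.2 (hb1 u hu)⟩
  -- the projection as a function of the fractional offset
  set φ : ℝ → ℝ := fun u => K * ∫ t in Set.Ico (a u) (b u), s t with hφ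
  have hproj : ∀ T ∈ Set.Ico (0:ℝ) 1, toyProj k s T x = φ (Int.fract (K * x + T)) := by
    intro T hT
    set u := Int.fract (K * x + T) with hu
    have hu0 : 0 ≤ u := Int.fract_nonneg _
    have hu1 : u < 1 := Int.fract_lt_one _
    have hfl : ((⌊K * x + T⌋ : ℤ) : ℝ) = K * x + T - u := by
      rw [hu]; rw [Int.self_sub_fract]
    have hxK : 1 ≤ K * x := by
      calc (1:ℝ) = K * K⁻¹ := (mul_inv_cancel₀ hKne).symm
        _ ≤ K * x := by gcongr
    have hA : toyA k T x = a u := by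
      unfold toyA
      rw [← hKdef, hfl, max_eq_right]
      · simp only [ha]; field_simp; ring
      · apply div_nonneg _ hK0.le
        linarith
    have hB : toyB k T x = b u := by
      unfold toyB
      rw [← hKdef, hfl, min_eq_right]
      · simp only [hb]; field_simp; ring
      · rw [div_le_one hK0]
        have : x ≤ 1 - K⁻¹ := hx2
        have hxK' : K * x ≤ K - 1 := by
          have := mul_le_mul_of_nonneg_left hx2 hK0.le
          rw [mul_sub, mul_inv_cancel₀ hKne] at this
          linarith
        linarith
    unfold toyProj
    rw [hA, hB, hba, one_div, div_eq_mul_inv, inv_inv, hφ, mul_comm]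
  -- rewrite the outer integral
  have houter : (∫ T in Set.Ico (0:ℝ) 1, toyProj k s T x) = ∫ u in (0:ℝ)..1, φ u := by
    have hψper : Function.Periodic (fun y => φ (Int.fract y)) 1 := fun y => by
      simp [Int.fract_add_one]
    calc (∫ T in Set.Ico (0:ℝ) 1, toyProj k s T x)
        = ∫ T in Set.Ico (0:ℝ) 1, φ (Int.fract (K * x + T)) :=
          setIntegral_congr_fun measurableSet_Ico hproj
      _ = ∫ T in Set.Ioc (0:ℝ) 1, φ (Int.fract (K * x + T)) := integral_Ico_eq_Ioc' _ _ _
      _ = ∫ T in (0:ℝ)..1, φ (Int.fract (K * x + T)) :=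
          (intervalIntegral.integral_of_le (by norm_num)).symm
      _ = ∫ y in (K*x + 0)..(K*x + 1), φ (Int.fract y) :=
          intervalIntegral.integral_comp_add_left (fun y => φ (Int.fract y)) (K*x)
      _ = ∫ y in (K*x)..(K*x + 1), φ (Int.fract y) := by norm_num
      _ = ∫ y in (0:ℝ)..(0 + 1 : ℝ), φ (Int.fract y) := hψper.intervalIntegral_add_eq (K*x) 0
      _ = ∫ y in (0:ℝ)..1, φ (Int.fract y) := by norm_num
      _ = ∫ u in (0:ℝ)..1, φ u := by
          apply intervalIntegral.integral_congr_ae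
          have h1 : ∀ᵐ (y:ℝ), y ∉ ({1} : Set ℝ) :=
            measure_eq_zero_iff_ae_notMem.mp (measure_singleton 1)
          filter_upwards [h1] with y hy hyI
          rw [Set.uIoc_of_le (by norm_num : (0:ℝ) ≤ 1)] at hyI
          have hy1 : y ≠ 1 := by simpa using hy
          have : Int.fract y = y :=
            Int.fract_eq_self.2 ⟨hyI.1.le, lt_of_le_of_ne hyI.2 hy1⟩
          rw [this]
  -- the quadratic approximation of φ
  set cA : ℝ := s x + ds x/(2*K) + dds x/(6*K^2) with hcA
  set cB : ℝ := -(ds x)/K - dds x/(2*K^2) with hcB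
  set cC : ℝ := dds x/(2*K^2) with hcC
  set P : ℝ → ℝ := fun u => cA + cB*u + cC*u^2 with hP
  have hρ : ∀ u ∈ Set.Icc (0:ℝ) 1, |φ u - P u| ≤ C₃ / K^3 := by
    intro u hu
    have hsub := hIcoSub u hu
    have hint_s : IntegrableOn s (Set.Ico (a u) (b u)) := hsInt.mono_set hsub
    set p : ℝ → ℝ := fun t => s x + ds x * (t - x) + 1/2 * dds x * (t - x)^2 with hp
    have hpcont : Continuous p := by
      simp only [hp]; fun_prop
    have hint_p : IntegrableOn p (Set.Ico (a u) (b u)) :=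
      (hpcont.integrableOn_Icc).mono_set Set.Ico_subset_Icc_self
    have hsplit : (∫ t in Set.Ico (a u) (b u), (s t - p t))
        = (∫ t in Set.Ico (a u) (b u), s t) - ∫ t in Set.Ico (a u) (b u), p t :=
      integral_sub hint_s hint_p
    -- value of the polynomial integral
    have hval : K * ∫ t in Set.Ico (a u) (b u), p t = P u := by
      have h1 : (∫ t in Set.Ico (a u) (b u), p t) = ∫ t in (a u)..(b u), p t := by
        rw [integral_Ico_eq_Ioc', intervalIntegral.integral_of_le (hbagt u).le]
      have h2 : (∫ t in (a u)..(b u), p t)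
          = ∫ y in (a u - x)..(b u - x), (s x + ds x * y + 1/2 * dds x * y^2) := by
        rw [← intervalIntegral.integral_comp_sub_right
          (fun y => s x + ds x * y + 1/2 * dds x * y^2) x]
      rw [h1, h2, integral_quadratic' (s x) (ds x) (1/2 * dds x) (a u - x) (b u - x)]
      simp only [ha, hb, hP, hcA, hcB, hcC]
      field_simp
      ring
    -- bound on the remainder
    have hrem : |∫ t in Set.Ico (a u) (b u), (s t - p t)| ≤ (C₃/K^3) * (1/K) := by
      have hbd : ∀ t ∈ Set.Ico (a u) (b u), ‖s t - p t‖ ≤ C₃/K^3 := by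
        intro t ht
        have htI := hsub ht
        have h := hH3a t htI x hxI
        have htx : |t - x| ≤ 1/K := by
          rw [abs_le]
          have h1 : a u ≤ t := ht.1
          have h2 : t < b u := ht.2
          have h3 : u / K ≤ 1 / K := by gcongr; exact hu.2
          have h4 : (1 - u) / K ≤ 1 / K := by gcongr; linarith [hu.1]
          constructor
          · simp only [ha] at h1; linarith
          · simp only [hb] at h2; linarith
        have htx3 : |t - x|^3 ≤ (1/K)^3 := pow_le_pow_left₀ (abs_nonneg _) htx 3
        rw [Real.norm_eq_abs]
        have heq : s t - p t = s t - s x - ds x * (t - x) - 1 / 2 * dds x * (t - x) ^ 2 := by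
          simp only [hp]; ring
        rw [heq]
        calc |s t - s x - ds x * (t - x) - 1 / 2 * dds x * (t - x) ^ 2|
            ≤ C₃ * |t - x|^3 := h
          _ ≤ C₃ * (1/K)^3 := by gcongr
          _ = C₃ / K^3 := by field_simp
      have hvol : (volume (Set.Ico (a u) (b u))).toReal = 1/K := by
        rw [Real.volume_Ico, ENNReal.toReal_ofReal (by linarith [hbagt u] : 0 ≤ b u - a u), hba]
      calc |∫ t in Set.Ico (a u) (b u), (s t - p t)|
          ≤ (C₃/K^3) * (volume (Set.Ico (a u) (b u))).toReal :=
            norm_setIntegral_le_of_norm_le_const measure_Ico_lt_top hbd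
        _ = (C₃/K^3) * (1/K) := by rw [hvol]
    have hφu : φ u - P u = K * ∫ t in Set.Ico (a u) (b u), (s t - p t) := by
      rw [hφ]
      simp only
      rw [hsplit, ← hval]
      ring
    rw [hφu, abs_mul, abs_of_pos hK0]
    calc K * |∫ t in Set.Ico (a u) (b u), (s t - p t)| ≤ K * ((C₃/K^3) * (1/K)) := by gcongr
      _ = C₃ / K^3 := by field_simp
  -- continuity of φ on [0,1]
  have hφcont : ContinuousOn φ (Set.Icc (0:ℝ) 1) := by
    set F : ℝ → ℝ := fun y => ∫ t in (0:ℝ)..y, s t with hF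
    have hFcont : ContinuousOn F (Set.Icc (0:ℝ) 1) := by
      have h := intervalIntegral.continuousOn_primitive_interval (a := (0:ℝ)) (b := 1)
        (μ := volume) (f := s) (by rwa [Set.uIcc_of_le (by norm_num : (0:ℝ) ≤ 1)])
      rwa [Set.uIcc_of_le (by norm_num : (0:ℝ) ≤ 1)] at h
    have hamem : ∀ u ∈ Set.Icc (0:ℝ) 1, a u ∈ Set.Icc (0:ℝ) 1 := by
      intro u hu
      exact ⟨ha0 u hu, le_trans (hbagt u).le (hb1 u hu)⟩
    have hbmem : ∀ u ∈ Set.Icc (0:ℝ) 1, b u ∈ Set.Icc (0:ℝ) 1 := by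
      intro u hu
      exact ⟨le_trans (ha0 u hu) (hbagt u).le, hb1 u hu⟩
    have hii : ∀ y ∈ Set.Icc (0:ℝ) 1, IntervalIntegrable s volume 0 y := by
      intro y hy
      apply IntegrableOn.intervalIntegrable
      rw [Set.uIcc_of_le hy.1]
      exact hsIntIcc.mono_set (Set.Icc_subset_Icc le_rfl hy.2)
    have hφeq : ∀ u ∈ Set.Icc (0:ℝ) 1, φ u = K * (F (b u) - F (a u)) := by
      intro u hu
      rw [hφ]
      simp only [hF]
      congr 1
      rw [integral_Ico_eq_Ioc', ← intervalIntegral.integral_of_le (hbagt u).le,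
        intervalIntegral.integral_interval_sub_left (hii (b u) (hbmem u hu))
          (hii (a u) (hamem u hu))]
    apply ContinuousOn.congr (f := fun u => K * (F (b u) - F (a u)))
    · apply ContinuousOn.mul continuousOn_const
      apply ContinuousOn.sub
      · exact hFcont.comp (by fun_prop) (fun u hu => hbmem u hu)
      · exact hFcont.comp (by fun_prop) (fun u hu => hamem u hu)
    · intro u hu; exact hφeq u hu
  -- integral of φ
  have hφint : IntervalIntegrable φ volume 0 1 :=
    (hφcont.mono (by rw [Set.uIcc_of_le (by norm_num : (0:ℝ) ≤ 1)])).intervalIntegrable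
  have hPint : IntervalIntegrable P volume 0 1 := by
    apply Continuous.intervalIntegrable
    simp only [hP]; fun_prop
  have hEbound : |(∫ u in (0:ℝ)..1, φ u) - (s x + dds x/(12*K^2))| ≤ C₃ / K^3 := by
    have h2 : (∫ u in (0:ℝ)..1, P u) = s x + dds x/(12*K^2) := by
      rw [hP]
      rw [show (∫ u in (0:ℝ)..1, cA + cB*u + cC*u^2)
          = cA*(1-0) + cB*(1^2-0^2)/2 + cC*(1^3-0^3)/3 from integral_quadratic' cA cB cC 0 1]
      simp only [hcA, hcB, hcC]
      field_simp
      ring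
    rw [← h2, ← intervalIntegral.integral_sub hφint hPint]
    have hbd : ∀ y ∈ Set.uIoc (0:ℝ) 1, ‖φ y - P y‖ ≤ C₃/K^3 := by
      intro y hy
      rw [Set.uIoc_of_le (by norm_num : (0:ℝ) ≤ 1)] at hy
      rw [Real.norm_eq_abs]
      exact hρ y ⟨hy.1.le, hy.2⟩
    have hnorm := intervalIntegral.norm_integral_le_of_norm_le_const hbd
    rw [Real.norm_eq_abs] at hnorm
    calc |∫ u in (0:ℝ)..1, (φ u - P u)| ≤ C₃/K^3 * |1 - 0| := hnorm
      _ = C₃ / K^3 := by norm_num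
  -- final arithmetic
  rw [houter]
  set I := ∫ u in (0:ℝ)..1, φ u with hI
  clear_value I
  set e := I - (s x + dds x/(12*K^2)) with he
  clear_value e
  have hsx : s x - I = -(dds x/(12*K^2)) - e := by rw [he]; ring
  rw [hsx]
  have hm : |dds x| ≤ M₂ := hM₂ x hxI
  have hM₂0 : 0 ≤ M₂ := (abs_nonneg _).trans hm
  have key : (-(dds x/(12*K^2)) - e)^2 - dds x^2/(144*K^4)
      = 2*(dds x/(12*K^2))*e + e^2 := by
    field_simp
    ring
  rw [key]
  have habs2 : |2*(dds x/(12*K^2))*e + e^2| ≤ 2*(M₂/(12*K^2))*(C₃/K^3) + (C₃/K^3)^2 := by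
    have he1 : |e| ≤ C₃/K^3 := hEbound
    calc |2*(dds x/(12*K^2))*e + e^2| ≤ |2*(dds x/(12*K^2))*e| + |e^2| := abs_add_le _ _
      _ = 2*(|dds x|/(12*K^2))*|e| + |e|^2 := by
          rw [abs_mul, abs_mul, abs_div, abs_pow,
            abs_of_pos (show (0:ℝ) < 12*K^2 by positivity), abs_two]
      _ ≤ 2*(M₂/(12*K^2))*(C₃/K^3) + (C₃/K^3)^2 := by
          have g1 : 2*(|dds x|/(12*K^2))*|e| ≤ 2*(M₂/(12*K^2))*(C₃/K^3) := by gcongr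
          have g2 : |e|^2 ≤ (C₃/K^3)^2 := pow_le_pow_left₀ (abs_nonneg e) he1 2
          exact add_le_add g1 g2
  refine habs2.trans ?_
  have hstep1 : (C₃/K^3)^2 ≤ C₃^2/(2*K^5) := by
    have hden : 2*K^5 ≤ (K^3)^2 := by
      have h1 : (K^3)^2 = K*K^5 := by ring
      rw [h1]
      exact mul_le_mul_of_nonneg_right hK2 (pow_pos hK0 5).le
    rw [div_pow, div_le_div_iff₀ (by positivity) (by positivity)]
    exact mul_le_mul_of_nonneg_left hden (sq_nonneg C₃)
  have hstep2 : 2*(M₂/(12*K^2))*(C₃/K^3) = M₂*C₃/(6*K^5) := by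
    field_simp
    ring
  rw [hstep2]
  have base : M₂*C₃/6 + C₃^2/2 ≤ 3*C₃*(M₂+3*C₃/2)/4 := by
    nlinarith [mul_nonneg hM₂0 hC₃.le, sq_nonneg C₃]
  calc M₂*C₃/(6*K^5) + (C₃/K^3)^2 ≤ M₂*C₃/(6*K^5) + C₃^2/(2*K^5) := by linarith [hstep1]
    _ = (M₂*C₃/6 + C₃^2/2)/K^5 := by ring
    _ ≤ (3*C₃*(M₂+3*C₃/2)/4)/K^5 := (div_le_div_iff_of_pos_right (by positivity)).mpr base
    _ = 3*C₃*(M₂+3*C₃/2)/(4*K^5) := by ring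
end

section
/- Let k ≥ 1, x ∈ (0,1), and in the PURF model set α = x − A_{U,x} and β = B_{U,x} − x. Writing P_j(x) := x^j + (1−x)^j, one has: E[α − β] = (x^{k+1} − (1−x)^{k+1})/(k+1); E[αβ] = (1 − P_{k+2}(x))/((k+1)(k+2)); and E[α² + β²] = 4/((k+1)(k+2)) − 2((1−x)x^{k+1} + x(1−x)^{k+1})/(k+1) − 2 P_{k+2}(x)/((k+1)(k+2)). -/
open MeasureTheory

/-- In the PURF model with split points `ξs : Fin k → ℝ`, the left endpoint of the cell
containing `x`: `A_{U,x} = max{ξ_i : ξ_i ≤ x}`, with the convention `max ∅ = 0`. -/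
noncomputable def purfA {k : ℕ} (x : ℝ) (ξs : Fin k → ℝ) : ℝ :=
  sSup (insert 0 {y : ℝ | (∃ i : Fin k, ξs i = y) ∧ y ≤ x})

/-- In the PURF model, the right endpoint of the cell containing `x`:
`B_{U,x} = min{ξ_i : ξ_i > x}`, with the convention `min ∅ = 1`. -/
noncomputable def purfB {k : ℕ} (x : ℝ) (ξs : Fin k → ℝ) : ℝ :=
  sInf (insert 1 {y : ℝ | (∃ i : Fin k, ξs i = y) ∧ x < y})

open Set

namespace PurfAux

variable {k : ℕ}

/-- the `i`-th candidate for the max defining `purfA`. -/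
noncomputable def termA (x : ℝ) (ξs : Fin k → ℝ) (i : Fin k) : ℝ := if ξs i ≤ x then max (ξs i) 0 else 0

noncomputable def termB (x : ℝ) (ξs : Fin k → ℝ) (i : Fin k) : ℝ := if x < ξs i then min (ξs i) 1 else 1

lemma purfA_eq [NeZero k] (x : ℝ) (ξs : Fin k → ℝ) :
    purfA x ξs = Finset.univ.sup' Finset.univ_nonempty (termA x ξs) := by
  have hne : (Finset.univ : Finset (Fin k)).Nonempty := Finset.univ_nonempty
  apply le_antisymm
  · apply csSup_le ⟨0, mem_insert _ _⟩
    rintro y (rfl | ⟨⟨i, rfl⟩, hy⟩)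
    · obtain ⟨i, -⟩ := hne
      refine le_trans ?_ (Finset.le_sup' (termA x ξs) (Finset.mem_univ i))
      unfold termA; split <;> simp
    · refine le_trans ?_ (Finset.le_sup' (termA x ξs) (Finset.mem_univ i))
      unfold termA; rw [if_pos hy]; exact le_max_left _ _
  · obtain ⟨i, -, hi⟩ := Finset.exists_mem_eq_sup' hne (termA x ξs)
    rw [hi]
    apply le_csSup
    · refine ⟨max x 0, ?_⟩
      rintro y (rfl | ⟨⟨j, rfl⟩, hy⟩)
      · exact le_max_right _ _
      · exact le_trans hy (le_max_left _ _)
    · unfold termA; split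
      · rcases le_total (ξs i) 0 with h0 | h0
        · rw [max_eq_right h0]; exact mem_insert _ _
        · rw [max_eq_left h0]; exact mem_insert_of_mem _ ⟨⟨i, rfl⟩, by assumption⟩
      · exact mem_insert _ _

lemma purfB_eq [NeZero k] (x : ℝ) (ξs : Fin k → ℝ) :
    purfB x ξs = Finset.univ.inf' Finset.univ_nonempty (termB x ξs) := by
  have hne : (Finset.univ : Finset (Fin k)).Nonempty := Finset.univ_nonempty
  apply le_antisymm
  · obtain ⟨i, -, hi⟩ := Finset.exists_mem_eq_inf' hne (termB x ξs)
    rw [hi]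
    apply csInf_le
    · refine ⟨min x 1, ?_⟩
      rintro y (rfl | ⟨⟨j, rfl⟩, hy⟩)
      · exact min_le_right _ _
      · exact le_trans (min_le_left _ _) hy.le
    · unfold termB; split
      · rcases le_total 1 (ξs i) with h0 | h0
        · rw [min_eq_right h0]; exact mem_insert _ _
        · rw [min_eq_left h0]; exact mem_insert_of_mem _ ⟨⟨i, rfl⟩, by assumption⟩
      · exact mem_insert _ _
  · apply le_csInf ⟨1, mem_insert _ _⟩
    rintro y (rfl | ⟨⟨i, rfl⟩, hy⟩)
    · obtain ⟨i, -⟩ := hne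
      refine le_trans (Finset.inf'_le (termB x ξs) (Finset.mem_univ i)) ?_
      unfold termB; split <;> simp
    · refine le_trans (Finset.inf'_le (termB x ξs) (Finset.mem_univ i)) ?_
      unfold termB; rw [if_pos hy]; exact min_le_left _ _

lemma purfA_nonneg [NeZero k] (x : ℝ) (ξs : Fin k → ℝ) : 0 ≤ purfA x ξs := by
  rw [purfA_eq]
  obtain ⟨i, -⟩ := (Finset.univ_nonempty : (Finset.univ : Finset (Fin k)).Nonempty)
  refine le_trans ?_ (Finset.le_sup' (termA x ξs) (Finset.mem_univ i))
  unfold termA; split <;> simp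

lemma purfA_le [NeZero k] {x : ℝ} (hx : 0 ≤ x) (ξs : Fin k → ℝ) : purfA x ξs ≤ x := by
  rw [purfA_eq]
  rw [Finset.sup'_le_iff]
  intro i _
  unfold termA; split
  · exact max_le (by assumption) hx
  · exact hx

lemma purfB_le [NeZero k] (x : ℝ) (ξs : Fin k → ℝ) : purfB x ξs ≤ 1 := by
  rw [purfB_eq]
  obtain ⟨i, -⟩ := (Finset.univ_nonempty : (Finset.univ : Finset (Fin k)).Nonempty)
  refine le_trans (Finset.inf'_le (termB x ξs) (Finset.mem_univ i)) ?_
  unfold termB; split <;> simp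

lemma le_purfB [NeZero k] {x : ℝ} (hx : x ≤ 1) (ξs : Fin k → ℝ) : x ≤ purfB x ξs := by
  rw [purfB_eq, Finset.le_inf'_iff]
  intro i _
  unfold termB; split
  · exact le_min (le_of_lt (by assumption)) hx
  · exact hx

lemma measurable_purfA [NeZero k] (x : ℝ) : Measurable fun ξs : Fin k → ℝ => purfA x ξs := by
  have : (fun ξs : Fin k → ℝ => purfA x ξs)
      = Finset.univ.sup' Finset.univ_nonempty (fun i (ξs : Fin k → ℝ) => termA x ξs i) := by
    funext ξs
    rw [purfA_eq, Finset.sup'_apply]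
  rw [this]
  refine Finset.measurable_sup' _ fun i _ => ?_
  unfold termA
  exact Measurable.ite (measurableSet_le (measurable_pi_apply i) measurable_const)
    ((measurable_pi_apply i).max measurable_const) measurable_const

lemma measurable_purfB [NeZero k] (x : ℝ) : Measurable fun ξs : Fin k → ℝ => purfB x ξs := by
  have : (fun ξs : Fin k → ℝ => purfB x ξs)
      = Finset.univ.inf' Finset.univ_nonempty (fun i (ξs : Fin k → ℝ) => termB x ξs i) := by
    funext ξs
    rw [purfB_eq, Finset.inf'_apply]
  rw [this]
  refine Finset.inf'_induction _ _ (fun _f hf _g hg => hf.inf hg) fun i _ => ?_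
  unfold termB
  exact Measurable.ite (measurableSet_lt measurable_const (measurable_pi_apply i))
    ((measurable_pi_apply i).min measurable_const) measurable_const

/- event lemmas -/

lemma le_alpha_iff [NeZero k] {x t : ℝ} (ht : 0 < t) (htx : t ≤ x) {ξs : Fin k → ℝ}
    (hξ : ∀ i, 0 ≤ ξs i) :
    t ≤ x - purfA x ξs ↔ ∀ i, ξs i ∉ Ioc (x - t) x := by
  rw [le_sub_comm, purfA_eq, Finset.sup'_le_iff]
  constructor
  · intro h i
    have := h i (Finset.mem_univ i)
    unfold termA at this
    rintro ⟨h1, h2⟩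
    rw [if_pos h2, max_eq_left (hξ i)] at this
    exact absurd this (not_le.mpr h1)
  · intro h i _
    unfold termA
    split
    · rw [max_eq_left (hξ i)]
      by_contra hc
      exact h i ⟨not_le.mp hc, by assumption⟩
    · linarith

lemma lt_alpha_iff [NeZero k] {x s : ℝ} (hs : 0 < s) (hsx : s < x) {ξs : Fin k → ℝ}
    (hξ : ∀ i, 0 ≤ ξs i) :
    s < x - purfA x ξs ↔ ∀ i, ξs i ∉ Icc (x - s) x := by
  rw [lt_sub_comm, purfA_eq, Finset.sup'_lt_iff]
  constructor
  · intro h i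
    have := h i (Finset.mem_univ i)
    unfold termA at this
    rintro ⟨h1, h2⟩
    rw [if_pos h2, max_eq_left (hξ i)] at this
    exact absurd this (not_lt.mpr h1)
  · intro h i _
    unfold termA
    split
    · rw [max_eq_left (hξ i)]
      by_contra hc
      exact h i ⟨not_lt.mp hc, by assumption⟩
    · linarith

lemma le_beta_iff [NeZero k] {x t : ℝ} (ht : 0 < t) (htx : x + t ≤ 1) {ξs : Fin k → ℝ}
    (hξ : ∀ i, ξs i < 1) :
    t ≤ purfB x ξs - x ↔ ∀ i, ξs i ∉ Ioo x (x + t) := by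
  rw [le_sub_iff_add_le, add_comm t x, purfB_eq, Finset.le_inf'_iff]
  constructor
  · intro h i
    have := h i (Finset.mem_univ i)
    unfold termB at this
    rintro ⟨h1, h2⟩
    rw [if_pos h1, min_eq_left (hξ i).le] at this
    exact absurd h2 (not_lt.mpr this)
  · intro h i _
    unfold termB
    split
    · rw [min_eq_left (hξ i).le]
      by_contra hc
      exact h i ⟨by assumption, not_le.mp hc⟩
    · exact htx

lemma lt_beta_iff [NeZero k] {x t : ℝ} (ht : 0 < t) (htx : x + t < 1) {ξs : Fin k → ℝ}
    (hξ : ∀ i, ξs i < 1) :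
    t < purfB x ξs - x ↔ ∀ i, ξs i ∉ Ioc x (x + t) := by
  rw [lt_sub_iff_add_lt, add_comm t x, purfB_eq, Finset.lt_inf'_iff]
  constructor
  · intro h i
    have := h i (Finset.mem_univ i)
    unfold termB at this
    rintro ⟨h1, h2⟩
    rw [if_pos h1, min_eq_left (hξ i).le] at this
    exact absurd h2 (not_le.mpr this)
  · intro h i _
    unfold termB
    split
    · rw [min_eq_left (hξ i).le]
      by_contra hc
      exact h i ⟨by assumption, not_lt.mp hc⟩
    · exact htx

end PurfAux

namespace PurfAux

noncomputable def unif : Measure ℝ := (volume : Measure ℝ).restrict (Set.Ico 0 1)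

noncomputable def pik (k : ℕ) : Measure (Fin k → ℝ) := Measure.pi fun _ : Fin k => unif

instance : IsProbabilityMeasure unif :=
  ⟨by rw [unif, Measure.restrict_apply_univ, Real.volume_Ico]; norm_num⟩

instance (k : ℕ) : IsProbabilityMeasure (pik k) := by
  rw [pik]; infer_instance

lemma pik_forall_notin (k : ℕ) {T : Set ℝ} (hT : MeasurableSet T) (hsub : T ⊆ Ico 0 1) :
    pik k {ξs | ∀ i, ξs i ∉ T} = (1 - volume T) ^ k := by
  have hset : {ξs : Fin k → ℝ | ∀ i, ξs i ∉ T} = Set.pi univ fun _ => Tᶜ := by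
    ext ξs; simp [Set.mem_pi]
  rw [pik, hset, Measure.pi_pi]
  have h1 : unif Tᶜ = 1 - volume T := by
    rw [measure_compl hT (measure_ne_top _ _), measure_univ, unif,
      Measure.restrict_apply hT, inter_eq_left.mpr hsub]
  rw [h1, Finset.prod_const, Finset.card_univ, Fintype.card_fin]

lemma ae_Ico (k : ℕ) : ∀ᵐ ξs ∂(pik k), ∀ i, ξs i ∈ Ico (0:ℝ) 1 := by
  rw [ae_iff]
  have hset : {ξs : Fin k → ℝ | ¬ ∀ i, ξs i ∈ Ico (0:ℝ) 1}
      = (Set.pi univ fun _ : Fin k => Ico (0:ℝ) 1)ᶜ := by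
    ext ξs; simp [Set.mem_pi]
  rw [hset, measure_compl (MeasurableSet.univ_pi fun _ => measurableSet_Ico)
    (measure_ne_top _ _), measure_univ, pik, Measure.pi_pi]
  have h1 : unif (Ico (0:ℝ) 1) = 1 := by
    rw [unif, Measure.restrict_apply measurableSet_Ico, inter_self, Real.volume_Ico]
    norm_num
  rw [h1, Finset.prod_const, one_pow, tsub_self]

lemma meas_le_alpha {k : ℕ} [NeZero k] {x : ℝ} (hx : x ∈ Ioo (0:ℝ) 1) {t : ℝ}
    (ht : t ∈ Ioc (0:ℝ) x) :
    pik k {ξs | t ≤ x - purfA x ξs} = ENNReal.ofReal ((1 - t) ^ k) := by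
  obtain ⟨ht0, htx⟩ := ht
  have h1 : pik k {ξs | t ≤ x - purfA x ξs} = pik k {ξs | ∀ i, ξs i ∉ Ioc (x - t) x} := by
    apply measure_congr
    rw [Filter.eventuallyEq_set]
    filter_upwards [ae_Ico k] with ξs hξ
    exact le_alpha_iff ht0 htx fun i => (hξ i).1
  rw [h1, pik_forall_notin k measurableSet_Ioc
    (fun y hy => ⟨by linarith [hy.1], lt_of_le_of_lt hy.2 hx.2⟩)]
  rw [Real.volume_Ioc, show x - (x - t) = t by ring]
  have h2 : (1 : ENNReal) - ENNReal.ofReal t = ENNReal.ofReal (1 - t) := by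
    rw [ENNReal.ofReal_sub 1 ht0.le, ENNReal.ofReal_one]
  rw [h2, ← ENNReal.ofReal_pow (by linarith [hx.1, hx.2])]

lemma meas_le_beta {k : ℕ} [NeZero k] {x : ℝ} (hx : x ∈ Ioo (0:ℝ) 1) {t : ℝ}
    (ht : t ∈ Ioc (0:ℝ) (1 - x)) :
    pik k {ξs | t ≤ purfB x ξs - x} = ENNReal.ofReal ((1 - t) ^ k) := by
  obtain ⟨ht0, htx⟩ := ht
  have h1 : pik k {ξs | t ≤ purfB x ξs - x} = pik k {ξs | ∀ i, ξs i ∉ Ioo x (x + t)} := by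
    apply measure_congr
    rw [Filter.eventuallyEq_set]
    filter_upwards [ae_Ico k] with ξs hξ
    exact le_beta_iff ht0 (by linarith) fun i => (hξ i).2
  rw [h1, pik_forall_notin k measurableSet_Ioo
    (fun y hy => ⟨by linarith [hy.1, hx.1], by linarith [hy.2]⟩)]
  rw [Real.volume_Ioo, show x + t - x = t by ring]
  have h2 : (1 : ENNReal) - ENNReal.ofReal t = ENNReal.ofReal (1 - t) := by
    rw [ENNReal.ofReal_sub 1 ht0.le, ENNReal.ofReal_one]
  rw [h2, ← ENNReal.ofReal_pow (by linarith [hx.1, hx.2])]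

lemma meas_joint {k : ℕ} [NeZero k] {x : ℝ} (hx : x ∈ Ioo (0:ℝ) 1) {s t : ℝ}
    (hs : s ∈ Ioo (0:ℝ) x) (ht : t ∈ Ioo (0:ℝ) (1 - x)) :
    pik k {ξs | s < x - purfA x ξs ∧ t < purfB x ξs - x}
      = ENNReal.ofReal ((1 - (s + t)) ^ k) := by
  obtain ⟨hs0, hsx⟩ := hs
  obtain ⟨ht0, htx⟩ := ht
  have h1 : pik k {ξs | s < x - purfA x ξs ∧ t < purfB x ξs - x}
      = pik k {ξs | ∀ i, ξs i ∉ Icc (x - s) (x + t)} := by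
    apply measure_congr
    rw [Filter.eventuallyEq_set]
    filter_upwards [ae_Ico k] with ξs hξ
    rw [lt_alpha_iff hs0 hsx fun i => (hξ i).1,
      lt_beta_iff ht0 (by linarith) fun i => (hξ i).2, ← forall_and]
    refine forall_congr' fun i => ?_
    rw [← Icc_union_Ioc_eq_Icc (by linarith : x - s ≤ x) (by linarith : x ≤ x + t),
      Set.mem_union]
    tauto
  rw [h1, pik_forall_notin k measurableSet_Icc
    (fun y hy => ⟨by linarith [hy.1], by linarith [hy.2]⟩)]
  rw [Real.volume_Icc, show x + t - (x - s) = s + t by ring]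
  have h2 : (1 : ENNReal) - ENNReal.ofReal (s + t) = ENNReal.ofReal (1 - (s + t)) := by
    rw [ENNReal.ofReal_sub 1 (by linarith), ENNReal.ofReal_one]
  rw [h2, ← ENNReal.ofReal_pow (by linarith)]

end PurfAux

namespace PurfAux

lemma integral_sub_pow (d c : ℝ) (m : ℕ) :
    ∫ t in (0:ℝ)..c, (d - t) ^ m = (d ^ (m + 1) - (d - c) ^ (m + 1)) / ((m : ℝ) + 1) := by
  have h := intervalIntegral.integral_comp_sub_left (a := (0:ℝ)) (b := c) (fun u : ℝ => u ^ m) d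
  rw [h, integral_pow]
  norm_num

lemma integral_of_tail {k : ℕ} {X : Type*} [MeasurableSpace X] {μ : Measure X}
    [IsProbabilityMeasure μ] {f : X → ℝ} (hm : Measurable f) {c : ℝ} (hc0 : 0 < c) (hc1 : c ≤ 1)
    (h0 : ∀ a, 0 ≤ f a) (h1 : ∀ a, f a ≤ c)
    (htail : ∀ t ∈ Ioc (0:ℝ) c, μ {a | t ≤ f a} = ENNReal.ofReal ((1 - t) ^ k)) :
    ∫ a, f a ∂μ = (1 - (1 - c) ^ (k + 1)) / ((k : ℝ) + 1) := by
  have hint : Integrable f μ := ⟨hm.aestronglyMeasurable,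
    HasFiniteIntegral.of_bounded (C := c) (Filter.Eventually.of_forall fun a => by
      rw [Real.norm_eq_abs, abs_of_nonneg (h0 a)]; exact h1 a)⟩
  rw [hint.integral_eq_integral_Ioc_meas_le (Filter.Eventually.of_forall h0)
    (Filter.Eventually.of_forall h1)]
  rw [setIntegral_congr_fun measurableSet_Ioc
    (fun t htm => by
      rw [measureReal_def, htail t htm, ENNReal.toReal_ofReal (pow_nonneg (by linarith [htm.2]) k)])]
  rw [← intervalIntegral.integral_of_le hc0.le, integral_sub_pow]
  norm_num

lemma integral_sq_of_tail {k : ℕ} {X : Type*} [MeasurableSpace X] {μ : Measure X}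
    [IsProbabilityMeasure μ] {f : X → ℝ} (hm : Measurable f) {c : ℝ} (hc0 : 0 < c) (hc1 : c ≤ 1)
    (h0 : ∀ a, 0 ≤ f a) (h1 : ∀ a, f a ≤ c)
    (htail : ∀ t ∈ Ioc (0:ℝ) c, μ {a | t ≤ f a} = ENNReal.ofReal ((1 - t) ^ k)) :
    ∫ a, (f a) ^ 2 ∂μ = 2 * ((1 - (1 - c) ^ (k + 1)) / ((k : ℝ) + 1))
      - 2 * ((1 - (1 - c) ^ (k + 2)) / ((k : ℝ) + 2)) := by
  have hint : Integrable (fun a => f a ^ 2) μ := ⟨(hm.pow_const 2).aestronglyMeasurable,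
    HasFiniteIntegral.of_bounded (C := c ^ 2) (Filter.Eventually.of_forall fun a => by
      rw [Real.norm_eq_abs, abs_of_nonneg (sq_nonneg _)]
      exact pow_le_pow_left₀ (h0 a) (h1 a) 2)⟩
  rw [hint.integral_eq_integral_Ioc_meas_le
    (Filter.Eventually.of_forall fun a => sq_nonneg _)
    (Filter.Eventually.of_forall fun a => pow_le_pow_left₀ (h0 a) (h1 a) 2)]
  have hcong : EqOn (fun t => (μ.real {a | t ≤ f a ^ 2}))
      (fun t => (1 - Real.sqrt t) ^ k) (Ioc 0 (c ^ 2)) := by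
    intro t htm
    have ht0 : (0:ℝ) < t := htm.1
    have hst : Real.sqrt t ∈ Ioc (0:ℝ) c := ⟨Real.sqrt_pos.mpr ht0, by
      calc Real.sqrt t ≤ Real.sqrt (c ^ 2) := Real.sqrt_le_sqrt htm.2
        _ = c := Real.sqrt_sq hc0.le⟩
    have hset : {a | t ≤ f a ^ 2} = {a | Real.sqrt t ≤ f a} := by
      ext a
      simp only [mem_setOf_eq]
      constructor
      · intro h
        have h2 := Real.sqrt_le_sqrt h
        rwa [Real.sqrt_sq (h0 a)] at h2
      · intro h
        calc t = Real.sqrt t ^ 2 := (Real.sq_sqrt ht0.le).symm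
          _ ≤ f a ^ 2 := pow_le_pow_left₀ (Real.sqrt_nonneg t) h 2
    simp only
    rw [measureReal_def, hset, htail _ hst, ENNReal.toReal_ofReal (pow_nonneg (by linarith [hst.2]) k)]
  rw [setIntegral_congr_fun measurableSet_Ioc hcong]
  rw [← intervalIntegral.integral_of_le (by positivity : (0:ℝ) ≤ c ^ 2)]
  have hderiv : ∀ u ∈ uIcc (0:ℝ) c, HasDerivAt (fun u : ℝ => u ^ 2) (2 * u) u := fun u _ => by
    simpa using hasDerivAt_pow 2 u
  have hcomp := intervalIntegral.integral_comp_smul_deriv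
    (g := fun t => (1 - Real.sqrt t) ^ k) hderiv
    ((continuous_const.mul continuous_id).continuousOn)
    ((continuous_const.sub Real.continuous_sqrt).pow k)
  simp only [Function.comp] at hcomp
  rw [show ((0:ℝ) ^ 2) = 0 by norm_num] at hcomp
  rw [← hcomp]
  have e3 : ∫ u in (0:ℝ)..c, (2 * u) • ((1 - Real.sqrt (u ^ 2)) ^ k)
      = ∫ u in (0:ℝ)..c, (2 * (1 - u) ^ k - 2 * (1 - u) ^ (k + 1)) := by
    apply intervalIntegral.integral_congr
    intro u hu
    rw [uIcc_of_le hc0.le] at hu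
    simp only [smul_eq_mul]
    rw [Real.sqrt_sq hu.1]
    ring
  rw [e3, intervalIntegral.integral_sub, intervalIntegral.integral_const_mul,
    intervalIntegral.integral_const_mul]
  · have g1 := integral_sub_pow 1 c k
    have g2 := integral_sub_pow 1 c (k + 1)
    simp only [one_pow] at g1 g2
    rw [g1, g2]
    push_cast
    ring
  · exact (Continuous.intervalIntegrable (by continuity) _ _)
  · exact (Continuous.intervalIntegrable (by continuity) _ _)

end PurfAux

namespace PurfAux

lemma integral_alphabeta {k : ℕ} [NeZero k] {x : ℝ} (hx : x ∈ Ioo (0:ℝ) 1) :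
    ∫ ξs, (x - purfA x ξs) * (purfB x ξs - x) ∂(pik k)
      = (1 - (x ^ (k + 2) + (1 - x) ^ (k + 2))) / (((k : ℝ) + 1) * ((k : ℝ) + 2)) := by
  obtain ⟨hx0, hx1⟩ := hx
  have hmA : Measurable fun ξs : Fin k → ℝ => x - purfA x ξs :=
    measurable_const.sub (measurable_purfA x)
  have hmB : Measurable fun ξs : Fin k → ℝ => purfB x ξs - x :=
    (measurable_purfB x).sub measurable_const
  have hA0 : ∀ ξs : Fin k → ℝ, 0 ≤ x - purfA x ξs := fun ξs => by
    linarith [purfA_le hx0.le ξs]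
  have hAx : ∀ ξs : Fin k → ℝ, x - purfA x ξs ≤ x := fun ξs => by
    linarith [purfA_nonneg x ξs]
  have hB0 : ∀ ξs : Fin k → ℝ, 0 ≤ purfB x ξs - x := fun ξs => by
    linarith [le_purfB hx1.le ξs]
  have hB1 : ∀ ξs : Fin k → ℝ, purfB x ξs - x ≤ 1 - x := fun ξs => by
    linarith [purfB_le x ξs]
  set ν : Measure (ℝ × ℝ) :=
    (volume.restrict (Ioo (0:ℝ) x)).prod (volume.restrict (Ioo (0:ℝ) (1 - x))) with hν
  have hres : ν = (volume.prod volume).restrict (Ioo (0:ℝ) x ×ˢ Ioo (0:ℝ) (1 - x)) :=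
    Measure.prod_restrict _ _
  -- pointwise identity
  have hpt : ∀ ξs : Fin k → ℝ,
      ν (Iio (x - purfA x ξs) ×ˢ Iio (purfB x ξs - x))
        = ENNReal.ofReal ((x - purfA x ξs) * (purfB x ξs - x)) := by
    intro ξs
    rw [hν, Measure.prod_prod]
    have e1 : volume.restrict (Ioo (0:ℝ) x) (Iio (x - purfA x ξs))
        = ENNReal.ofReal (x - purfA x ξs) := by
      rw [Measure.restrict_apply measurableSet_Iio]
      have h3 : Iio (x - purfA x ξs) ∩ Ioo 0 x = Ioo 0 (x - purfA x ξs) := by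
        ext y
        constructor
        · rintro ⟨h1, h2, _⟩; exact ⟨h2, h1⟩
        · rintro ⟨h1, h2⟩; exact ⟨h2, h1, lt_of_lt_of_le h2 (hAx ξs)⟩
      rw [h3, Real.volume_Ioo, sub_zero]
    have e2 : volume.restrict (Ioo (0:ℝ) (1 - x)) (Iio (purfB x ξs - x))
        = ENNReal.ofReal (purfB x ξs - x) := by
      rw [Measure.restrict_apply measurableSet_Iio]
      have h3 : Iio (purfB x ξs - x) ∩ Ioo 0 (1 - x) = Ioo 0 (purfB x ξs - x) := by
        ext y
        constructor
        · rintro ⟨h1, h2, _⟩; exact ⟨h2, h1⟩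
        · rintro ⟨h1, h2⟩; exact ⟨h2, h1, lt_of_lt_of_le h2 (hB1 ξs)⟩
      rw [h3, Real.volume_Ioo, sub_zero]
    rw [e1, e2, ← ENNReal.ofReal_mul (hA0 ξs)]
  -- indicator and swap
  set F : (Fin k → ℝ) → ℝ × ℝ → ENNReal := fun ξs p =>
    (Iio (x - purfA x ξs) ×ˢ Iio (purfB x ξs - x)).indicator (fun _ => 1) p with hF
  have hSmeas : MeasurableSet {q : (Fin k → ℝ) × (ℝ × ℝ) |
      q.2.1 < x - purfA x q.1 ∧ q.2.2 < purfB x q.1 - x} :=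
    (measurableSet_lt (measurable_snd.fst) (hmA.comp measurable_fst)).inter
      (measurableSet_lt (measurable_snd.snd) (hmB.comp measurable_fst))
  have hFmeas : Measurable (Function.uncurry F) := by
    have huncurry : Function.uncurry F
        = ({q : (Fin k → ℝ) × (ℝ × ℝ) |
            q.2.1 < x - purfA x q.1 ∧ q.2.2 < purfB x q.1 - x}).indicator (fun _ => 1) := by
      funext q
      simp [hF, Function.uncurry, Set.indicator, Set.mem_prod, mem_Iio, mem_setOf_eq]
    rw [huncurry]
    exact measurable_const.indicator hSmeas
  have key : ∫⁻ ξs, ENNReal.ofReal ((x - purfA x ξs) * (purfB x ξs - x)) ∂(pik k)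
      = ∫⁻ p, pik k {ξs | p.1 < x - purfA x ξs ∧ p.2 < purfB x ξs - x} ∂ν := by
    calc ∫⁻ ξs, ENNReal.ofReal ((x - purfA x ξs) * (purfB x ξs - x)) ∂(pik k)
        = ∫⁻ ξs, ∫⁻ p, F ξs p ∂ν ∂(pik k) := by
          refine lintegral_congr fun ξs => ?_
          rw [← hpt ξs]
          exact (lintegral_indicator_one (measurableSet_Iio.prod measurableSet_Iio)).symm
      _ = ∫⁻ p, ∫⁻ ξs, F ξs p ∂(pik k) ∂ν := lintegral_lintegral_swap hFmeas.aemeasurable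
      _ = ∫⁻ p, pik k {ξs | p.1 < x - purfA x ξs ∧ p.2 < purfB x ξs - x} ∂ν := by
          refine lintegral_congr fun p => ?_
          have h4 : (fun ξs => F ξs p)
              = ({ξs : Fin k → ℝ | p.1 < x - purfA x ξs ∧ p.2 < purfB x ξs - x}).indicator
                  (fun _ => 1) := by
            funext ξs
            simp [hF, Set.indicator, Set.mem_prod, mem_Iio, mem_setOf_eq]
          rw [h4]
          exact lintegral_indicator_one
            ((measurableSet_lt measurable_const hmA).inter
              (measurableSet_lt measurable_const hmB))
  have key2 : ∫⁻ p, pik k {ξs | p.1 < x - purfA x ξs ∧ p.2 < purfB x ξs - x} ∂ν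
      = ∫⁻ p : ℝ × ℝ, ENNReal.ofReal (((1 - p.1) - p.2) ^ k) ∂ν := by
    rw [hres]
    apply lintegral_congr_ae
    filter_upwards [ae_restrict_mem (measurableSet_Ioo.prod measurableSet_Ioo)] with p hp
    rw [show (1 - p.1) - p.2 = 1 - (p.1 + p.2) by ring]
    exact meas_joint ⟨hx0, hx1⟩ hp.1 hp.2
  -- integrability of the kernel
  haveI hf1 : IsFiniteMeasure (volume.restrict (Ioo (0:ℝ) x)) :=
    ⟨by rw [Measure.restrict_apply_univ, Real.volume_Ioo]; exact ENNReal.ofReal_lt_top⟩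
  haveI hf2 : IsFiniteMeasure (volume.restrict (Ioo (0:ℝ) (1 - x))) :=
    ⟨by rw [Measure.restrict_apply_univ, Real.volume_Ioo]; exact ENNReal.ofReal_lt_top⟩
  haveI hf3 : IsFiniteMeasure ν := by rw [hν]; infer_instance
  have hgcont : Continuous fun p : ℝ × ℝ => ((1 - p.1) - p.2) ^ k :=
    ((continuous_const.sub continuous_fst).sub continuous_snd).pow k
  have hbd : ∀ᵐ p ∂ν, ‖((1 - p.1) - p.2) ^ k‖ ≤ 1 := by
    rw [hres]
    filter_upwards [ae_restrict_mem (measurableSet_Ioo.prod measurableSet_Ioo)] with p hp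
    rw [Real.norm_eq_abs, abs_pow]
    refine pow_le_one₀ (abs_nonneg _) (abs_le.mpr ⟨?_, ?_⟩)
    · linarith [hp.1.2, hp.2.2, hx1]
    · linarith [hp.1.1, hp.2.1]
  have hgnn : 0 ≤ᵐ[ν] fun p : ℝ × ℝ => ((1 - p.1) - p.2) ^ k := by
    rw [hres]
    filter_upwards [ae_restrict_mem (measurableSet_Ioo.prod measurableSet_Ioo)] with p hp
    have h5 := hp.1.2
    have h6 := hp.2.2
    exact pow_nonneg (by linarith) k
  have hgint : Integrable (fun p : ℝ × ℝ => ((1 - p.1) - p.2) ^ k) ν :=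
    ⟨hgcont.aestronglyMeasurable, HasFiniteIntegral.of_bounded hbd⟩
  have key3 : ∫⁻ p : ℝ × ℝ, ENNReal.ofReal (((1 - p.1) - p.2) ^ k) ∂ν
      = ENNReal.ofReal (∫ p : ℝ × ℝ, ((1 - p.1) - p.2) ^ k ∂ν) :=
    (ofReal_integral_eq_lintegral_ofReal hgint hgnn).symm
  have hk1 : ((k : ℝ) + 1) ≠ 0 := by positivity
  have hk2 : ((k : ℝ) + 2) ≠ 0 := by positivity
  have key4 : ∫ p : ℝ × ℝ, ((1 - p.1) - p.2) ^ k ∂ν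
      = (1 - (x ^ (k + 2) + (1 - x) ^ (k + 2))) / (((k : ℝ) + 1) * ((k : ℝ) + 2)) := by
    rw [hν] at hgint ⊢
    rw [integral_prod _ hgint]
    have inner : ∀ s : ℝ, ∫ t in Ioo (0:ℝ) (1 - x), ((1 - s) - t) ^ k
        = ((1 - s) ^ (k + 1) - (x - s) ^ (k + 1)) / ((k : ℝ) + 1) := by
      intro s
      rw [← integral_Ioc_eq_integral_Ioo,
        ← intervalIntegral.integral_of_le (by linarith : (0:ℝ) ≤ 1 - x),
        integral_sub_pow, show (1 - s) - (1 - x) = x - s by ring]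
    rw [setIntegral_congr_fun measurableSet_Ioo fun s _ => inner s]
    rw [← integral_Ioc_eq_integral_Ioo,
      ← intervalIntegral.integral_of_le hx0.le]
    have split : ∀ s : ℝ, ((1 - s) ^ (k + 1) - (x - s) ^ (k + 1)) / ((k : ℝ) + 1)
        = (1 - s) ^ (k + 1) / ((k : ℝ) + 1) - (x - s) ^ (k + 1) / ((k : ℝ) + 1) := fun s => by
      ring
    rw [intervalIntegral.integral_congr fun s _ => split s]
    rw [intervalIntegral.integral_sub
      (Continuous.intervalIntegrable (by fun_prop) _ _)
      (Continuous.intervalIntegrable (by fun_prop) _ _)]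
    rw [intervalIntegral.integral_div, intervalIntegral.integral_div,
      integral_sub_pow, integral_sub_pow, sub_self,
      zero_pow (by omega : k + 2 ≠ 0)]
    push_cast
    field_simp
    ring
  rw [integral_eq_lintegral_of_nonneg_ae
    (Filter.Eventually.of_forall fun ξs => mul_nonneg (hA0 ξs) (hB0 ξs))
    (hmA.mul hmB).aestronglyMeasurable]
  rw [key, key2, key3, key4, ENNReal.toReal_ofReal]
  have h7 : x ^ (k + 2) ≤ x := pow_le_of_le_one hx0.le hx1.le (by omega)
  have h8 : (1 - x) ^ (k + 2) ≤ 1 - x := pow_le_of_le_one (by linarith) (by linarith) (by omega)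
  apply div_nonneg (by linarith)
  positivity

end PurfAux

open PurfAux

/-- **Moments of the cell of the PURF model.**
With `ξ₁,…,ξ_k` i.i.d. uniform on `[0,1)` (canonical product space), `α = x − A_{U,x}`,
`β = B_{U,x} − x` and `P_j(x) = x^j + (1−x)^j`:
`E[α−β] = (x^{k+1} − (1−x)^{k+1})/(k+1)`, `E[αβ] = (1 − P_{k+2}(x))/((k+1)(k+2))`, and
`E[α²+β²] = 4/((k+1)(k+2)) − 2((1−x)x^{k+1} + x(1−x)^{k+1})/(k+1)
            − 2 P_{k+2}(x)/((k+1)(k+2))`. -/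
theorem purf_moments
    (k : ℕ) (hk : 1 ≤ k) (x : ℝ) (hx : x ∈ Set.Ioo (0 : ℝ) 1) :
    (∫ ξs : Fin k → ℝ, ((x - purfA x ξs) - (purfB x ξs - x))
        ∂(Measure.pi fun _ : Fin k => (volume : Measure ℝ).restrict (Set.Ico 0 1)))
      = (x ^ (k + 1) - (1 - x) ^ (k + 1)) / (k + 1)
    ∧ (∫ ξs : Fin k → ℝ, (x - purfA x ξs) * (purfB x ξs - x)
        ∂(Measure.pi fun _ : Fin k => (volume : Measure ℝ).restrict (Set.Ico 0 1)))
      = (1 - (x ^ (k + 2) + (1 - x) ^ (k + 2))) / ((k + 1) * (k + 2))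
    ∧ (∫ ξs : Fin k → ℝ, ((x - purfA x ξs) ^ 2 + (purfB x ξs - x) ^ 2)
        ∂(Measure.pi fun _ : Fin k => (volume : Measure ℝ).restrict (Set.Ico 0 1)))
      = 4 / ((k + 1 : ℝ) * (k + 2))
          - 2 * ((1 - x) * x ^ (k + 1) + x * (1 - x) ^ (k + 1)) / (k + 1)
          - 2 * (x ^ (k + 2) + (1 - x) ^ (k + 2)) / ((k + 1) * (k + 2)) := by
  haveI : NeZero k := ⟨by omega⟩
  obtain ⟨hx0, hx1⟩ := hx
  have hxI : x ∈ Ioo (0:ℝ) 1 := ⟨hx0, hx1⟩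
  have hpi : (Measure.pi fun _ : Fin k => (volume : Measure ℝ).restrict (Set.Ico 0 1))
      = pik k := rfl
  have hmA : Measurable fun ξs : Fin k → ℝ => x - purfA x ξs :=
    measurable_const.sub (measurable_purfA x)
  have hmB : Measurable fun ξs : Fin k → ℝ => purfB x ξs - x :=
    (measurable_purfB x).sub measurable_const
  have hA0 : ∀ ξs : Fin k → ℝ, 0 ≤ x - purfA x ξs := fun ξs => by
    linarith [purfA_le hx0.le ξs]
  have hAx : ∀ ξs : Fin k → ℝ, x - purfA x ξs ≤ x := fun ξs => by
    linarith [purfA_nonneg x ξs]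
  have hB0 : ∀ ξs : Fin k → ℝ, 0 ≤ purfB x ξs - x := fun ξs => by
    linarith [le_purfB hx1.le ξs]
  have hB1 : ∀ ξs : Fin k → ℝ, purfB x ξs - x ≤ 1 - x := fun ξs => by
    linarith [purfB_le x ξs]
  have hintA : Integrable (fun ξs : Fin k → ℝ => x - purfA x ξs) (pik k) :=
    ⟨hmA.aestronglyMeasurable, HasFiniteIntegral.of_bounded (C := x)
      (Filter.Eventually.of_forall fun ξs => by
        rw [Real.norm_eq_abs, abs_of_nonneg (hA0 ξs)]; exact hAx ξs)⟩
  have hintB : Integrable (fun ξs : Fin k → ℝ => purfB x ξs - x) (pik k) :=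
    ⟨hmB.aestronglyMeasurable, HasFiniteIntegral.of_bounded (C := 1 - x)
      (Filter.Eventually.of_forall fun ξs => by
        rw [Real.norm_eq_abs, abs_of_nonneg (hB0 ξs)]; exact hB1 ξs)⟩
  have hintA2 : Integrable (fun ξs : Fin k → ℝ => (x - purfA x ξs) ^ 2) (pik k) :=
    ⟨(hmA.pow_const 2).aestronglyMeasurable, HasFiniteIntegral.of_bounded (C := x ^ 2)
      (Filter.Eventually.of_forall fun ξs => by
        rw [Real.norm_eq_abs, abs_of_nonneg (sq_nonneg _)]
        exact pow_le_pow_left₀ (hA0 ξs) (hAx ξs) 2)⟩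
  have hintB2 : Integrable (fun ξs : Fin k → ℝ => (purfB x ξs - x) ^ 2) (pik k) :=
    ⟨(hmB.pow_const 2).aestronglyMeasurable, HasFiniteIntegral.of_bounded (C := (1 - x) ^ 2)
      (Filter.Eventually.of_forall fun ξs => by
        rw [Real.norm_eq_abs, abs_of_nonneg (sq_nonneg _)]
        exact pow_le_pow_left₀ (hB0 ξs) (hB1 ξs) 2)⟩
  have hEA : ∫ ξs, (x - purfA x ξs) ∂(pik k) = (1 - (1 - x) ^ (k + 1)) / ((k:ℝ) + 1) :=
    integral_of_tail hmA hx0 hx1.le hA0 hAx (fun t ht => meas_le_alpha hxI ht)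
  have hEB : ∫ ξs, (purfB x ξs - x) ∂(pik k) = (1 - x ^ (k + 1)) / ((k:ℝ) + 1) := by
    have h := integral_of_tail hmB (by linarith : (0:ℝ) < 1 - x) (by linarith) hB0 hB1
      (fun t ht => meas_le_beta hxI ht)
    rwa [show (1:ℝ) - (1 - x) = x by ring] at h
  have hEA2 : ∫ ξs, (x - purfA x ξs) ^ 2 ∂(pik k)
      = 2 * ((1 - (1 - x) ^ (k + 1)) / ((k:ℝ) + 1))
        - 2 * ((1 - (1 - x) ^ (k + 2)) / ((k:ℝ) + 2)) :=
    integral_sq_of_tail hmA hx0 hx1.le hA0 hAx (fun t ht => meas_le_alpha hxI ht)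
  have hEB2 : ∫ ξs, (purfB x ξs - x) ^ 2 ∂(pik k)
      = 2 * ((1 - x ^ (k + 1)) / ((k:ℝ) + 1)) - 2 * ((1 - x ^ (k + 2)) / ((k:ℝ) + 2)) := by
    have h := integral_sq_of_tail hmB (by linarith : (0:ℝ) < 1 - x) (by linarith) hB0 hB1
      (fun t ht => meas_le_beta hxI ht)
    rwa [show (1:ℝ) - (1 - x) = x by ring] at h
  have hk1 : ((k:ℝ) + 1) ≠ 0 := by positivity
  have hk2 : ((k:ℝ) + 2) ≠ 0 := by positivity
  refine ⟨?_, ?_, ?_⟩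
  · rw [hpi, integral_sub hintA hintB, hEA, hEB]
    push_cast
    field_simp
    try ring
  · rw [hpi, integral_alphabeta hxI]
  · rw [hpi, integral_add hintA2 hintB2, hEA2, hEB2]
    push_cast
    field_simp
    try ring
end

section
/- In the BPRF coordinate chain, for every p ∈ ℕ and every coordinate i ∈ {1,…,d}: (i) for every natural number δ, E[(α_i^{(p)} β_i^{(p)})^δ] = (1 − δ/(d(δ+1)))^p (x_i(1−x_i))^δ; (ii) E[α_i^{(p)} − β_i^{(p)}] = (1 − 1/(2d))^p (2x_i − 1); (iii) E[(α_i^{(p)})² + (β_i^{(p)})²] = 4x_i(1−x_i)(1 − 1/(2d))^p + (x_i² + (1−x_i)² − 4x_i(1−x_i))(1 − 2/(3d))^p. -/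
open MeasureTheory ProbabilityTheory

/-- The BPRF coordinate chain: `bprfChain J U W x i p ω` is the pair
`(α_i^{(p)}, β_i^{(p)})` of distances from `x` to the two faces, in direction `i`,
of the cell containing `x` in the depth-`p` balanced purely random forest tree.
(The variables `J p`, `U p`, `W p` drive the step from depth `p` to depth `p+1`.) -/
noncomputable def bprfChain {Ω : Type*} {d : ℕ} (J : ℕ → Ω → Fin d) (U W : ℕ → Ω → ℝ)
    (x : Fin d → ℝ) (i : Fin d) : ℕ → Ω → ℝ × ℝ
  | 0 => fun _ => (x i, 1 - x i)
  | p + 1 => fun ω =>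
      let ab := bprfChain J U W x i p ω
      if J p ω = i then
        if W p ω * (ab.1 + ab.2) ≤ ab.1 then (U p ω * ab.1, ab.2)
        else (ab.1, U p ω * ab.2)
      else ab

noncomputable def bprfStep {d : ℕ} (i : Fin d) (s : ℝ × ℝ) (y : Fin d × ℝ × ℝ) : ℝ × ℝ :=
  if y.1 = i then
    if y.2.2 * (s.1 + s.2) ≤ s.1 then (y.2.1 * s.1, s.2) else (s.1, y.2.1 * s.2)
  else s

lemma bprfChain_succ {Ω : Type*} {d : ℕ} (J : ℕ → Ω → Fin d) (U W : ℕ → Ω → ℝ)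
    (x : Fin d → ℝ) (i : Fin d) (p : ℕ) (ω : Ω) :
    bprfChain J U W x i (p + 1) ω
      = bprfStep i (bprfChain J U W x i p ω) (J p ω, U p ω, W p ω) := rfl

lemma measurable_bprfStep {d : ℕ} (i : Fin d) :
    Measurable (fun z : (ℝ × ℝ) × (Fin d × ℝ × ℝ) => bprfStep i z.1 z.2) := by
  unfold bprfStep
  refine Measurable.ite ?_ ?_ measurable_fst
  · exact (measurable_snd.fst) (measurableSet_singleton i)
  · refine Measurable.ite ?_ (by fun_prop) (by fun_prop)
    exact measurableSet_le (by fun_prop) (by fun_prop)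

lemma measurable_bprfChain {Ω : Type*} [MeasurableSpace Ω] {d : ℕ}
    (J : ℕ → Ω → Fin d) (U W : ℕ → Ω → ℝ) (x : Fin d → ℝ) (i : Fin d)
    (hJ : ∀ p, Measurable (J p)) (hU : ∀ p, Measurable (U p)) (hW : ∀ p, Measurable (W p)) :
    ∀ p, Measurable (bprfChain J U W x i p) := by
  intro p
  induction p with
  | zero => exact measurable_const
  | succ p ih =>
      have : Measurable fun ω => ((bprfChain J U W x i p ω), (J p ω, U p ω, W p ω)) :=
        ih.prodMk (((hJ p).prodMk ((hU p).prodMk (hW p))))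
      exact (measurable_bprfStep i).comp this

noncomputable def bprfVec {d : ℕ} (x0 : ℝ × ℝ) (i : Fin d) :
    (p : ℕ) → (Fin p → Fin d × ℝ × ℝ) → ℝ × ℝ
  | 0, _ => x0
  | p + 1, v => bprfStep i (bprfVec x0 i p (v ∘ Fin.castSucc)) (v (Fin.last p))

lemma measurable_bprfVec {d : ℕ} (x0 : ℝ × ℝ) (i : Fin d) (p : ℕ) :
    Measurable (bprfVec x0 i p) := by
  induction p with
  | zero => exact measurable_const
  | succ p ih =>
      show Measurable fun v => bprfStep i (bprfVec x0 i p (v ∘ Fin.castSucc)) (v (Fin.last p))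
      exact (measurable_bprfStep i).comp
        ((ih.comp (measurable_pi_lambda _ fun k => measurable_pi_apply _)).prodMk
          (measurable_pi_apply _))

lemma bprfChain_eq_vec {Ω : Type*} {d : ℕ} (J : ℕ → Ω → Fin d) (U W : ℕ → Ω → ℝ)
    (x : Fin d → ℝ) (i : Fin d) (p : ℕ) (ω : Ω) :
    bprfChain J U W x i p ω
      = bprfVec (x i, 1 - x i) i p (fun k : Fin p => (J k ω, U k ω, W k ω)) := by
  induction p with
  | zero => rfl
  | succ p ih =>
      rw [bprfChain_succ, ih]
      rfl

lemma indep_bprfChain {Ω : Type*} [MeasureSpace Ω] [IsProbabilityMeasure (ℙ : Measure Ω)]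
    {d : ℕ} (J : ℕ → Ω → Fin d) (U W : ℕ → Ω → ℝ) (x : Fin d → ℝ) (i : Fin d)
    (hJ : ∀ p, Measurable (J p)) (hU : ∀ p, Measurable (U p)) (hW : ∀ p, Measurable (W p))
    (h_indep : iIndepFun
        (fun p ω => (J p ω, U p ω, W p ω)) ℙ) (p : ℕ) :
    IndepFun (bprfChain J U W x i p) (fun ω => (J p ω, U p ω, W p ω)) ℙ := by
  have hYmeas : ∀ k, Measurable (fun ω => (J k ω, U k ω, W k ω)) :=
    fun k => ((hJ k).prodMk ((hU k).prodMk (hW k)))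
  have hdisj : Disjoint (Finset.range p) ({p} : Finset ℕ) := by
    simp [Finset.disjoint_singleton_right]
  have h := h_indep.indepFun_finset (Finset.range p) {p} hdisj hYmeas
  have hφ : Measurable (fun v : ((k : (Finset.range p : Finset ℕ)) → Fin d × ℝ × ℝ) =>
      bprfVec (x i, 1 - x i) i p (fun k : Fin p =>
        v ⟨(k : ℕ), Finset.mem_range.2 k.isLt⟩)) :=
    (measurable_bprfVec _ i p).comp (measurable_pi_lambda _ fun k => measurable_pi_apply _)
  have hψ : Measurable (fun v : ((k : ({p} : Finset ℕ)) → Fin d × ℝ × ℝ) =>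
      v ⟨p, Finset.mem_singleton_self p⟩) := measurable_pi_apply _
  have h2 := h.comp hφ hψ
  exact h2.congr (Filter.Eventually.of_forall fun ω => (bprfChain_eq_vec J U W x i p ω).symm)
    (Filter.Eventually.of_forall fun ω => rfl)

noncomputable def bprfMeasure (d : ℕ) : Measure (Fin d × ℝ × ℝ) :=
  (((d : ENNReal)⁻¹ • (Measure.count : Measure (Fin d))).prod
    ((((volume : Measure ℝ).restrict (Set.Icc 0 1))).prod
      ((volume : Measure ℝ).restrict (Set.Icc 0 1))))

lemma isProb_nu01 : IsProbabilityMeasure ((volume : Measure ℝ).restrict (Set.Icc 0 1)) :=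
  ⟨by simp [Real.volume_Icc]⟩

lemma isProb_cnt (d : ℕ) (hd : 1 ≤ d) :
    IsProbabilityMeasure ((d : ENNReal)⁻¹ • (Measure.count : Measure (Fin d))) := by
  constructor
  simp only [Measure.smul_apply, Measure.count_univ, ENat.card_eq_coe_fintype_card, ENat.toENNReal_coe, Fintype.card_fin, smul_eq_mul]
  exact ENNReal.inv_mul_cancel (Nat.cast_ne_zero.mpr (by omega)) (ENNReal.natCast_ne_top d)

lemma isProb_bprfMeasure (d : ℕ) (hd : 1 ≤ d) : IsProbabilityMeasure (bprfMeasure d) := by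
  haveI := isProb_cnt d hd
  haveI := isProb_nu01
  unfold bprfMeasure
  infer_instance

lemma bprfMeasure_u_null (d : ℕ) (hd : 1 ≤ d) :
    bprfMeasure d {y : Fin d × ℝ × ℝ | y.2.1 ∉ Set.Icc (0:ℝ) 1} = 0 := by
  haveI := isProb_cnt d hd
  haveI := isProb_nu01
  have hset : {y : Fin d × ℝ × ℝ | y.2.1 ∉ Set.Icc (0:ℝ) 1}
      = Set.univ ×ˢ ((Set.Icc (0:ℝ) 1)ᶜ ×ˢ Set.univ) := by
    ext y; simp
  rw [bprfMeasure, hset, Measure.prod_prod, Measure.prod_prod]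
  rw [Measure.restrict_apply measurableSet_Icc.compl]
  simp

lemma ae_u_mem (d : ℕ) (hd : 1 ≤ d) :
    ∀ᵐ y ∂(bprfMeasure d), y.2.1 ∈ Set.Icc (0:ℝ) 1 := by
  rw [ae_iff]
  exact bprfMeasure_u_null d hd

lemma bprfStep_mem {d : ℕ} (i : Fin d) {s : ℝ × ℝ} {y : Fin d × ℝ × ℝ}
    (h1 : s.1 ∈ Set.Icc (0:ℝ) 1) (h2 : s.2 ∈ Set.Icc (0:ℝ) 1)
    (hu : y.2.1 ∈ Set.Icc (0:ℝ) 1) :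
    (bprfStep i s y).1 ∈ Set.Icc (0:ℝ) 1 ∧ (bprfStep i s y).2 ∈ Set.Icc (0:ℝ) 1 := by
  simp only [Set.mem_Icc] at h1 h2 hu
  obtain ⟨ha0, ha1⟩ := h1; obtain ⟨hb0, hb1⟩ := h2; obtain ⟨hu0, hu1⟩ := hu
  unfold bprfStep
  split_ifs <;> simp only [Set.mem_Icc] <;> refine ⟨⟨?_, ?_⟩, ?_, ?_⟩ <;> nlinarith

section Chain

variable {Ω : Type*} [MeasureSpace Ω] [IsProbabilityMeasure (ℙ : Measure Ω)]
    {d : ℕ} (hd : 1 ≤ d)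
    (x : Fin d → ℝ) (hx : ∀ i, x i ∈ Set.Ico (0 : ℝ) 1)
    (J : ℕ → Ω → Fin d) (U W : ℕ → Ω → ℝ) (i : Fin d)
    (hJ : ∀ p, Measurable (J p)) (hU : ∀ p, Measurable (U p)) (hW : ∀ p, Measurable (W p))
    (h_indep : iIndepFun
        (fun p ω => (J p ω, U p ω, W p ω)) ℙ)
    (h_dist : ∀ p, Measure.map (fun ω => (J p ω, U p ω, W p ω)) ℙ = bprfMeasure d)

include hd hJ hU hW h_dist in
lemma ae_U_mem (p : ℕ) : ∀ᵐ ω ∂(ℙ : Measure Ω), U p ω ∈ Set.Icc (0:ℝ) 1 := by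
  have hY : Measurable (fun ω => (J p ω, U p ω, W p ω)) :=
    (hJ p).prodMk ((hU p).prodMk (hW p))
  rw [ae_iff]
  have hset : {ω | ¬ U p ω ∈ Set.Icc (0:ℝ) 1}
      = (fun ω => (J p ω, U p ω, W p ω)) ⁻¹' {y : Fin d × ℝ × ℝ | y.2.1 ∉ Set.Icc (0:ℝ) 1} := by
    ext ω; simp
  have hms : MeasurableSet {y : Fin d × ℝ × ℝ | y.2.1 ∉ Set.Icc (0:ℝ) 1} :=
    ((measurable_snd.fst) measurableSet_Icc).compl
  rw [hset, ← Measure.map_apply hY hms, h_dist p]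
  exact bprfMeasure_u_null d hd

include hd hx hJ hU hW h_dist in
lemma ae_chain_mem (p : ℕ) :
    ∀ᵐ ω ∂(ℙ : Measure Ω), (bprfChain J U W x i p ω).1 ∈ Set.Icc (0:ℝ) 1
      ∧ (bprfChain J U W x i p ω).2 ∈ Set.Icc (0:ℝ) 1 := by
  induction p with
  | zero =>
      refine Filter.Eventually.of_forall fun ω => ?_
      have := hx i
      simp only [Set.mem_Ico] at this
      constructor <;> simp only [bprfChain, Set.mem_Icc] <;> constructor <;> linarith [this.1, this.2]
  | succ p ih =>
      filter_upwards [ih, ae_U_mem hd J U W hJ hU hW h_dist p] with ω h hu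
      rw [bprfChain_succ]
      exact bprfStep_mem i h.1 h.2 hu

include hd hx hJ hU hW h_dist in
lemma integrable_chain_comp (g : ℝ × ℝ → ℝ) (hg : Continuous g) (p : ℕ) :
    Integrable (fun ω => g (bprfChain J U W x i p ω)) (ℙ : Measure Ω) := by
  obtain ⟨C, hC⟩ :=
    (isCompact_Icc.prod isCompact_Icc : IsCompact (Set.Icc (0:ℝ) 1 ×ˢ Set.Icc (0:ℝ) 1)).exists_bound_of_continuousOn hg.continuousOn
  refine Integrable.mono' (integrable_const C)
    ((hg.measurable.comp (measurable_bprfChain J U W x i hJ hU hW p)).aestronglyMeasurable) ?_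
  filter_upwards [ae_chain_mem hd x hx J U W i hJ hU hW h_dist p] with ω h
  exact hC _ (Set.mem_prod.2 ⟨h.1, h.2⟩)

include hd hx hJ hU hW h_indep h_dist in
lemma bprf_transfer (g : ℝ × ℝ → ℝ) (hg : Continuous g) (p : ℕ) :
    ∫ ω, g (bprfChain J U W x i (p + 1) ω) ∂(ℙ : Measure Ω)
      = ∫ ω, (∫ y, g (bprfStep i (bprfChain J U W x i p ω) y) ∂(bprfMeasure d)) ∂ℙ := by
  haveI hPμ : IsProbabilityMeasure (bprfMeasure d) := isProb_bprfMeasure d hd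
  set μ := bprfMeasure d with hμ
  set st := bprfChain J U W x i p with hst_def
  have hst : Measurable st := measurable_bprfChain J U W x i hJ hU hW p
  have hY : Measurable (fun ω => (J p ω, U p ω, W p ω)) :=
    (hJ p).prodMk ((hU p).prodMk (hW p))
  have hpair : Measurable fun ω => (st ω, (J p ω, U p ω, W p ω)) := hst.prodMk hY
  have hF : Measurable fun z : (ℝ × ℝ) × (Fin d × ℝ × ℝ) => g (bprfStep i z.1 z.2) :=
    hg.measurable.comp (measurable_bprfStep i)
  have hmap : Measure.map (fun ω => (st ω, (J p ω, U p ω, W p ω))) ℙ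
      = (Measure.map st ℙ).prod μ := by
    rw [← h_dist p]
    exact (indepFun_iff_map_prod_eq_prod_map_map hst.aemeasurable hY.aemeasurable).mp
      (indep_bprfChain J U W x i hJ hU hW h_indep p)
  haveI : IsProbabilityMeasure (Measure.map st ℙ) := Measure.isProbabilityMeasure_map hst.aemeasurable
  obtain ⟨C, hC⟩ :=
    (isCompact_Icc.prod isCompact_Icc : IsCompact (Set.Icc (0:ℝ) 1 ×ˢ Set.Icc (0:ℝ) 1)).exists_bound_of_continuousOn hg.continuousOn
  have haeS : (Measure.map st ℙ) {s : ℝ × ℝ | s ∉ Set.Icc (0:ℝ) 1 ×ˢ Set.Icc (0:ℝ) 1} = 0 := by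
    rw [show {s : ℝ × ℝ | s ∉ Set.Icc (0:ℝ) 1 ×ˢ Set.Icc (0:ℝ) 1}
        = (Set.Icc (0:ℝ) 1 ×ˢ Set.Icc (0:ℝ) 1)ᶜ from rfl]
    rw [Measure.map_apply hst ((measurableSet_Icc.prod measurableSet_Icc).compl)]
    refine measure_mono_null ?_ (ae_iff.mp (ae_chain_mem hd x hx J U W i hJ hU hW h_dist p))
    intro ω hω
    simp only [Set.mem_preimage, Set.mem_compl_iff] at hω
    exact fun hcon => hω (Set.mem_prod.2 ⟨hcon.1, hcon.2⟩)
  have haeProd : ∀ᵐ z ∂((Measure.map st ℙ).prod μ),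
      z.1 ∈ Set.Icc (0:ℝ) 1 ×ˢ Set.Icc (0:ℝ) 1 ∧ z.2.2.1 ∈ Set.Icc (0:ℝ) 1 := by
    rw [ae_iff]
    have h1 : ((Measure.map st ℙ).prod μ)
        ({s : ℝ × ℝ | s ∉ Set.Icc (0:ℝ) 1 ×ˢ Set.Icc (0:ℝ) 1} ×ˢ (Set.univ : Set (Fin d × ℝ × ℝ))) = 0 := by
      rw [Measure.prod_prod, haeS, zero_mul]
    have h2 : ((Measure.map st ℙ).prod μ)
        ((Set.univ : Set (ℝ × ℝ)) ×ˢ {y : Fin d × ℝ × ℝ | y.2.1 ∉ Set.Icc (0:ℝ) 1}) = 0 := by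
      rw [Measure.prod_prod, bprfMeasure_u_null d hd, mul_zero]
    refine measure_mono_null ?_ (measure_union_null h1 h2)
    intro z hz
    simp only [Set.mem_setOf_eq, not_and_or] at hz
    rcases hz with hz | hz
    · exact Or.inl ⟨hz, trivial⟩
    · exact Or.inr ⟨trivial, hz⟩
  have hInt : Integrable (fun z : (ℝ × ℝ) × (Fin d × ℝ × ℝ) => g (bprfStep i z.1 z.2))
      ((Measure.map st ℙ).prod μ) := by
    refine Integrable.mono' (integrable_const C) hF.aestronglyMeasurable ?_
    filter_upwards [haeProd] with z hz
    exact hC _ (Set.mem_prod.2 (bprfStep_mem i (Set.mem_prod.1 hz.1).1 (Set.mem_prod.1 hz.1).2 hz.2))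
  calc ∫ ω, g (bprfChain J U W x i (p + 1) ω) ∂ℙ
      = ∫ ω, (fun z : (ℝ × ℝ) × (Fin d × ℝ × ℝ) => g (bprfStep i z.1 z.2))
          (st ω, (J p ω, U p ω, W p ω)) ∂ℙ := rfl
    _ = ∫ z, g (bprfStep i z.1 z.2) ∂(Measure.map (fun ω => (st ω, (J p ω, U p ω, W p ω))) ℙ) := by
        rw [integral_map hpair.aemeasurable]
        rw [hmap]
        exact hF.aestronglyMeasurable
    _ = ∫ z, g (bprfStep i z.1 z.2) ∂((Measure.map st ℙ).prod μ) := by rw [hmap]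
    _ = ∫ s, ∫ y, g (bprfStep i s y) ∂μ ∂(Measure.map st ℙ) := integral_prod _ hInt
    _ = ∫ ω, ∫ y, g (bprfStep i (st ω) y) ∂μ ∂ℙ := by
        rw [integral_map hst.aemeasurable]
        exact (hF.stronglyMeasurable.integral_prod_right').aestronglyMeasurable

end Chain

lemma integral_pow_Icc01 (n : ℕ) : ∫ u in Set.Icc (0:ℝ) 1, u ^ n = 1 / (n + 1) := by
  rw [MeasureTheory.integral_Icc_eq_integral_Ioc,
    ← intervalIntegral.integral_of_le (zero_le_one), integral_pow]
  simp

lemma integral_ite_w (a c A B : ℝ) (ha : 0 ≤ a) (hac : a ≤ c) (hc : 0 < c) :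
    (∫ w in Set.Icc (0:ℝ) 1, (if w * c ≤ a then A else B))
      = (a / c) * A + (1 - a / c) * B := by
  haveI := isProb_nu01
  have hfun : (fun w : ℝ => if w * c ≤ a then A else B)
      = fun w => B + Set.indicator (Set.Iic (a / c)) (fun _ => A - B) w := by
    funext w
    by_cases h : w * c ≤ a
    · rw [if_pos h, Set.indicator_of_mem (Set.mem_Iic.2 ((le_div_iff₀ hc).2 h))]; ring
    · rw [if_neg h, Set.indicator_of_notMem (by simp [Set.mem_Iic, le_div_iff₀ hc, h])]; ring
  rw [hfun]
  rw [integral_add (integrable_const _)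
    ((integrable_const (A - B)).indicator measurableSet_Iic)]
  rw [integral_indicator_const _ measurableSet_Iic, integral_const]
  have h1 : (volume.restrict (Set.Icc (0:ℝ) 1)) Set.univ = 1 := by
    simp [Real.volume_Icc]
  have h2 : (volume.restrict (Set.Icc (0:ℝ) 1)) (Set.Iic (a / c)) = ENNReal.ofReal (a / c) := by
    rw [Measure.restrict_apply measurableSet_Iic]
    have hIic : Set.Iic (a / c) ∩ Set.Icc (0:ℝ) 1 = Set.Icc 0 (a / c) := by
      ext w
      simp only [Set.mem_inter_iff, Set.mem_Iic, Set.mem_Icc]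
      constructor
      · rintro ⟨hw1, hw2, _⟩; exact ⟨hw2, hw1⟩
      · rintro ⟨hw1, hw2⟩; exact ⟨hw2, hw1, hw2.trans ((div_le_one hc).2 hac)⟩
    rw [hIic, Real.volume_Icc]
    norm_num
  rw [measureReal_def, measureReal_def, h1, h2, ENNReal.toReal_ofReal (div_nonneg ha hc.le)]
  simp only [ENNReal.toReal_one, smul_eq_mul]
  ring

lemma integral_uw (a b : ℝ) (ha : 0 ≤ a) (hb : 0 ≤ b) (hc : 0 < a + b) (φ ψ : ℝ → ℝ)
    (hφ : Continuous φ) (hψ : Continuous ψ) :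
    (∫ z : ℝ × ℝ, (if z.2 * (a + b) ≤ a then φ z.1 else ψ z.1)
        ∂((volume.restrict (Set.Icc (0:ℝ) 1)).prod (volume.restrict (Set.Icc (0:ℝ) 1))))
      = (a / (a + b)) * (∫ u in Set.Icc (0:ℝ) 1, φ u)
        + (1 - a / (a + b)) * (∫ u in Set.Icc (0:ℝ) 1, ψ u) := by
  haveI := isProb_nu01
  have hmeas : Measurable fun z : ℝ × ℝ => if z.2 * (a + b) ≤ a then φ z.1 else ψ z.1 :=
    Measurable.ite (measurableSet_le (by fun_prop) (by fun_prop))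
      (hφ.measurable.comp measurable_fst) (hψ.measurable.comp measurable_fst)
  obtain ⟨C1, hC1⟩ := (isCompact_Icc : IsCompact (Set.Icc (0:ℝ) 1)).exists_bound_of_continuousOn
    hφ.continuousOn
  obtain ⟨C2, hC2⟩ := (isCompact_Icc : IsCompact (Set.Icc (0:ℝ) 1)).exists_bound_of_continuousOn
    hψ.continuousOn
  have hInt : Integrable (fun z : ℝ × ℝ => if z.2 * (a + b) ≤ a then φ z.1 else ψ z.1)
      ((volume.restrict (Set.Icc (0:ℝ) 1)).prod (volume.restrict (Set.Icc (0:ℝ) 1))) := by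
    refine Integrable.mono' (integrable_const (max C1 C2)) hmeas.aestronglyMeasurable ?_
    have hae : ∀ᵐ z ∂((volume.restrict (Set.Icc (0:ℝ) 1)).prod
        (volume.restrict (Set.Icc (0:ℝ) 1))), z ∈ Set.Icc (0:ℝ) 1 ×ˢ Set.Icc (0:ℝ) 1 := by
      rw [Measure.prod_restrict]
      exact ae_restrict_mem (measurableSet_Icc.prod measurableSet_Icc)
    filter_upwards [hae] with z hz
    by_cases h : z.2 * (a + b) ≤ a
    · rw [if_pos h]; exact (hC1 _ hz.1).trans (le_max_left _ _)
    · rw [if_neg h]; exact (hC2 _ hz.1).trans (le_max_right _ _)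
  rw [MeasureTheory.integral_prod _ hInt]
  have hinner : ∀ u : ℝ,
      (∫ w in Set.Icc (0:ℝ) 1, (if w * (a + b) ≤ a then φ u else ψ u))
        = (a / (a + b)) * φ u + (1 - a / (a + b)) * ψ u := fun u =>
    integral_ite_w a (a + b) (φ u) (ψ u) ha (le_add_of_nonneg_right hb) hc
  simp only [hinner]
  rw [integral_add ((hφ.integrableOn_Icc).const_mul _) ((hψ.integrableOn_Icc).const_mul _),
    integral_const_mul, integral_const_mul]

lemma bprf_kernel (d : ℕ) (hd : 1 ≤ d) (i : Fin d) (a b : ℝ)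
    (ha : a ∈ Set.Icc (0:ℝ) 1) (hb : b ∈ Set.Icc (0:ℝ) 1)
    (g : ℝ × ℝ → ℝ) (hg : Continuous g) :
    (∫ y, g (bprfStep i (a, b) y) ∂(bprfMeasure d))
      = (1 - 1 / (d:ℝ)) * g (a, b)
        + (1 / (d:ℝ)) * (∫ z : ℝ × ℝ,
            (if z.2 * (a + b) ≤ a then g (z.1 * a, b) else g (a, z.1 * b))
            ∂((volume.restrict (Set.Icc (0:ℝ) 1)).prod (volume.restrict (Set.Icc (0:ℝ) 1)))) := by
  haveI := isProb_cnt d hd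
  haveI := isProb_nu01
  haveI := isProb_bprfMeasure d hd
  have hd0 : (d : ℝ) ≠ 0 := Nat.cast_ne_zero.mpr (by omega)
  have hmeas : Measurable fun y : Fin d × ℝ × ℝ => g (bprfStep i (a, b) y) :=
    hg.measurable.comp ((measurable_bprfStep i).comp measurable_prodMk_left)
  obtain ⟨C, hC⟩ :=
    (isCompact_Icc.prod isCompact_Icc :
      IsCompact (Set.Icc (0:ℝ) 1 ×ˢ Set.Icc (0:ℝ) 1)).exists_bound_of_continuousOn
      hg.continuousOn
  have hInt : Integrable (fun y : Fin d × ℝ × ℝ => g (bprfStep i (a, b) y)) (bprfMeasure d) := by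
    refine Integrable.mono' (integrable_const C) hmeas.aestronglyMeasurable ?_
    filter_upwards [ae_u_mem d hd] with y hy
    exact hC _ (Set.mem_prod.2 (bprfStep_mem i ha hb hy))
  rw [bprfMeasure] at hInt ⊢
  rw [MeasureTheory.integral_prod _ hInt]
  set ν2 := ((volume.restrict (Set.Icc (0:ℝ) 1)).prod (volume.restrict (Set.Icc (0:ℝ) 1)))
  set I := ∫ z : ℝ × ℝ, (if z.2 * (a + b) ≤ a then g (z.1 * a, b) else g (a, z.1 * b)) ∂ν2 with hI
  have hjfun : ∀ j : Fin d,
      (∫ z : ℝ × ℝ, g (bprfStep i (a, b) (j, z)) ∂ν2) = if j = i then I else g (a, b) := by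
    intro j
    by_cases hj : j = i
    · rw [if_pos hj, hI]
      subst hj
      congr 1
      funext z
      simp [bprfStep, apply_ite g]
    · rw [if_neg hj]
      have hstep : ∀ z : ℝ × ℝ, g (bprfStep i (a, b) (j, z)) = g (a, b) := fun z => by
        simp [bprfStep, hj]
      simp only [hstep]
      simp [integral_const]
  simp only [hjfun]
  rw [integral_smul_measure]
  rw [MeasureTheory.integral_fintype (Integrable.of_finite)]
  have hsum : ∀ j : Fin d, (if j = i then I else g (a, b))
      = g (a, b) + (if j = i then I - g (a, b) else 0) := fun j => by split_ifs <;> ring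
  simp only [count_real_singleton, ENNReal.toReal_one, one_smul, hsum]
  rw [Finset.sum_add_distrib, Finset.sum_const, Finset.sum_ite_eq' Finset.univ i]
  simp only [Finset.mem_univ, if_true, Finset.card_univ, Fintype.card_fin, nsmul_eq_mul,
    smul_eq_mul, ENNReal.toReal_inv, ENNReal.toReal_natCast]
  field_simp
  ring

lemma integral_const_Icc01 (c : ℝ) : ∫ _ in Set.Icc (0:ℝ) 1, c = c := by
  haveI := isProb_nu01
  simp

lemma integral_id_Icc01 : ∫ u in Set.Icc (0:ℝ) 1, u = 1 / 2 := by
  have h := integral_pow_Icc01 1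
  simp only [pow_one] at h
  rw [h]
  norm_num

lemma inner_g1 (δ : ℕ) (a b : ℝ) (ha : a ∈ Set.Icc (0:ℝ) 1) (hb : b ∈ Set.Icc (0:ℝ) 1) :
    (∫ z : ℝ × ℝ, (if z.2 * (a + b) ≤ a then (z.1 * a * b) ^ δ else (a * (z.1 * b)) ^ δ)
        ∂((volume.restrict (Set.Icc (0:ℝ) 1)).prod (volume.restrict (Set.Icc (0:ℝ) 1))))
      = (a * b) ^ δ / (δ + 1) := by
  haveI := isProb_nu01
  haveI : IsProbabilityMeasure ((volume.restrict (Set.Icc (0:ℝ) 1)).prod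
      (volume.restrict (Set.Icc (0:ℝ) 1))) := by infer_instance
  have hδ : ((δ:ℝ) + 1) ≠ 0 := by positivity
  rcases eq_or_lt_of_le (by linarith [ha.1, hb.1] : (0:ℝ) ≤ a + b) with hab | hab
  · have ha0 : a = 0 := by linarith [ha.1, hb.1]
    have hb0 : b = 0 := by linarith [ha.1, hb.1]
    subst ha0; subst hb0
    have h1 : ∀ z : ℝ × ℝ,
        (if z.2 * ((0:ℝ) + 0) ≤ 0 then (z.1 * 0 * 0) ^ δ else ((0:ℝ) * (z.1 * 0)) ^ δ)
          = (0:ℝ) ^ δ := fun z => by split_ifs <;> ring_nf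
    simp only [h1]
    rw [integral_const]
    cases δ with
    | zero => simp
    | succ n => simp [zero_pow]
  · have h := integral_uw a b ha.1 hb.1 hab (fun u => (u * a * b) ^ δ)
      (fun u => (a * (u * b)) ^ δ) (by fun_prop) (by fun_prop)
    beta_reduce at h
    rw [h]
    have e1 : (∫ u in Set.Icc (0:ℝ) 1, (u * a * b) ^ δ) = (a * b) ^ δ * (1 / (δ + 1)) := by
      rw [show (fun u : ℝ => (u * a * b) ^ δ) = fun u => (a * b) ^ δ * u ^ δ from
        funext fun u => by ring]
      rw [integral_const_mul, integral_pow_Icc01]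
    have e2 : (∫ u in Set.Icc (0:ℝ) 1, (a * (u * b)) ^ δ) = (a * b) ^ δ * (1 / (δ + 1)) := by
      rw [show (fun u : ℝ => (a * (u * b)) ^ δ) = fun u => (a * b) ^ δ * u ^ δ from
        funext fun u => by ring]
      rw [integral_const_mul, integral_pow_Icc01]
    rw [e1, e2]
    field_simp
    ring

lemma inner_g2 (a b : ℝ) (ha : a ∈ Set.Icc (0:ℝ) 1) (hb : b ∈ Set.Icc (0:ℝ) 1) :
    (∫ z : ℝ × ℝ, (if z.2 * (a + b) ≤ a then z.1 * a - b else a - z.1 * b)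
        ∂((volume.restrict (Set.Icc (0:ℝ) 1)).prod (volume.restrict (Set.Icc (0:ℝ) 1))))
      = (a - b) / 2 := by
  haveI := isProb_nu01
  rcases eq_or_lt_of_le (by linarith [ha.1, hb.1] : (0:ℝ) ≤ a + b) with hab | hab
  · have ha0 : a = 0 := by linarith [ha.1, hb.1]
    have hb0 : b = 0 := by linarith [ha.1, hb.1]
    subst ha0; subst hb0
    have h1 : ∀ z : ℝ × ℝ,
        (if z.2 * ((0:ℝ) + 0) ≤ 0 then z.1 * 0 - 0 else (0:ℝ) - z.1 * 0) = (0:ℝ) := fun z => by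
      split_ifs <;> ring
    simp only [h1]
    simp
  · have h := integral_uw a b ha.1 hb.1 hab (fun u => u * a - b)
      (fun u => a - u * b) (by fun_prop) (by fun_prop)
    beta_reduce at h
    rw [h]
    have e1 : (∫ u in Set.Icc (0:ℝ) 1, (u * a - b)) = a / 2 - b := by
      rw [show (fun u : ℝ => u * a - b) = fun u => a * u - b from funext fun u => by ring]
      rw [integral_sub ((by fun_prop : Continuous fun u : ℝ => a * u).integrableOn_Icc)
        (integrable_const b), integral_const_mul, integral_id_Icc01, integral_const_Icc01]
      ring
    have e2 : (∫ u in Set.Icc (0:ℝ) 1, (a - u * b)) = a - b / 2 := by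
      rw [show (fun u : ℝ => a - u * b) = fun u => a - b * u from funext fun u => by ring]
      rw [integral_sub (integrable_const a)
        ((by fun_prop : Continuous fun u : ℝ => b * u).integrableOn_Icc),
        integral_const_mul, integral_id_Icc01, integral_const_Icc01]
      ring
    rw [e1, e2]
    have hc : a + b ≠ 0 := ne_of_gt hab
    field_simp
    ring

lemma inner_g3 (a b : ℝ) (ha : a ∈ Set.Icc (0:ℝ) 1) (hb : b ∈ Set.Icc (0:ℝ) 1) :
    (∫ z : ℝ × ℝ, (if z.2 * (a + b) ≤ a then (z.1 * a) ^ 2 + b ^ 2 else a ^ 2 + (z.1 * b) ^ 2)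
        ∂((volume.restrict (Set.Icc (0:ℝ) 1)).prod (volume.restrict (Set.Icc (0:ℝ) 1))))
      = (a ^ 2 + b ^ 2) / 3 + 2 / 3 * (a * b) := by
  haveI := isProb_nu01
  rcases eq_or_lt_of_le (by linarith [ha.1, hb.1] : (0:ℝ) ≤ a + b) with hab | hab
  · have ha0 : a = 0 := by linarith [ha.1, hb.1]
    have hb0 : b = 0 := by linarith [ha.1, hb.1]
    subst ha0; subst hb0
    have h1 : ∀ z : ℝ × ℝ,
        (if z.2 * ((0:ℝ) + 0) ≤ 0 then (z.1 * 0) ^ 2 + (0:ℝ) ^ 2 else (0:ℝ) ^ 2 + (z.1 * 0) ^ 2)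
          = (0:ℝ) := fun z => by split_ifs <;> ring
    simp only [h1]
    simp
  · have h := integral_uw a b ha.1 hb.1 hab (fun u => (u * a) ^ 2 + b ^ 2)
      (fun u => a ^ 2 + (u * b) ^ 2) (by fun_prop) (by fun_prop)
    beta_reduce at h
    rw [h]
    have e1 : (∫ u in Set.Icc (0:ℝ) 1, ((u * a) ^ 2 + b ^ 2)) = a ^ 2 / 3 + b ^ 2 := by
      rw [show (fun u : ℝ => (u * a) ^ 2 + b ^ 2) = fun u => a ^ 2 * u ^ 2 + b ^ 2 from
        funext fun u => by ring]
      rw [integral_add ((by fun_prop : Continuous fun u : ℝ => a ^ 2 * u ^ 2).integrableOn_Icc)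
        (integrable_const (b ^ 2)), integral_const_mul, integral_pow_Icc01, integral_const_Icc01]
      ring
    have e2 : (∫ u in Set.Icc (0:ℝ) 1, (a ^ 2 + (u * b) ^ 2)) = a ^ 2 + b ^ 2 / 3 := by
      rw [show (fun u : ℝ => a ^ 2 + (u * b) ^ 2) = fun u => a ^ 2 + b ^ 2 * u ^ 2 from
        funext fun u => by ring]
      rw [integral_add (integrable_const (a ^ 2))
        ((by fun_prop : Continuous fun u : ℝ => b ^ 2 * u ^ 2).integrableOn_Icc),
        integral_const_mul, integral_pow_Icc01, integral_const_Icc01]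
      ring
    rw [e1, e2]
    have hc : a + b ≠ 0 := ne_of_gt hab
    field_simp
    ring

lemma kernel_g1 (d : ℕ) (hd : 1 ≤ d) (i : Fin d) (δ : ℕ) (a b : ℝ)
    (ha : a ∈ Set.Icc (0:ℝ) 1) (hb : b ∈ Set.Icc (0:ℝ) 1) :
    (∫ y, ((bprfStep i (a, b) y).1 * (bprfStep i (a, b) y).2) ^ δ ∂(bprfMeasure d))
      = (1 - (δ : ℝ) / (d * (δ + 1))) * (a * b) ^ δ := by
  have hd0 : (d : ℝ) ≠ 0 := Nat.cast_ne_zero.mpr (by omega)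
  have hδ : ((δ:ℝ) + 1) ≠ 0 := by positivity
  have h := bprf_kernel d hd i a b ha hb (fun s => (s.1 * s.2) ^ δ) (by fun_prop)
  simp only [] at h
  rw [h, inner_g1 δ a b ha hb]
  field_simp
  ring

lemma kernel_g2 (d : ℕ) (hd : 1 ≤ d) (i : Fin d) (a b : ℝ)
    (ha : a ∈ Set.Icc (0:ℝ) 1) (hb : b ∈ Set.Icc (0:ℝ) 1) :
    (∫ y, ((bprfStep i (a, b) y).1 - (bprfStep i (a, b) y).2) ∂(bprfMeasure d))
      = (1 - 1 / (2 * (d : ℝ))) * (a - b) := by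
  have hd0 : (d : ℝ) ≠ 0 := Nat.cast_ne_zero.mpr (by omega)
  have h := bprf_kernel d hd i a b ha hb (fun s => s.1 - s.2) (by fun_prop)
  simp only [] at h
  rw [h, inner_g2 a b ha hb]
  field_simp
  ring

lemma kernel_g3 (d : ℕ) (hd : 1 ≤ d) (i : Fin d) (a b : ℝ)
    (ha : a ∈ Set.Icc (0:ℝ) 1) (hb : b ∈ Set.Icc (0:ℝ) 1) :
    (∫ y, ((bprfStep i (a, b) y).1 ^ 2 + (bprfStep i (a, b) y).2 ^ 2) ∂(bprfMeasure d))
      = (1 - 2 / (3 * (d : ℝ))) * (a ^ 2 + b ^ 2) + 2 / (3 * (d : ℝ)) * (a * b) := by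
  have hd0 : (d : ℝ) ≠ 0 := Nat.cast_ne_zero.mpr (by omega)
  have h := bprf_kernel d hd i a b ha hb (fun s => s.1 ^ 2 + s.2 ^ 2) (by fun_prop)
  simp only [] at h
  rw [h, inner_g3 a b ha hb]
  field_simp
  ring

/-- **One-dimensional moments of the BPRF coordinate chain (Proposition 14 of the paper).**
With `(J_p)`, `(U_p)`, `(W_p)` independent, `J_p` uniform on `{1,…,d}` and `U_p`, `W_p`
uniform on `[0,1]`, for every depth `p` and coordinate `i`:
(i) `E[(α_i^{(p)} β_i^{(p)})^δ] = (1 − δ/(d(δ+1)))^p (x_i(1−x_i))^δ` for every `δ : ℕ`;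
(ii) `E[α_i^{(p)} − β_i^{(p)}] = (1 − 1/(2d))^p (2x_i − 1)`;
(iii) `E[(α_i^{(p)})² + (β_i^{(p)})²] = 4x_i(1−x_i)(1 − 1/(2d))^p
       + (x_i² + (1−x_i)² − 4x_i(1−x_i))(1 − 2/(3d))^p`. -/
theorem bprf_chain_moments
    {Ω : Type*} [MeasureSpace Ω] [IsProbabilityMeasure (ℙ : Measure Ω)]
    (d : ℕ) (hd : 1 ≤ d)
    (x : Fin d → ℝ) (hx : ∀ i, x i ∈ Set.Ico (0 : ℝ) 1)
    (J : ℕ → Ω → Fin d) (U W : ℕ → Ω → ℝ)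
    (hJ : ∀ p, Measurable (J p)) (hU : ∀ p, Measurable (U p)) (hW : ∀ p, Measurable (W p))
    (h_indep : iIndepFun
        (fun p ω => (J p ω, U p ω, W p ω)) ℙ)
    (h_dist : ∀ p, Measure.map (fun ω => (J p ω, U p ω, W p ω)) ℙ
        = (((d : ENNReal)⁻¹ • (Measure.count : Measure (Fin d))).prod
            ((((volume : Measure ℝ).restrict (Set.Icc 0 1))).prod
              ((volume : Measure ℝ).restrict (Set.Icc 0 1))))) :
    ∀ p : ℕ, ∀ i : Fin d,
      (∀ δ : ℕ,
        (∫ ω : Ω, ((bprfChain J U W x i p ω).1 * (bprfChain J U W x i p ω).2) ^ δ)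
          = (1 - (δ : ℝ) / (d * (δ + 1))) ^ p * (x i * (1 - x i)) ^ δ)
      ∧ (∫ ω : Ω, ((bprfChain J U W x i p ω).1 - (bprfChain J U W x i p ω).2))
          = (1 - 1 / (2 * (d : ℝ))) ^ p * (2 * x i - 1)
      ∧ (∫ ω : Ω, ((bprfChain J U W x i p ω).1 ^ 2 + (bprfChain J U W x i p ω).2 ^ 2))
          = 4 * x i * (1 - x i) * (1 - 1 / (2 * (d : ℝ))) ^ p
            + (x i ^ 2 + (1 - x i) ^ 2 - 4 * x i * (1 - x i))
                * (1 - 2 / (3 * (d : ℝ))) ^ p := by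
  have h_dist' : ∀ p, Measure.map (fun ω => (J p ω, U p ω, W p ω)) ℙ = bprfMeasure d := h_dist
  have hd0 : (d : ℝ) ≠ 0 := Nat.cast_ne_zero.mpr (by omega)
  -- moment (i)
  have hmom1 : ∀ (i : Fin d) (δ : ℕ) (p : ℕ),
      (∫ ω : Ω, ((bprfChain J U W x i p ω).1 * (bprfChain J U W x i p ω).2) ^ δ)
        = (1 - (δ : ℝ) / (d * (δ + 1))) ^ p * (x i * (1 - x i)) ^ δ := by
    intro i δ p
    induction p with
    | zero => simp [bprfChain, integral_const]
    | succ p ih =>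
        have ht := bprf_transfer hd x hx J U W i hJ hU hW h_indep h_dist'
          (fun s => (s.1 * s.2) ^ δ) (by fun_prop) p
        rw [ht]
        have hae : ∀ᵐ ω ∂(ℙ : Measure Ω),
            (∫ y, ((bprfStep i (bprfChain J U W x i p ω) y).1
                * (bprfStep i (bprfChain J U W x i p ω) y).2) ^ δ ∂(bprfMeasure d))
              = (1 - (δ : ℝ) / (d * (δ + 1)))
                  * ((bprfChain J U W x i p ω).1 * (bprfChain J U W x i p ω).2) ^ δ := by
          filter_upwards [ae_chain_mem hd x hx J U W i hJ hU hW h_dist' p] with ω hω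
          have hk := kernel_g1 d hd i δ _ _ hω.1 hω.2
          simpa only [Prod.mk.eta] using hk
        rw [integral_congr_ae hae, integral_const_mul, ih]
        ring
  -- moment (ii)
  have hmom2 : ∀ (i : Fin d) (p : ℕ),
      (∫ ω : Ω, ((bprfChain J U W x i p ω).1 - (bprfChain J U W x i p ω).2))
        = (1 - 1 / (2 * (d : ℝ))) ^ p * (2 * x i - 1) := by
    intro i p
    induction p with
    | zero => simp [bprfChain, integral_const]; ring
    | succ p ih =>
        have ht := bprf_transfer hd x hx J U W i hJ hU hW h_indep h_dist'
          (fun s => s.1 - s.2) (by fun_prop) p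
        rw [ht]
        have hae : ∀ᵐ ω ∂(ℙ : Measure Ω),
            (∫ y, ((bprfStep i (bprfChain J U W x i p ω) y).1
                - (bprfStep i (bprfChain J U W x i p ω) y).2) ∂(bprfMeasure d))
              = (1 - 1 / (2 * (d : ℝ)))
                  * ((bprfChain J U W x i p ω).1 - (bprfChain J U W x i p ω).2) := by
          filter_upwards [ae_chain_mem hd x hx J U W i hJ hU hW h_dist' p] with ω hω
          have hk := kernel_g2 d hd i _ _ hω.1 hω.2
          simpa only [Prod.mk.eta] using hk
        rw [integral_congr_ae hae, integral_const_mul, ih]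
        ring
  -- moment (iii)
  have hmom3 : ∀ (i : Fin d) (p : ℕ),
      (∫ ω : Ω, ((bprfChain J U W x i p ω).1 ^ 2 + (bprfChain J U W x i p ω).2 ^ 2))
        = 4 * x i * (1 - x i) * (1 - 1 / (2 * (d : ℝ))) ^ p
          + (x i ^ 2 + (1 - x i) ^ 2 - 4 * x i * (1 - x i)) * (1 - 2 / (3 * (d : ℝ))) ^ p := by
    intro i p
    induction p with
    | zero => simp [bprfChain, integral_const]
    | succ p ih =>
        have ht := bprf_transfer hd x hx J U W i hJ hU hW h_indep h_dist'
          (fun s => s.1 ^ 2 + s.2 ^ 2) (by fun_prop) p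
        rw [ht]
        have hae : ∀ᵐ ω ∂(ℙ : Measure Ω),
            (∫ y, ((bprfStep i (bprfChain J U W x i p ω) y).1 ^ 2
                + (bprfStep i (bprfChain J U W x i p ω) y).2 ^ 2) ∂(bprfMeasure d))
              = (1 - 2 / (3 * (d : ℝ)))
                  * ((bprfChain J U W x i p ω).1 ^ 2 + (bprfChain J U W x i p ω).2 ^ 2)
                + 2 / (3 * (d : ℝ))
                  * ((bprfChain J U W x i p ω).1 * (bprfChain J U W x i p ω).2) := by
          filter_upwards [ae_chain_mem hd x hx J U W i hJ hU hW h_dist' p] with ω hω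
          have hk := kernel_g3 d hd i _ _ hω.1 hω.2
          simpa only [Prod.mk.eta] using hk
        rw [integral_congr_ae hae]
        have h1 : Integrable (fun ω => (1 - 2 / (3 * (d : ℝ)))
            * ((bprfChain J U W x i p ω).1 ^ 2 + (bprfChain J U W x i p ω).2 ^ 2)) ℙ :=
          (integrable_chain_comp hd x hx J U W i hJ hU hW h_dist'
            (fun s => s.1 ^ 2 + s.2 ^ 2) (by fun_prop) p).const_mul _
        have h2 : Integrable (fun ω => 2 / (3 * (d : ℝ))
            * ((bprfChain J U W x i p ω).1 * (bprfChain J U W x i p ω).2)) ℙ :=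
          (integrable_chain_comp hd x hx J U W i hJ hU hW h_dist'
            (fun s => s.1 * s.2) (by fun_prop) p).const_mul _
        have hadd := integral_add h1 h2
        rw [hadd, integral_const_mul, integral_const_mul, ih]
        have m1 : (∫ ω : Ω, ((bprfChain J U W x i p ω).1 * (bprfChain J U W x i p ω).2))
            = (1 - 1 / (2 * (d : ℝ))) ^ p * (x i * (1 - x i)) := by
          have h := hmom1 i 1 p
          simp only [pow_one, Nat.cast_one] at h
          rw [show (1:ℝ) - 1 / (↑d * (1 + 1)) = 1 - 1 / (2 * ↑d) by ring] at h
          exact h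
        rw [m1]
        have hco : (1 - 2 / (3 * (d:ℝ))) * (4 * x i * (1 - x i))
            + 2 / (3 * (d:ℝ)) * (x i * (1 - x i))
            = 4 * x i * (1 - x i) * (1 - 1 / (2 * (d:ℝ))) := by
          field_simp
          ring
        linear_combination ((1 - 1 / (2 * (d:ℝ))) ^ p) * hco
  exact fun p i => ⟨fun δ => hmom1 i δ p, hmom2 i p, hmom3 i p⟩
end
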